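/- arXiv:1701.05729 — 5 statements merged into one kernel-verified Lean document; each statement's English description precedes it below -/
import Mathlib

section
/- Let n₀ ∈ ℕ and let f : {n ∈ ℕ : n ≥ n₀} → K be an M-power series function. Then the function F : {n ∈ ℕ : n ≥ n₀} → K defined by F(n) = Σ_{n₀ ≤ k ≤ n} f(k) is also an M-power series function. -/
open Filter Finset

noncomputable section

variable {K : Type*}

/-- Evaluation of the power series with coefficients `c` at the point `x`, as a `tsum`. -/
def evalPS [NormedField K] (c : ℕ → K) (x : K) : K := ∑' m, c m * x ^ m

/-- The power series with coefficients `c` converges on the closed disc of radius `r`,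
i.e. `‖c m‖ * r ^ m → 0`. -/
def PSConvOn [NormedField K] (c : ℕ → K) (r : ℝ) : Prop :=
  Filter.Tendsto (fun m => ‖c m‖ * r ^ m) Filter.atTop (nhds 0)

/-- `f`, regarded as a function on `{n : ℕ // n₀ ≤ n}`, is an `M`-power series function:
for every `i` with `0 < i ≤ pM` there is a power series `cᵢ` converging on a closed disc of
radius `rᵢ > |p| = 1/p` such that `f a = cᵢ (a - i)` for all `a ≥ n₀` with `pM ∣ a - i`. -/
def IsMPSF (p M n₀ : ℕ) [NormedField K] (f : ℕ → K) : Prop :=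
  ∀ i : ℕ, 0 < i → i ≤ p * M →
    ∃ (r : ℝ) (c : ℕ → K), (p : ℝ)⁻¹ < r ∧ PSConvOn c r ∧
      ∀ a : ℕ, n₀ ≤ a → ((p : ℤ) * M) ∣ ((a : ℤ) - (i : ℤ)) →
        f a = evalPS c ((a : K) - (i : K))

section Combinatorics

/-- `Tst m j = j! * S(m,j)`: number of surjections from an `m`-set onto a `j`-set. -/
def Tst : ℕ → ℕ → ℕ
  | 0, 0 => 1
  | 0, _+1 => 0
  | m+1, j => j * (Tst m j + Tst m (j-1))

lemma Tst_zero_succ (j : ℕ) : Tst 0 (j+1) = 0 := rfl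
lemma Tst_succ (m j : ℕ) : Tst (m+1) j = j * (Tst m j + Tst m (j-1)) := rfl

lemma Tst_eq_zero : ∀ m j, m < j → Tst m j = 0 := by
  intro m
  induction m with
  | zero => intro j hj; match j, hj with
            | j+1, _ => rfl
  | succ m ih =>
    intro j hj
    rw [Tst_succ, ih j (by omega), ih (j-1) (by omega)]; ring

lemma factorial_dvd_Tst : ∀ m j, j.factorial ∣ Tst m j := by
  intro m
  induction m with
  | zero => intro j; cases j with
    | zero => simp [Tst]
    | succ j => rw [Tst_zero_succ]; exact dvd_zero _
  | succ m ih =>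
    intro j
    cases j with
    | zero => simp [Tst_succ]
    | succ j =>
      rw [Tst_succ, Nat.factorial_succ, Nat.succ_sub_one]
      exact Nat.mul_dvd_mul dvd_rfl
        (Nat.dvd_add ((Nat.factorial_dvd_factorial (Nat.le_succ j)).trans (ih (j+1))) (ih j))

lemma mul_choose_aux (s j : ℕ) : s * s.choose j = (j+1) * s.choose (j+1) + j * s.choose j := by
  rcases le_or_gt j s with h | h
  · have h1 : s.choose (j+1) * (j+1) = s.choose j * (s - j) := Nat.choose_succ_right_eq s j
    have h2 : s - j + j = s := Nat.sub_add_cancel h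
    nlinarith [h1, h2]
  · rw [Nat.choose_eq_zero_of_lt h, Nat.choose_eq_zero_of_lt (by omega)]
    simp

/-- Worpitzky-type expansion of powers in binomial coefficients. -/
lemma pow_eq_sum_Tst (m s : ℕ) : s ^ m = ∑ j ∈ range (m+1), Tst m j * s.choose j := by
  induction m with
  | zero => simp [Tst]
  | succ m ih =>
    have step : s ^ (m+1)
        = ∑ j ∈ range (m+1), Tst m j * ((j+1) * s.choose (j+1)) +
          ∑ j ∈ range (m+1), Tst m j * (j * s.choose j) := by
      rw [pow_succ, ih, ← sum_add_distrib, sum_mul]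
      refine sum_congr rfl fun j _ => ?_
      rw [← Nat.mul_add, ← mul_choose_aux]; ring
    rw [step]
    have h1 : ∑ j ∈ range (m+1), Tst m j * ((j+1) * s.choose (j+1))
        = ∑ j ∈ range (m+2), (j * Tst m (j-1)) * s.choose j := by
      rw [Finset.sum_range_succ' (fun j => (j * Tst m (j-1)) * s.choose j) (m+1)]
      simp only [Nat.zero_mul, Nat.mul_zero, Nat.add_sub_cancel, Nat.zero_mul, add_zero]
      refine sum_congr rfl fun j _ => ?_
      ring
    have h2 : ∑ j ∈ range (m+1), Tst m j * (j * s.choose j)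
        = ∑ j ∈ range (m+2), (j * Tst m j) * s.choose j := by
      rw [Finset.sum_range_succ (fun j => (j * Tst m j) * s.choose j) (m+1),
        Tst_eq_zero m (m+1) (by omega)]
      simp only [Nat.mul_zero, Nat.zero_mul, add_zero, Nat.mul_zero, Nat.zero_mul]
      refine sum_congr rfl fun j _ => ?_
      ring
    rw [h1, h2, ← sum_add_distrib]
    refine sum_congr rfl fun j _ => ?_
    rw [Tst_succ]
    ring

/-- Summed version via the hockey-stick identity. -/
lemma sum_choose_range (t j : ℕ) : ∑ s ∈ range (t+1), s.choose j = (t+1).choose (j+1) := by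
  rcases le_or_gt j t with h | h
  · rw [← Nat.sum_Icc_choose t j]
    refine (Finset.sum_subset ?_ ?_).symm
    · intro s hs; simp only [mem_Icc] at hs; simp only [mem_range]; omega
    · intro s hs hns
      simp only [mem_range] at hs
      simp only [mem_Icc] at hns
      exact Nat.choose_eq_zero_of_lt (by omega)
  · rw [Nat.choose_eq_zero_of_lt (by omega)]
    refine Finset.sum_eq_zero fun s hs => ?_
    exact Nat.choose_eq_zero_of_lt (by simp at hs; omega)

lemma sum_pow_eq (m t : ℕ) :
    ∑ s ∈ range (t+1), s ^ m = ∑ j ∈ range (m+1), Tst m j * (t+1).choose (j+1) := by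
  have : ∀ s ∈ range (t+1), s ^ m = ∑ j ∈ range (m+1), Tst m j * s.choose j :=
    fun s _ => pow_eq_sum_Tst m s
  rw [Finset.sum_congr rfl this, Finset.sum_comm]
  refine sum_congr rfl fun j _ => ?_
  rw [← Finset.mul_sum, sum_choose_range]

end Combinatorics

section Analytic
variable [NormedField K]





/-- Workhorse: convergence on radius `r` gives summability of `(m+1)^s ‖c m‖ ρ^m` for `ρ < r`. -/
lemma PSConvOn.summable_aux {c : ℕ → K} {r : ℝ} (hc : PSConvOn c r) {ρ : ℝ}
    (hρ0 : 0 < ρ) (hρr : ρ < r) (s : ℕ) :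
    Summable (fun m : ℕ => ((m:ℝ)+1)^s * (‖c m‖ * ρ^m)) := by
  have hr0 : 0 < r := lt_trans hρ0 hρr
  obtain ⟨C, hC⟩ := hc.bddAbove_range
  have hCb : ∀ m : ℕ, ‖c m‖ * r ^ m ≤ C := fun m => hC (Set.mem_range_self m)
  set q : ℝ := ρ / r with hq
  have hq0 : 0 < q := div_pos hρ0 hr0
  have hq1 : q < 1 := (div_lt_one hr0).2 hρr
  have hgeom : Summable (fun n : ℕ => (n:ℝ)^s * q^n) := by
    have := summable_pow_mul_geometric_of_norm_lt_one (R := ℝ) s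
      (r := q) (by rw [Real.norm_eq_abs, abs_of_pos hq0]; exact hq1)
    exact this
  have hgeom' : Summable (fun n : ℕ => ((n:ℝ)+1)^s * q^n) := by
    have h1 : Summable (fun n : ℕ => ((n:ℝ)+1)^s * q^(n+1)) := by
      have := (summable_nat_add_iff 1).2 hgeom
      refine this.congr fun n => ?_
      push_cast; ring
    have := h1.mul_left q⁻¹
    refine this.congr fun n => ?_
    field_simp; ring
  refine Summable.of_nonneg_of_le (fun m => ?_) (fun m => ?_) (hgeom'.mul_left C)
  · positivity
  · have h1 : ‖c m‖ * ρ^m = (‖c m‖ * r^m) * q^m := by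
      rw [hq, div_pow]; field_simp
    rw [h1]
    calc ((m:ℝ)+1)^s * ((‖c m‖ * r^m) * q^m) ≤ ((m:ℝ)+1)^s * (C * q^m) := by
          refine mul_le_mul_of_nonneg_left (mul_le_mul_of_nonneg_right (hCb m) (by positivity))
            (by positivity)
      _ = C * (((m:ℝ)+1)^s * q^m) := by ring

lemma PSConvOn.summable_norm {c : ℕ → K} {r : ℝ} (hc : PSConvOn c r) {ρ : ℝ}
    (hρ0 : 0 < ρ) (hρr : ρ < r) : Summable (fun m : ℕ => ‖c m‖ * ρ^m) := by
  have := hc.summable_aux hρ0 hρr 0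
  simpa using this

lemma PSConvOn.summable_eval [CompleteSpace K] {c : ℕ → K} {r : ℝ} (hc : PSConvOn c r) {ρ : ℝ}
    (hρ0 : 0 < ρ) (hρr : ρ < r) {x : K} (hx : ‖x‖ ≤ ρ) :
    Summable (fun m : ℕ => c m * x ^ m) := by
  refine Summable.of_norm_bounded (hc.summable_norm hρ0 hρr) (fun m => ?_)
  rw [norm_mul, norm_pow]
  exact mul_le_mul_of_nonneg_left (pow_le_pow_left₀ (norm_nonneg x) hx m) (norm_nonneg _)

/-- Sum of finitely many power series coefficientwise. -/
lemma PSConvOn.finsetSum {ι : Type*} (s : Finset ι) (c : ι → ℕ → K) {r : ℝ} (hr : 0 ≤ r)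
    (hc : ∀ i ∈ s, PSConvOn (c i) r) : PSConvOn (fun m => ∑ i ∈ s, c i m) r := by
  have h0 : Tendsto (fun m : ℕ => ∑ i ∈ s, ‖c i m‖ * r^m) atTop (nhds 0) := by
    have := tendsto_finset_sum s (fun i hi => hc i hi)
    simpa using this
  refine squeeze_zero (fun m => mul_nonneg (norm_nonneg _) (pow_nonneg hr m))
    (fun m => ?_) h0
  calc ‖∑ i ∈ s, c i m‖ * r^m ≤ (∑ i ∈ s, ‖c i m‖) * r^m :=
        mul_le_mul_of_nonneg_right (norm_sum_le s _) (pow_nonneg hr m)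
    _ = ∑ i ∈ s, ‖c i m‖ * r^m := by rw [Finset.sum_mul]

lemma evalPS_finsetSum [CompleteSpace K] {ι : Type*} (s : Finset ι) (c : ι → ℕ → K) (x : K)
    (hc : ∀ i ∈ s, Summable (fun m => c i m * x ^ m)) :
    evalPS (fun m => ∑ i ∈ s, c i m) x = ∑ i ∈ s, evalPS (c i) x := by
  unfold evalPS
  rw [← Summable.tsum_finsetSum hc]
  congr 1; ext m; rw [Finset.sum_mul]

lemma PSConvOn.mono {c : ℕ → K} {r r' : ℝ} (hc : PSConvOn c r) (h0 : 0 ≤ r') (h : r' ≤ r) :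
    PSConvOn c r' := by
  have hr0 : 0 ≤ r := le_trans h0 h
  refine squeeze_zero (fun m => by positivity) (fun m => ?_) hc
  exact mul_le_mul_of_nonneg_left (pow_le_pow_left₀ h0 h m) (norm_nonneg _)

/-- Adding a constant to a power series (in coefficient 0). -/
lemma evalPS_addConst [CompleteSpace K] (κ : K) (c : ℕ → K) (x : K)
    (hc : Summable (fun m => c m * x ^ m)) :
    evalPS (fun m => (if m = 0 then κ else 0) + c m) x = κ + evalPS c x := by
  unfold evalPS
  have h1 : Summable (fun m : ℕ => (if m = 0 then κ else 0) * x ^ m) := by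
    apply summable_of_ne_finset_zero (s := {0})
    intro m hm; simp at hm; simp [hm]
  rw [show (fun m : ℕ => ((if m = 0 then κ else 0) + c m) * x ^ m)
      = (fun m : ℕ => (if m = 0 then κ else 0) * x ^ m + c m * x ^ m) by ext m; ring,
    Summable.tsum_add h1 hc]
  congr 1
  rw [tsum_eq_sum (s := {0}) (by intro m hm; simp at hm; simp [hm])]
  simp

lemma PSConvOn.addConst {c : ℕ → K} {r : ℝ} (hc : PSConvOn c r) (κ : K) :
    PSConvOn (fun m => (if m = 0 then κ else 0) + c m) r := by
  unfold PSConvOn at *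
  have h : (fun m : ℕ => ‖c m‖ * r ^ m)
      =ᶠ[atTop] (fun m => ‖(if m = 0 then κ else 0) + c m‖ * r ^ m) := by
    filter_upwards [eventually_ne_atTop 0] with m hm
    simp [hm]
  exact hc.congr' h


section Complete
variable [CompleteSpace K]


/-- Fubini-type helper for swapping a `tsum` over `m` of row-finite sums. -/
lemma tsum_swap_helper (F : ℕ → ℕ → K) (b : ℕ → ℝ) (N : ℕ)
    (hbnn : ∀ m, 0 ≤ b m)
    (hb : Summable fun m : ℕ => ((m:ℝ) + (N+1)) * b m)
    (hFb : ∀ m k, ‖F m k‖ ≤ b m)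
    (hFz : ∀ m k, m + N < k → F m k = 0) :
    (∀ k, Summable fun m => F m k) ∧
    ∑' m, ∑ k ∈ Finset.range (m+N+1), F m k = ∑' k, ∑' m, F m k := by
  have hg : Summable (fun mk : ℕ × ℕ => if mk.2 ≤ mk.1 + N then b mk.1 else 0) := by
    rw [summable_prod_of_nonneg (by intro mk; dsimp; split <;> simp [hbnn])]
    constructor
    · intro m
      apply summable_of_ne_finset_zero (s := Finset.range (m+N+1))
      intro k hk
      simp only [Finset.mem_range] at hk
      have : ¬ (k ≤ m + N) := by omega
      simp [this]
    · apply Summable.of_nonneg_of_le (fun m => ?_) (fun m => ?_) hb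
      · apply tsum_nonneg; intro k; dsimp; split <;> simp [hbnn]
      · rw [tsum_eq_sum (s := Finset.range (m+N+1))
          (by intro k hk; simp only [Finset.mem_range] at hk
              have : ¬ (k ≤ m + N) := by omega
              simp [this])]
        have h1 : ∀ k ∈ Finset.range (m+N+1), (if k ≤ m + N then b m else 0) = b m := by
          intro k hk; simp only [Finset.mem_range] at hk
          have : k ≤ m + N := by omega
          simp [this]
        rw [Finset.sum_congr rfl h1, Finset.sum_const, Finset.card_range, nsmul_eq_mul]
        have : ((m+N+1 : ℕ) : ℝ) = (m:ℝ) + (N+1) := by push_cast; ring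
        rw [this]
  have hFsum : Summable (Function.uncurry F) := by
    refine Summable.of_norm_bounded hg (fun mk => ?_)
    rcases le_or_gt mk.2 (mk.1 + N) with h | h
    · simp only [Function.uncurry, h, if_true]; exact hFb mk.1 mk.2
    · have : F mk.1 mk.2 = 0 := hFz mk.1 mk.2 h
      simp only [Function.uncurry, this]
      have : ¬ (mk.2 ≤ mk.1 + N) := by omega
      simp [this]
  have hcol : ∀ k, Summable fun m => F m k := by
    intro k
    have := (hFsum.prod_symm).prod_factor k
    exact this.congr fun m => rfl
  refine ⟨hcol, ?_⟩
  have hswap : ∑' (k : ℕ) (m : ℕ), F m k = ∑' (m : ℕ) (k : ℕ), F m k := Summable.tsum_comm hFsum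
  rw [hswap]
  refine tsum_congr fun m => ?_
  have hz : ∀ k ∉ Finset.range (m+N+1), F m k = 0 := by
    intro k hk
    simp only [Finset.mem_range] at hk
    exact hFz m k (by omega)
  exact (tsum_eq_sum hz).symm

/-- Recentering a convergent power series at a nearby point. -/
lemma recenter_exists (hnat : ∀ n : ℕ, ‖(n:K)‖ ≤ 1) {c : ℕ → K} {r ρ : ℝ} (hc : PSConvOn c r)
    (hρ0 : 0 < ρ) (hρr : ρ < r) (δ : K) (hδ : ‖δ‖ ≤ ρ) :
    ∃ c' : ℕ → K, PSConvOn c' ρ ∧ ∀ x : K, ‖x‖ ≤ ρ → evalPS c (x + δ) = evalPS c' x := by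
  classical
  set ψ : ℕ → ℝ := fun m => ‖c m‖ * ρ^m with hψdef
  have hψs : Summable ψ := hc.summable_norm hρ0 hρr
  have hψnn : ∀ m, 0 ≤ ψ m := fun m => by positivity
  set g : ℕ → ℕ → K := fun m k => if k ≤ m then c m * ((m.choose k : K) * δ^(m-k)) else 0
    with hgdef
  have hgnorm : ∀ m k, ‖g m k‖ * ρ^k ≤ (if k ≤ m then ψ m else 0) := by
    intro m k
    by_cases h : k ≤ m
    · simp only [hgdef, h, if_true]
      have h1 : ‖c m * ((m.choose k : K) * δ^(m-k))‖ ≤ ‖c m‖ * ‖δ‖^(m-k) := by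
        rw [norm_mul, norm_mul, norm_pow]
        have := hnat (m.choose k)
        calc ‖c m‖ * (‖(m.choose k : K)‖ * ‖δ‖^(m-k)) ≤ ‖c m‖ * (1 * ‖δ‖^(m-k)) := by
              refine mul_le_mul_of_nonneg_left (mul_le_mul_of_nonneg_right this (by positivity))
                (norm_nonneg _)
          _ = ‖c m‖ * ‖δ‖^(m-k) := by ring
      calc ‖c m * ((m.choose k : K) * δ^(m-k))‖ * ρ^k ≤ (‖c m‖ * ‖δ‖^(m-k)) * ρ^k := by
            refine mul_le_mul_of_nonneg_right h1 (by positivity)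
        _ ≤ (‖c m‖ * ρ^(m-k)) * ρ^k := by
            refine mul_le_mul_of_nonneg_right (mul_le_mul_of_nonneg_left
              (pow_le_pow_left₀ (norm_nonneg _) hδ _) (norm_nonneg _)) (by positivity)
        _ = ψ m := by rw [hψdef]; rw [mul_assoc, ← pow_add, Nat.sub_add_cancel h]
    · simp [hgdef, h]
  have hgnorm' : ∀ m k, ‖g m k‖ ≤ ρ^(0:ℕ) * (ρ⁻¹)^k * ψ m := by
    intro m k
    have h := hgnorm m k
    have h2 : (if k ≤ m then ψ m else 0) ≤ ψ m := by split <;> simp [hψnn m, le_refl]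
    have h3 : ‖g m k‖ * ρ^k ≤ ψ m := le_trans h h2
    have h4 : (0:ℝ) < ρ^k := by positivity
    calc ‖g m k‖ = (‖g m k‖ * ρ^k) * (ρ⁻¹)^k := by
          rw [mul_assoc, ← mul_pow]
          rw [mul_inv_cancel₀ hρ0.ne', one_pow, mul_one]
      _ ≤ ψ m * (ρ⁻¹)^k := by
          refine mul_le_mul_of_nonneg_right h3 (by positivity)
      _ = ρ^(0:ℕ) * (ρ⁻¹)^k * ψ m := by ring
  have hgsum : ∀ k, Summable fun m => ‖g m k‖ := by
    intro k
    refine Summable.of_nonneg_of_le (fun m => norm_nonneg _) (fun m => ?_)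
      (hψs.mul_left (ρ^(0:ℕ) * (ρ⁻¹)^k))
    exact hgnorm' m k
  set c' : ℕ → K := fun k => ∑' m, g m k with hc'def
  have hgzero : ∀ m k, m < k → g m k = 0 := by
    intro m k h
    have hn : ¬ k ≤ m := by omega
    simp [hgdef, hn]
  refine ⟨c', ?_, ?_⟩
  · -- PSConvOn c' ρ
    have hbound : ∀ k, ‖c' k‖ * ρ^k ≤ ∑' j, ψ (j + k) := by
      intro k
      have h1 : ‖c' k‖ ≤ ∑' m, ‖g m k‖ := norm_tsum_le_tsum_norm (hgsum k)
      have h2 : ∑' m, ‖g m k‖ = ∑' j, ‖g (j + k) k‖ := by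
        rw [← Summable.sum_add_tsum_nat_add (f := fun m => ‖g m k‖) k (hgsum k)]
        have : ∀ i ∈ Finset.range k, ‖g i k‖ = 0 := by
          intro i hi
          simp only [Finset.mem_range] at hi
          rw [hgzero i k hi, norm_zero]
        rw [Finset.sum_congr rfl this]
        simp
      have h3 : (∑' j, ‖g (j + k) k‖) * ρ^k ≤ ∑' j, ψ (j + k) := by
        rw [← tsum_mul_right]
        refine Summable.tsum_le_tsum (fun j => ?_) (((summable_nat_add_iff k).2 (hgsum k)).mul_right _)
          ((summable_nat_add_iff k).2 hψs)
        calc ‖g (j+k) k‖ * ρ^k ≤ (if k ≤ j + k then ψ (j+k) else 0) := hgnorm (j+k) k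
          _ = ψ (j+k) := by simp
      calc ‖c' k‖ * ρ^k ≤ (∑' m, ‖g m k‖) * ρ^k :=
            mul_le_mul_of_nonneg_right h1 (by positivity)
        _ = (∑' j, ‖g (j + k) k‖) * ρ^k := by rw [h2]
        _ ≤ ∑' j, ψ (j + k) := h3
    refine squeeze_zero (fun k => by positivity) hbound (tendsto_sum_nat_add ψ)
  · -- evaluation
    intro x hx
    set F : ℕ → ℕ → K := fun m k => g m k * x^k with hFdef
    have hswap := tsum_swap_helper F ψ 0 hψnn
      (by
        have := hc.summable_aux hρ0 hρr 1
        refine this.congr fun m => ?_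
        push_cast; ring)
      (by
        intro m k
        have h1 := hgnorm m k
        have h2 : ‖F m k‖ ≤ ‖g m k‖ * ρ^k := by
          rw [hFdef]; simp only []
          rw [norm_mul, norm_pow]
          refine mul_le_mul_of_nonneg_left (pow_le_pow_left₀ (norm_nonneg _) hx _)
            (norm_nonneg _)
        refine le_trans h2 (le_trans h1 ?_)
        split <;> simp [hψnn m, le_refl])
      (by
        intro m k h
        rw [hFdef]; simp only []
        rw [hgzero m k (by omega), zero_mul])
    obtain ⟨hcolsum, heq⟩ := hswap
    have hLHS : ∀ m, ∑ k ∈ Finset.range (m + 0 + 1), F m k = c m * (x + δ)^m := by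
      intro m
      rw [add_pow]
      rw [Finset.mul_sum]
      refine Finset.sum_congr rfl fun k hk => ?_
      simp only [Finset.mem_range] at hk
      have hkm : k ≤ m + 0 := by omega
      rw [hFdef]; simp only []
      rw [hgdef]; simp only [Nat.add_zero] at hkm; simp only [hkm, if_true]
      ring
    have hRHS : ∀ k, ∑' m, F m k = c' k * x^k := by
      intro k
      rw [hc'def]; simp only []
      rw [← tsum_mul_right]
    unfold evalPS
    calc ∑' m, c m * (x + δ)^m = ∑' m, ∑ k ∈ Finset.range (m + 0 + 1), F m k := by
          refine tsum_congr fun m => (hLHS m).symm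
      _ = ∑' k, ∑' m, F m k := heq
      _ = ∑' k, c' k * x^k := tsum_congr hRHS

end Complete
end Analytic

section MainLemma
open Polynomial

/-- `Vp n = ∏_{i<n} (X + (1 - i))` over `ℤ`. -/
def Vp (n : ℕ) : Polynomial ℤ := ∏ i ∈ Finset.range n, (X + C (1 - (i:ℤ)))

lemma Vp_natDegree_le (n : ℕ) : (Vp n).natDegree ≤ n := by
  refine le_trans (Polynomial.natDegree_prod_le _ _) ?_
  have : ∀ i ∈ Finset.range n, (X + C (1 - (i:ℤ))).natDegree = 1 := fun i _ =>
    Polynomial.natDegree_X_add_C _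
  rw [Finset.sum_congr rfl this]
  simp

lemma Vp_coeff_eq_zero {n k : ℕ} (h : n < k) : (Vp n).coeff k = 0 :=
  Polynomial.coeff_eq_zero_of_natDegree_lt (lt_of_le_of_lt (Vp_natDegree_le n) h)

/-- Evaluation of `Vp (j+1)` at a natural number. -/
lemma Vp_eval_nat (t j : ℕ) :
    Polynomial.eval ((t:ℤ)) (Vp (j+1)) = ((t+1).choose (j+1) * (j+1).factorial : ℕ) := by
  rw [Vp, Polynomial.eval_prod]
  have heval : ∀ i ∈ Finset.range (j+1), Polynomial.eval ((t:ℤ)) (X + C (1 - (i:ℤ)))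
      = (t:ℤ) + 1 - i := by
    intro i _
    simp [Polynomial.eval_add, Polynomial.eval_X, Polynomial.eval_C]
    ring
  rw [Finset.prod_congr rfl heval]
  rcases le_or_gt (j+1) (t+1) with h | h
  · -- all factors nonneg: product is descFactorial (t+1) (j+1)
    have : ∀ i ∈ Finset.range (j+1), (t:ℤ) + 1 - i = (((t+1) - i : ℕ) : ℤ) := by
      intro i hi
      simp only [Finset.mem_range] at hi
      have : i ≤ t + 1 := by omega
      push_cast [Nat.cast_sub this]
      ring
    rw [Finset.prod_congr rfl this, ← Nat.cast_prod,
      ← Nat.descFactorial_eq_prod_range (t+1) (j+1),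
      Nat.descFactorial_eq_factorial_mul_choose]
    push_cast
    ring
  · -- product contains the factor 0 (at i = t+1), and choose = 0
    have hmem : (t+1) ∈ Finset.range (j+1) := by simp; omega
    rw [Finset.prod_eq_zero hmem (by push_cast; ring)]
    rw [Nat.choose_eq_zero_of_lt h]
    simp


variable {K : Type*} [NormedField K] [CompleteSpace K]

lemma choose_expand (hne : ∀ n : ℕ, n ≠ 0 → (n:K) ≠ 0) (t j : ℕ) :
    ((t+1).choose (j+1) : K) = (((j:K)+1))⁻¹ * ((j.factorial : K))⁻¹ *
      ∑ k ∈ Finset.range (j+2), (((Vp (j+1)).coeff k : ℤ) : K) * (t:K)^k := by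
  have hdeg : ((Vp (j+1)).map (Int.castRingHom K)).natDegree < j + 2 :=
    lt_of_le_of_lt (le_trans Polynomial.natDegree_map_le (Vp_natDegree_le (j+1))) (by omega)
  have h1 : Polynomial.eval ((t:ℤ) : K) ((Vp (j+1)).map (Int.castRingHom K))
      = (((t+1).choose (j+1) * (j+1).factorial : ℕ) : K) := by
    rw [Polynomial.eval_intCast_map]
    simp only [Int.cast_id]
    rw [Vp_eval_nat]
    simp [Int.coe_castRingHom]
  have h2 : Polynomial.eval ((t:ℤ) : K) ((Vp (j+1)).map (Int.castRingHom K))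
      = ∑ k ∈ Finset.range (j+2), (((Vp (j+1)).coeff k : ℤ) : K) * (t:K)^k := by
    rw [Polynomial.eval_eq_sum_range' hdeg]
    refine Finset.sum_congr rfl fun k _ => ?_
    rw [Polynomial.coeff_map]
    simp [Int.coe_castRingHom]
  have h3 : (((t+1).choose (j+1) * (j+1).factorial : ℕ) : K)
      = ∑ k ∈ Finset.range (j+2), (((Vp (j+1)).coeff k : ℤ) : K) * (t:K)^k := by
    rw [← h1, h2]
  have hj1 : ((j:K)+1) ≠ 0 := by
    have := hne (j+1) (by omega)
    push_cast at this
    exact this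
  have hjf : ((j.factorial : ℕ) : K) ≠ 0 := hne _ (Nat.factorial_ne_zero j)
  rw [← h3]
  have : (((t+1).choose (j+1) * (j+1).factorial : ℕ) : K)
      = ((t+1).choose (j+1) : K) * (((j:K)+1) * (j.factorial : K)) := by
    push_cast [Nat.factorial_succ]
    try ring
  rw [this]
  field_simp

/-- The key analytic lemma: p-adic indefinite summation of a power series along
an arithmetic progression with common difference of norm `π < r`. -/
lemma indef_sum_exists (hnat : ∀ n : ℕ, ‖(n:K)‖ ≤ 1) (hint : ∀ z : ℤ, ‖(z:K)‖ ≤ 1)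
    (hne : ∀ n : ℕ, n ≠ 0 → (n:K) ≠ 0)
    (hinv : ∀ n : ℕ, n ≠ 0 → ‖((n:K))⁻¹‖ ≤ (n:ℝ))
    (q : ℕ) {π : ℝ} (hπ : ‖(q:K)‖ = π) (hπ0 : 0 < π)
    {c : ℕ → K} {r r' : ℝ} (hc : PSConvOn c r) (hπr' : π < r') (hr'r : r' < r) :
    ∃ d : ℕ → K, PSConvOn d r' ∧
      ∀ t : ℕ, ∑ s ∈ Finset.range (t+1), evalPS c ((q:K) * s) = evalPS d ((q:K) * t) := by
  classical
  have hr'0 : 0 < r' := hπ0.trans hπr'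
  have hπr : π < r := hπr'.trans hr'r
  have hqK : (q:K) ≠ 0 := by
    intro h
    rw [h, norm_zero] at hπ
    exact absurd hπ.symm (ne_of_gt hπ0)
  set u : ℕ → ℕ → ℕ := fun m j => Tst m j / j.factorial with hudef
  have hu : ∀ m j, (u m j) * j.factorial = Tst m j := fun m j =>
    Nat.div_mul_cancel (factorial_dvd_Tst m j)
  set e : ℕ → ℕ → K := fun m k =>
    ∑ j ∈ Finset.range (m+1), (u m j : K) * (((j:K)+1))⁻¹ * (((Vp (j+1)).coeff k : ℤ) : K)
    with hedef
  have he0 : ∀ m k, m + 1 < k → e m k = 0 := by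
    intro m k h
    refine Finset.sum_eq_zero fun j hj => ?_
    simp only [Finset.mem_range] at hj
    rw [Vp_coeff_eq_zero (by omega)]
    simp
  have heb : ∀ m k, ‖e m k‖ ≤ ((m:ℝ)+1)^2 := by
    intro m k
    calc ‖e m k‖ ≤ ∑ j ∈ Finset.range (m+1),
        ‖(u m j : K) * (((j:K)+1))⁻¹ * (((Vp (j+1)).coeff k : ℤ) : K)‖ := norm_sum_le _ _
      _ ≤ ∑ j ∈ Finset.range (m+1), ((m:ℝ)+1) := by
          refine Finset.sum_le_sum fun j hj => ?_
          simp only [Finset.mem_range] at hj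
          have h1 : ‖(u m j : K)‖ ≤ 1 := hnat _
          have h2 : ‖(((j:K)+1))⁻¹‖ ≤ (j:ℝ)+1 := by
            have := hinv (j+1) (by omega)
            push_cast at this
            exact this
          have h3 : ‖(((Vp (j+1)).coeff k : ℤ) : K)‖ ≤ 1 := hint _
          calc ‖(u m j : K) * (((j:K)+1))⁻¹ * (((Vp (j+1)).coeff k : ℤ) : K)‖
              = ‖(u m j : K)‖ * ‖(((j:K)+1))⁻¹‖ * ‖(((Vp (j+1)).coeff k : ℤ) : K)‖ := by
                rw [norm_mul, norm_mul]
            _ ≤ 1 * ((j:ℝ)+1) * 1 := by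
                refine mul_le_mul (mul_le_mul h1 h2 (norm_nonneg _) zero_le_one) h3
                  (norm_nonneg _) (by positivity)
            _ = (j:ℝ)+1 := by ring
            _ ≤ (m:ℝ)+1 := by
                have : (j:ℝ) ≤ (m:ℝ) := Nat.cast_le.2 (by omega)
                linarith
      _ = ((m:ℝ)+1)^2 := by
          rw [Finset.sum_const, Finset.card_range]
          push_cast
          ring
  set F' : ℕ → ℕ → K := fun m k => c m * (q:K)^m * e m k with hF'def
  have hF'b : ∀ m k, ‖F' m k‖ ≤ ((m:ℝ)+1)^2 * (‖c m‖ * π^m) := by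
    intro m k
    rw [hF'def]
    simp only []
    rw [norm_mul, norm_mul, norm_pow, hπ]
    calc ‖c m‖ * π^m * ‖e m k‖ ≤ ‖c m‖ * π^m * (((m:ℝ)+1)^2) := by
          refine mul_le_mul_of_nonneg_left (heb m k) (by positivity)
      _ = ((m:ℝ)+1)^2 * (‖c m‖ * π^m) := by ring
  have hF'z : ∀ m k, m + 1 < k → F' m k = 0 := by
    intro m k h
    rw [hF'def]
    simp only []
    rw [he0 m k h, mul_zero]
  have hψs : Summable (fun m : ℕ => ((m:ℝ)+1)^2 * (‖c m‖ * π^m)) :=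
    hc.summable_aux hπ0 hπr 2
  have hDsum : ∀ k, Summable (fun m => F' m k) := fun k =>
    Summable.of_norm_bounded hψs (fun m => hF'b m k)
  set D : ℕ → K := fun k => ∑' m, F' m k with hDdef
  set d : ℕ → K := fun k => D k * ((q:K)⁻¹)^k with hddef
  have hψ's : Summable (fun m : ℕ => ((m:ℝ)+1)^2 * (‖c m‖ * r'^m)) :=
    hc.summable_aux hr'0 hr'r 2
  have hnorms : ∀ k, Summable (fun m => ‖F' m k‖) := fun k =>
    Summable.of_nonneg_of_le (fun m => norm_nonneg _) (fun m => hF'b m k) hψs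
  have hconv : PSConvOn d r' := by
    have hρq : (1:ℝ) < r'/π := (one_lt_div hπ0).2 hπr'
    have hbound : ∀ k, ‖d k‖ * r'^k
        ≤ (r'/π) * ∑' j, ((((j + (k-1)):ℕ):ℝ)+1)^2 * (‖c (j + (k-1))‖ * r'^(j + (k-1))) := by
      intro k
      have hDk : ‖D k‖ ≤ ∑' j, ‖F' (j + (k-1)) k‖ := by
        have h1 : ‖D k‖ ≤ ∑' m, ‖F' m k‖ := norm_tsum_le_tsum_norm (hnorms k)
        have h2 : ∑ i ∈ Finset.range (k-1), ‖F' i k‖ + ∑' j, ‖F' (j + (k-1)) k‖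
            = ∑' m, ‖F' m k‖ := Summable.sum_add_tsum_nat_add (k-1) (hnorms k)
        have h3 : ∑ i ∈ Finset.range (k-1), ‖F' i k‖ = 0 := by
          refine Finset.sum_eq_zero fun i hi => ?_
          simp only [Finset.mem_range] at hi
          rw [hF'z i k (by omega), norm_zero]
        rw [← h2, h3, zero_add] at h1
        exact h1
      have hd : ‖d k‖ * r'^k = ‖D k‖ * (r'/π)^k := by
        rw [hddef]
        simp only []
        rw [norm_mul, norm_pow, norm_inv, hπ, div_pow]
        field_simp
        rw [mul_assoc, ← mul_pow, one_div, inv_mul_cancel₀ hπ0.ne', one_pow, mul_one]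
      rw [hd]
      calc ‖D k‖ * (r'/π)^k ≤ (∑' j, ‖F' (j + (k-1)) k‖) * (r'/π)^k := by
            refine mul_le_mul_of_nonneg_right hDk (by positivity)
        _ = ∑' j, ‖F' (j + (k-1)) k‖ * (r'/π)^k := tsum_mul_right.symm
        _ ≤ ∑' j, (r'/π) * ((((j + (k-1)):ℕ):ℝ)+1)^2 * (‖c (j + (k-1))‖ * r'^(j + (k-1))) := by
            refine Summable.tsum_le_tsum (fun j => ?_)
              (((summable_nat_add_iff (k-1)).2 (hnorms k)).mul_right _)
              ((((summable_nat_add_iff (k-1)).2 hψ's).mul_left (r'/π)).congr fun j => by ring)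
            set m := j + (k-1) with hm
            have hkm : k ≤ m + 1 := by omega
            calc ‖F' m k‖ * (r'/π)^k ≤ (((m:ℕ):ℝ)+1)^2 * (‖c m‖ * π^m) * (r'/π)^k := by
                  refine mul_le_mul_of_nonneg_right (hF'b m k) (by positivity)
              _ ≤ (((m:ℕ):ℝ)+1)^2 * (‖c m‖ * π^m) * (r'/π)^(m+1) := by
                  refine mul_le_mul_of_nonneg_left (pow_le_pow_right₀ (le_of_lt hρq) hkm)
                    (by positivity)
              _ = (r'/π) * (((m:ℕ):ℝ)+1)^2 * (‖c m‖ * (π^m * (r'/π)^m)) := by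
                  rw [pow_succ]
                  ring
              _ = (r'/π) * (((m:ℕ):ℝ)+1)^2 * (‖c m‖ * r'^m) := by
                  rw [div_pow, show π^m * (r'^m / π^m) = r'^m by field_simp]
        _ = (r'/π) * ∑' j, ((((j + (k-1)):ℕ):ℝ)+1)^2 * (‖c (j + (k-1))‖ * r'^(j + (k-1))) := by
            rw [← tsum_mul_left]
            refine tsum_congr fun j => ?_
            ring
    refine squeeze_zero (fun k => by positivity) hbound ?_
    have h0 : Tendsto (fun i : ℕ => ∑' j, ((((j + i):ℕ):ℝ)+1)^2 * (‖c (j + i)‖ * r'^(j + i)))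
        atTop (nhds 0) :=
      tendsto_sum_nat_add (fun m => (((m:ℕ):ℝ)+1)^2 * (‖c m‖ * r'^m))
    have h1 := (h0.comp (Filter.tendsto_sub_atTop_nat 1)).const_mul (r'/π)
    simpa using h1
  refine ⟨d, hconv, ?_⟩
  intro t
  set F : ℕ → ℕ → K := fun m k => F' m k * (t:K)^k with hFdef
  have hsum_eval : ∀ s : ℕ, Summable (fun m => c m * ((q:K) * s)^m) := by
    intro s
    refine hc.summable_eval hπ0 hπr ?_
    rw [norm_mul, hπ]
    calc π * ‖(s:K)‖ ≤ π * 1 := mul_le_mul_of_nonneg_left (hnat s) (le_of_lt hπ0)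
      _ = π := mul_one π
  have step1 : ∑ s ∈ Finset.range (t+1), evalPS c ((q:K) * s)
      = ∑' m, ∑ s ∈ Finset.range (t+1), c m * ((q:K)*s)^m := by
    unfold evalPS
    exact (Summable.tsum_finsetSum (fun s _ => hsum_eval s)).symm
  have step2 : ∀ m, ∑ s ∈ Finset.range (t+1), c m * ((q:K)*s)^m
      = ∑ k ∈ Finset.range (m+1+1), F m k := by
    intro m
    have hA : ∑ s ∈ Finset.range (t+1), c m * ((q:K)*s)^m
        = c m * (q:K)^m * ∑ s ∈ Finset.range (t+1), ((s:K))^m := by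
      rw [Finset.mul_sum]
      refine Finset.sum_congr rfl fun s _ => ?_
      rw [mul_pow]
      ring
    have hB : ∑ s ∈ Finset.range (t+1), ((s:K))^m
        = ∑ j ∈ Finset.range (m+1), (Tst m j : K) * ((t+1).choose (j+1) : K) := by
      have h1 : ∑ s ∈ Finset.range (t+1), ((s:K))^m
          = ((∑ s ∈ Finset.range (t+1), s^m : ℕ) : K) := by
        push_cast
        rfl
      rw [h1, sum_pow_eq]
      push_cast
      rfl
    have hC : ∀ j ∈ Finset.range (m+1), (Tst m j : K) * ((t+1).choose (j+1) : K)
        = (u m j : K) * (((j:K)+1))⁻¹ *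
          ∑ k ∈ Finset.range (j+2), (((Vp (j+1)).coeff k : ℤ) : K) * (t:K)^k := by
      intro j _
      have hT : (Tst m j : K) = (u m j : K) * ((j.factorial : ℕ) : K) := by
        rw [← hu m j]
        push_cast
        ring
      have hjf : ((j.factorial : ℕ) : K) ≠ 0 := hne _ (Nat.factorial_ne_zero j)
      rw [hT, choose_expand hne t j]
      have hj2 : ((j.factorial : ℕ) : K) * (((j.factorial : ℕ) : K))⁻¹ = 1 :=
        mul_inv_cancel₀ hjf
      calc (u m j : K) * ((j.factorial : ℕ) : K) * ((((j:K)+1))⁻¹ * (((j.factorial:ℕ):K))⁻¹ *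
            ∑ k ∈ Finset.range (j+2), (((Vp (j+1)).coeff k : ℤ) : K) * (t:K)^k)
          = (u m j : K) * (((j:K)+1))⁻¹ *
              (∑ k ∈ Finset.range (j+2), (((Vp (j+1)).coeff k : ℤ) : K) * (t:K)^k) *
              (((j.factorial : ℕ) : K) * (((j.factorial : ℕ) : K))⁻¹) := by ring
        _ = (u m j : K) * (((j:K)+1))⁻¹ *
              ∑ k ∈ Finset.range (j+2), (((Vp (j+1)).coeff k : ℤ) : K) * (t:K)^k := by
            rw [hj2, mul_one]
    have hD : ∑ j ∈ Finset.range (m+1), ((u m j : K) * (((j:K)+1))⁻¹ *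
          ∑ k ∈ Finset.range (j+2), (((Vp (j+1)).coeff k : ℤ) : K) * (t:K)^k)
        = ∑ k ∈ Finset.range (m+2), e m k * (t:K)^k := by
      have hext : ∀ j ∈ Finset.range (m+1),
          (u m j : K) * (((j:K)+1))⁻¹ *
            ∑ k ∈ Finset.range (j+2), (((Vp (j+1)).coeff k : ℤ) : K) * (t:K)^k
          = ∑ k ∈ Finset.range (m+2), (u m j : K) * (((j:K)+1))⁻¹ *
              ((((Vp (j+1)).coeff k : ℤ) : K) * (t:K)^k) := by
        intro j hj
        simp only [Finset.mem_range] at hj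
        rw [Finset.mul_sum]
        refine Finset.sum_subset (by intro k hk; simp only [Finset.mem_range] at *; omega) ?_
        intro k _ hk
        simp only [Finset.mem_range] at hk
        rw [Vp_coeff_eq_zero (by omega)]
        simp
      rw [Finset.sum_congr rfl hext, Finset.sum_comm]
      refine Finset.sum_congr rfl fun k _ => ?_
      rw [hedef]
      simp only []
      rw [Finset.sum_mul]
      refine Finset.sum_congr rfl fun j _ => ?_
      ring
    rw [hA, hB, Finset.sum_congr rfl hC, hD, Finset.mul_sum]
    refine Finset.sum_congr rfl fun k _ => ?_
    rw [hFdef, hF'def]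
    simp only []
    ring
  have hswap := tsum_swap_helper F (fun m => ((m:ℝ)+1)^2 * (‖c m‖ * π^m)) 1
    (fun m => by positivity)
    (by
      refine Summable.of_nonneg_of_le (fun m => by positivity) (fun m => ?_)
        ((hc.summable_aux hπ0 hπr 3).mul_left 2)
      push_cast
      have h1 : ((m:ℝ) + (1+1)) ≤ 2 * ((m:ℝ)+1) := by linarith [Nat.cast_nonneg (α := ℝ) m]
      calc ((m:ℝ) + (1+1)) * (((m:ℝ)+1)^2 * (‖c m‖ * π^m))
          ≤ (2 * ((m:ℝ)+1)) * (((m:ℝ)+1)^2 * (‖c m‖ * π^m)) := by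
            refine mul_le_mul_of_nonneg_right h1 (by positivity)
        _ = 2 * (((m:ℝ)+1)^3 * (‖c m‖ * π^m)) := by ring)
    (by
      intro m k
      rw [hFdef]
      simp only []
      rw [norm_mul, norm_pow]
      calc ‖F' m k‖ * ‖(t:K)‖^k ≤ ‖F' m k‖ * 1 := by
            refine mul_le_mul_of_nonneg_left (pow_le_one₀ (norm_nonneg _) (hnat t))
              (norm_nonneg _)
        _ = ‖F' m k‖ := mul_one _
        _ ≤ ((m:ℝ)+1)^2 * (‖c m‖ * π^m) := hF'b m k)
    (by
      intro m k h
      rw [hFdef]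
      simp only []
      rw [hF'z m k (by omega), zero_mul])
  have step4 : ∀ k, ∑' m, F m k = D k * (t:K)^k := by
    intro k
    rw [hDdef]
    simp only []
    rw [← tsum_mul_right]
  have step5 : ∀ k, D k * (t:K)^k = d k * ((q:K) * t)^k := by
    intro k
    rw [hddef]
    simp only []
    rw [mul_pow]
    have h1 : ((q:K)⁻¹)^k * ((q:K))^k = 1 := by
      rw [← mul_pow, inv_mul_cancel₀ hqK, one_pow]
    calc D k * (t:K)^k = D k * ((((q:K)⁻¹)^k * ((q:K))^k) * (t:K)^k) := by
          rw [h1, one_mul]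
      _ = D k * ((q:K)⁻¹)^k * ((q:K)^k * (t:K)^k) := by ring
  calc ∑ s ∈ Finset.range (t+1), evalPS c ((q:K) * s)
      = ∑' m, ∑ s ∈ Finset.range (t+1), c m * ((q:K)*s)^m := step1
    _ = ∑' m, ∑ k ∈ Finset.range (m+1+1), F m k := tsum_congr step2
    _ = ∑' k, ∑' m, F m k := hswap.2
    _ = ∑' k, D k * (t:K)^k := tsum_congr step4
    _ = ∑' k, d k * ((q:K) * t)^k := tsum_congr step5
    _ = evalPS d ((q:K) * t) := rfl

end MainLemma



section Assembly

variable {K : Type*} [NormedField K] [CompleteSpace K]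

/-- Splitting off the head of a `range` sum as an `Icc 1 t` sum. -/
lemma sum_range_eq_head_Icc {A : Type*} [AddCommMonoid A] (g : ℕ → A) (t : ℕ) :
    ∑ s ∈ Finset.range (t+1), g s = g 0 + ∑ s ∈ Finset.Icc 1 t, g s := by
  induction t with
  | zero => simp
  | succ t ih =>
    rw [Finset.sum_range_succ, ih, Finset.sum_Icc_succ_top (by omega), add_assoc]

/-- Block decomposition of an interval sum. -/
lemma sum_Icc_add_block {A : Type*} [AddCommMonoid A] (f : ℕ → A) (n₀ b : ℕ) (hb : n₀ ≤ b) :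
    ∀ c : ℕ, ∑ k ∈ Finset.Icc n₀ (b + c), f k
      = (∑ k ∈ Finset.Icc n₀ b, f k) + ∑ j ∈ Finset.range c, f (b + c - j) := by
  intro c
  induction c with
  | zero => simp
  | succ c ih =>
    rw [show b + (c+1) = (b + c) + 1 by ring, Finset.sum_Icc_succ_top (by omega), ih,
      Finset.sum_range_succ' (fun j => f (b + c + 1 - j)) c]
    have h1 : ∀ j ∈ Finset.range c, f (b + c + 1 - (j+1)) = f (b + c - j) := by
      intro j hj
      congr 1
      omega
    rw [Finset.sum_congr rfl h1]
    have h2 : f (b + c + 1 - 0) = f (b + c + 1) := by congr 1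
    rw [h2]
    abel

/-- Telescoping the partial-sum function along an arithmetic progression. -/
lemma telescope_sum {A : Type*} [AddCommMonoid A] (f : ℕ → A) (n₀ a₀ q : ℕ) (h : n₀ ≤ a₀) :
    ∀ t : ℕ, ∑ k ∈ Finset.Icc n₀ (a₀ + q * t), f k
      = (∑ k ∈ Finset.Icc n₀ a₀, f k) +
        ∑ s ∈ Finset.Icc 1 t, ∑ j ∈ Finset.range q, f (a₀ + q * s - j) := by
  intro t
  induction t with
  | zero => simp
  | succ t ih =>
    have h1 : a₀ + q * (t+1) = (a₀ + q * t) + q := by ring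
    rw [h1, sum_Icc_add_block f n₀ (a₀ + q * t) (by omega), ih,
      Finset.sum_Icc_succ_top (show 1 ≤ t + 1 by omega), add_assoc]
    congr 2
    refine Finset.sum_congr rfl fun j hj => ?_
    congr 1
    ring

end Assembly

section Padic

variable (p : ℕ) [Fact p.Prime]

lemma padic_norm_nat_le_one (n : ℕ) : ‖(n:ℚ_[p])‖ ≤ 1 := by
  have := Padic.norm_int_le_one (p := p) (n : ℤ)
  push_cast at this
  exact this

lemma padic_norm_nat_eq_one {n : ℕ} (h : ¬ p ∣ n) : ‖(n:ℚ_[p])‖ = 1 := by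
  have h1 : ‖((n:ℤ):ℚ_[p])‖ ≤ 1 := Padic.norm_int_le_one _
  have h2 : ¬ ‖((n:ℤ):ℚ_[p])‖ < 1 := by
    rw [Padic.norm_intCast_lt_one_iff]
    exact fun hh => h (Int.natCast_dvd_natCast.mp hh)
  push_cast at h1 h2
  linarith [lt_or_eq_of_le h1]

lemma padic_norm_nat_ge (n : ℕ) (hn : n ≠ 0) : (1:ℝ)/n ≤ ‖(n:ℚ_[p])‖ := by
  induction n using Nat.strong_induction_on with
  | _ n ih =>
    by_cases hdvd : p ∣ n
    · obtain ⟨m, rfl⟩ := hdvd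
      have hm : m ≠ 0 := by
        intro h; rw [h] at hn; simp at hn
      have hp2 : 2 ≤ p := (Fact.out : p.Prime).two_le
      have hmn : m < p * m := by
        have h3 : 1 * m < p * m :=
          (Nat.mul_lt_mul_right (Nat.pos_of_ne_zero hm)).mpr (by omega)
        omega
      have h1 := ih m hmn hm
      have h2 : ((p * m : ℕ) : ℚ_[p]) = (p:ℚ_[p]) * (m:ℚ_[p]) := by push_cast; ring
      rw [h2, norm_mul, Padic.norm_p]
      have hppos : (0:ℝ) < p := by positivity
      have key : (1:ℝ)/(p*m) = (p:ℝ)⁻¹ * (1/m) := by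
        push_cast
        field_simp
      rw [show ((p*m : ℕ):ℝ) = (p:ℝ) * m by push_cast; ring] at *
      calc (1:ℝ)/((p:ℝ)*m) = (p:ℝ)⁻¹ * (1/m) := by field_simp
        _ ≤ (p:ℝ)⁻¹ * ‖(m:ℚ_[p])‖ := by
            refine mul_le_mul_of_nonneg_left h1 (by positivity)
    · rw [padic_norm_nat_eq_one p hdvd]
      have : (1:ℝ) ≤ n := by exact_mod_cast Nat.one_le_iff_ne_zero.2 hn
      rw [div_le_one (by linarith)] at *
      linarith
end Padic


section Zero
variable {K : Type*} [NormedField K]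
lemma PSConvOn_zero (r : ℝ) : PSConvOn (0 : ℕ → K) r := by
  unfold PSConvOn
  simp only [Pi.zero_apply, norm_zero, zero_mul]
  exact tendsto_const_nhds
end Zero

/-- if `f` is an `M`-power series function on `{n ≥ n₀}`, then so is
`F(n) = ∑_{n₀ ≤ k ≤ n} f k`. -/
theorem sum_isMPSF (p M : ℕ) [Fact p.Prime] (hM : 1 ≤ M) (hpM : ¬ p ∣ M)
    [NormedField K] [CompleteSpace K] [Algebra ℚ_[p] K]
    (hiso : ∀ x : ℚ_[p], ‖algebraMap ℚ_[p] K x‖ = ‖x‖)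
    (ζ : K) (hζ : IsPrimitiveRoot ζ M) (hgen : Algebra.adjoin ℚ_[p] {ζ} = ⊤)
    (n₀ : ℕ) (f : ℕ → K) (hf : IsMPSF p M n₀ f) :
    IsMPSF p M n₀ (fun n => ∑ k ∈ Finset.Icc n₀ n, f k) := by
  intro i hi0 hiq
  have hp2 : 2 ≤ p := (Fact.out : p.Prime).two_le
  set q : ℕ := p * M with hqdef
  have hq1 : 1 ≤ q := Nat.one_le_iff_ne_zero.2 (Nat.mul_ne_zero (by omega) (by omega))
  -- basic norm facts
  have hnatQ : ∀ n : ℕ, ‖((n:ℕ):K)‖ ≤ 1 := by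
    intro n
    rw [show ((n:ℕ):K) = algebraMap ℚ_[p] K ((n:ℚ_[p])) from (map_natCast _ n).symm, hiso]
    exact padic_norm_nat_le_one p n
  have hintQ : ∀ z : ℤ, ‖((z:ℤ):K)‖ ≤ 1 := by
    intro z
    rw [show ((z:ℤ):K) = algebraMap ℚ_[p] K ((z:ℚ_[p])) from (map_intCast _ z).symm, hiso]
    exact Padic.norm_int_le_one z
  have hneQ : ∀ n : ℕ, n ≠ 0 → ((n:ℕ):K) ≠ 0 := by
    intro n hn h0
    have h1 : ‖((n:ℕ):K)‖ = 0 := by rw [h0, norm_zero]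
    rw [show ((n:ℕ):K) = algebraMap ℚ_[p] K ((n:ℚ_[p])) from (map_natCast _ n).symm, hiso] at h1
    have h2 : ((n:ℕ):ℚ_[p]) = 0 := norm_eq_zero.mp h1
    exact hn (by exact_mod_cast h2)
  have hinvQ : ∀ n : ℕ, n ≠ 0 → ‖(((n:ℕ):K))⁻¹‖ ≤ (n:ℝ) := by
    intro n hn
    rw [norm_inv,
      show ((n:ℕ):K) = algebraMap ℚ_[p] K ((n:ℚ_[p])) from (map_natCast _ n).symm, hiso]
    have h1 := padic_norm_nat_ge p n hn
    have hn1 : (1:ℝ) ≤ (n:ℝ) := by exact_mod_cast Nat.one_le_iff_ne_zero.2 hn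
    have h2 : (0:ℝ) < ‖(n:ℚ_[p])‖ := lt_of_lt_of_le (by positivity) h1
    rw [inv_le_comm₀ h2 (by linarith)]
    calc (n:ℝ)⁻¹ = 1/(n:ℝ) := (one_div _).symm
      _ ≤ ‖(n:ℚ_[p])‖ := h1
  have hπ0 : (0:ℝ) < (p:ℝ)⁻¹ := by positivity
  have hpinv1 : (p:ℝ)⁻¹ < 1 := by
    have h1 : (1:ℝ) < p := by exact_mod_cast (by omega : 1 < p)
    rw [inv_lt_one_iff₀]
    right
    exact h1
  have hqnorm : ‖((q:ℕ):K)‖ = (p:ℝ)⁻¹ := by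
    rw [show ((q:ℕ):K) = algebraMap ℚ_[p] K ((q:ℚ_[p])) from (map_natCast _ q).symm, hiso,
      show ((q:ℕ):ℚ_[p]) = (p:ℚ_[p]) * (M:ℚ_[p]) by rw [hqdef]; push_cast; ring,
      norm_mul, Padic.norm_p, padic_norm_nat_eq_one p hpM, mul_one]
  have hdivnorm : ∀ z : ℤ, (q:ℤ) ∣ z → ‖((z:ℤ):K)‖ ≤ (p:ℝ)⁻¹ := by
    rintro z ⟨w, rfl⟩
    rw [show (((q:ℤ) * w : ℤ):K) = ((q:ℕ):K) * ((w:ℤ):K) by push_cast; ring, norm_mul, hqnorm]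
    calc (p:ℝ)⁻¹ * ‖((w:ℤ):K)‖ ≤ (p:ℝ)⁻¹ * 1 :=
          mul_le_mul_of_nonneg_left (hintQ w) (le_of_lt hπ0)
      _ = (p:ℝ)⁻¹ := mul_one _
  -- uniformized version of hf
  have hf' : ∀ i' : ℕ, ∃ (rr : ℝ) (cc : ℕ → K), (p:ℝ)⁻¹ < rr ∧ PSConvOn cc rr ∧
      (0 < i' → i' ≤ q → ∀ a : ℕ, n₀ ≤ a → ((p:ℤ) * M) ∣ ((a:ℤ) - (i':ℤ)) →
        f a = evalPS cc ((a:K) - (i':K))) := by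
    intro i'
    by_cases h : 0 < i' ∧ i' ≤ q
    · obtain ⟨rr, cc, h1, h2, h3⟩ := hf i' h.1 h.2
      exact ⟨rr, cc, h1, h2, fun _ _ => h3⟩
    · exact ⟨1, 0, hpinv1, PSConvOn_zero 1, fun h1 h2 => absurd ⟨h1, h2⟩ h⟩
  choose R Cf hR hCv hEv using hf'
  -- the shifted residues
  set ij : ℕ → ℕ := fun j => (i + q - 1 - j) % q + 1 with hijdef
  have hij_pos : ∀ j, 0 < ij j := fun j => Nat.succ_pos _
  have hij_le : ∀ j, ij j ≤ q := by
    intro j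
    have := Nat.mod_lt (i + q - 1 - j) (show 0 < q by omega)
    simp only [hijdef]
    omega
  have hij_mod : ∀ j, j < q → ((q:ℤ)) ∣ ((i:ℤ) - (j:ℤ) - (ij j : ℤ)) := by
    intro j hj
    set A : ℕ := i + q - 1 - j with hA
    refine ⟨((A / q : ℕ) : ℤ) - 1, ?_⟩
    have h1 : (A:ℤ) = (q:ℤ) * ((A/q : ℕ):ℤ) + ((A % q : ℕ):ℤ) := by
      exact_mod_cast congrArg (Nat.cast : ℕ → ℤ) (Nat.div_add_mod A q).symm
    have h2 : (A:ℤ) = (i:ℤ) + (q:ℤ) - 1 - (j:ℤ) := by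
      rw [hA]
      have hle : j ≤ i + q - 1 := by omega
      push_cast [Nat.cast_sub hle, Nat.cast_sub (show 1 ≤ i + q by omega)]
      ring
    have h3 : (ij j : ℤ) = ((A % q : ℕ):ℤ) + 1 := by
      rw [hijdef]
      push_cast
      rfl
    rw [h3]
    linarith [h1, h2]
  by_cases hex : ∃ a : ℕ, n₀ ≤ a ∧ ((p:ℤ) * M) ∣ ((a:ℤ) - (i:ℤ))
  swap
  · refine ⟨1, 0, hpinv1, PSConvOn_zero 1, ?_⟩
    intro a ha hdvd
    exact absurd ⟨a, ha, hdvd⟩ hex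
  · have hqZ : ((p:ℤ) * M) = (q:ℤ) := by rw [hqdef]; push_cast; ring
    obtain ⟨a₀, ha₀n, ha₀dvd, hmin⟩ : ∃ a₀ : ℕ, n₀ ≤ a₀ ∧ (q:ℤ) ∣ ((a₀:ℤ) - (i:ℤ)) ∧
        ∀ a : ℕ, n₀ ≤ a → (q:ℤ) ∣ ((a:ℤ) - (i:ℤ)) → a₀ ≤ a := by
      have hex' : ∃ a : ℕ, n₀ ≤ a ∧ (q:ℤ) ∣ ((a:ℤ) - (i:ℤ)) := by
        obtain ⟨a, h1, h2⟩ := hex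
        exact ⟨a, h1, by rw [← hqZ]; exact h2⟩
      exact ⟨Nat.find hex', (Nat.find_spec hex').1, (Nat.find_spec hex').2,
        fun a h1 h2 => Nat.find_min' hex' ⟨h1, h2⟩⟩
    -- radii
    have hqrange : (Finset.range q).Nonempty := ⟨0, by simp; omega⟩
    set ρ1 : ℝ := (Finset.range q).inf' hqrange (fun j => R (ij j)) with hρ1def
    have hρ1gt : (p:ℝ)⁻¹ < ρ1 := (Finset.lt_inf'_iff hqrange).2 (fun j _ => hR (ij j))
    set ρ : ℝ := ((p:ℝ)⁻¹ + ρ1)/2 with hρdef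
    have hπρ : (p:ℝ)⁻¹ < ρ := by rw [hρdef]; linarith
    have hρρ1 : ρ < ρ1 := by rw [hρdef]; linarith
    have hρ0 : 0 < ρ := lt_trans hπ0 hπρ
    have hρle : ∀ j, j < q → ρ < R (ij j) := by
      intro j hj
      exact lt_of_lt_of_le hρρ1 (Finset.inf'_le _ (Finset.mem_range.2 hj))
    set ρ' : ℝ := ((p:ℝ)⁻¹ + ρ)/2 with hρ'def
    have hπρ' : (p:ℝ)⁻¹ < ρ' := by rw [hρ'def]; linarith
    have hρ'ρ : ρ' < ρ := by rw [hρ'def]; linarith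
    have hρ'0 : 0 < ρ' := lt_trans hπ0 hπρ'
    set ρ'' : ℝ := ((p:ℝ)⁻¹ + ρ')/2 with hρ''def
    have hπρ'' : (p:ℝ)⁻¹ < ρ'' := by rw [hρ''def]; linarith
    have hρ''ρ' : ρ'' < ρ' := by rw [hρ''def]; linarith
    have hρ''0 : 0 < ρ'' := lt_trans hπ0 hπρ''
    -- the shifts
    set δ : ℕ → ℤ := fun j => (a₀ : ℤ) - (j:ℤ) - (ij j : ℤ) with hδdef
    have hδdvd : ∀ j, j < q → (q:ℤ) ∣ δ j := by
      intro j hj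
      have h1 : δ j = ((a₀:ℤ) - (i:ℤ)) + ((i:ℤ) - (j:ℤ) - (ij j : ℤ)) := by rw [hδdef]; ring
      rw [h1]
      exact dvd_add ha₀dvd (hij_mod j hj)
    -- recentered coefficient sequences
    have hrec : ∀ j : ℕ, ∃ cc : ℕ → K, PSConvOn cc ρ ∧ (j < q → ∀ x : K, ‖x‖ ≤ ρ →
        evalPS (Cf (ij j)) (x + ((δ j : ℤ) : K)) = evalPS cc x) := by
      intro j
      by_cases hj : j < q
      · obtain ⟨cc, h1, h2⟩ := recenter_exists hnatQ (hCv (ij j)) hρ0 (hρle j hj)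
          ((δ j : ℤ) : K) (le_trans (hdivnorm _ (hδdvd j hj)) (le_of_lt hπρ))
        exact ⟨cc, h1, fun _ => h2⟩
      · exact ⟨0, PSConvOn_zero ρ, fun h => absurd h hj⟩
    choose Cr hCrConv hCrEval using hrec
    set Cg : ℕ → K := fun m => ∑ j ∈ Finset.range q, Cr j m with hCgdef
    have hCgConv : PSConvOn Cg ρ :=
      PSConvOn.finsetSum _ _ (le_of_lt hρ0) (fun j _ => hCrConv j)
    -- norms of evaluation points
    have hxnorm : ∀ s : ℕ, ‖((q:ℕ):K) * ((s:ℕ):K)‖ ≤ (p:ℝ)⁻¹ := by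
      intro s
      rw [norm_mul, hqnorm]
      calc (p:ℝ)⁻¹ * ‖((s:ℕ):K)‖ ≤ (p:ℝ)⁻¹ * 1 :=
            mul_le_mul_of_nonneg_left (hnatQ s) (le_of_lt hπ0)
        _ = (p:ℝ)⁻¹ := mul_one _
    -- the block identity
    have hblock : ∀ s : ℕ, 1 ≤ s →
        ∑ j ∈ Finset.range q, f (a₀ + q * s - j) = evalPS Cg (((q:ℕ):K) * ((s:ℕ):K)) := by
      intro s hs
      have hsum : evalPS Cg (((q:ℕ):K) * ((s:ℕ):K))
          = ∑ j ∈ Finset.range q, evalPS (Cr j) (((q:ℕ):K) * ((s:ℕ):K)) := by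
        refine evalPS_finsetSum _ _ _ (fun j _ => ?_)
        exact (hCrConv j).summable_eval hπ0 hπρ (hxnorm s)
      rw [hsum]
      refine Finset.sum_congr rfl fun j hj => ?_
      rw [Finset.mem_range] at hj
      have hjle : j < q * s := by
        calc j < q := hj
          _ ≤ q * s := Nat.le_mul_of_pos_right q (by omega)
      set a : ℕ := a₀ + q * s - j with hadef
      have han : n₀ ≤ a := by omega
      have haZ : (a:ℤ) = (a₀:ℤ) + (q:ℤ)*(s:ℤ) - (j:ℤ) := by
        rw [hadef]
        push_cast [Nat.cast_sub (show j ≤ a₀ + q * s by omega)]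
        ring
      have hadvd : ((p:ℤ) * M) ∣ ((a:ℤ) - (ij j : ℤ)) := by
        rw [hqZ]
        have h1 : (a:ℤ) - (ij j : ℤ) = (q:ℤ)*(s:ℤ) + δ j := by
          rw [haZ, hδdef]; ring
        rw [h1]
        exact dvd_add (Dvd.intro _ rfl) (hδdvd j hj)
      have heval := hEv (ij j) (hij_pos j) (hij_le j) a han hadvd
      rw [heval]
      have hxδ : ((a:ℕ):K) - ((ij j : ℕ):K) = ((q:ℕ):K) * ((s:ℕ):K) + ((δ j : ℤ) : K) := by
        have h1' : ((a:ℤ) - (ij j : ℤ) : ℤ) = ((q:ℤ)*(s:ℤ) + δ j : ℤ) := by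
          rw [haZ, hδdef]; ring
        have h2 := congrArg (fun z : ℤ => (z : K)) h1'
        simp only [Int.cast_sub, Int.cast_add, Int.cast_mul, Int.cast_natCast] at h2
        exact h2
      rw [hxδ]
      exact hCrEval j hj _ (le_trans (hxnorm s) (le_of_lt hπρ))
    -- indefinite summation
    obtain ⟨d, hdConv, hdEval⟩ := indef_sum_exists hnatQ hintQ hneQ hinvQ q hqnorm hπ0
      hCgConv hπρ' hρ'ρ
    -- final recentering
    set δ0 : ℤ := (a₀ : ℤ) - (i:ℤ) with hδ0def
    obtain ⟨c₂, hc₂Conv, hc₂Eval⟩ := recenter_exists hnatQ hdConv hρ''0 hρ''ρ'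
      (-(((δ0:ℤ)):K)) (by
        rw [norm_neg]
        exact le_trans (hdivnorm δ0 ha₀dvd) (le_of_lt hπρ''))
    set κ : K := (∑ k ∈ Finset.Icc n₀ a₀, f k) - evalPS Cg 0 with hκdef
    set efin : ℕ → K := fun k => (if k = 0 then κ else 0) + c₂ k with hefdef
    refine ⟨ρ'', efin, hπρ'', hc₂Conv.addConst κ, ?_⟩
    intro a ha hdvd
    rw [hqZ] at hdvd
    have ha₀le : a₀ ≤ a := hmin a ha hdvd
    have hdvd2 : q ∣ (a - a₀) := by
      have h1 : (q:ℤ) ∣ ((a:ℤ) - (a₀:ℤ)) := by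
        rw [show (a:ℤ) - (a₀:ℤ) = ((a:ℤ) - (i:ℤ)) - δ0 by rw [hδ0def]; ring]
        exact dvd_sub hdvd ha₀dvd
      have h2 : ((a - a₀ : ℕ):ℤ) = (a:ℤ) - (a₀:ℤ) := by
        push_cast [Nat.cast_sub ha₀le]
        ring
      rw [← h2] at h1
      exact_mod_cast h1
    set t : ℕ := (a - a₀)/q with htdef
    have hat : a = a₀ + q * t := by
      rw [htdef, Nat.mul_div_cancel' hdvd2]
      omega
    -- the analytic evaluation point
    have hxZ : ((a:K)) - ((i:ℕ):K) = ((q:ℕ):K) * ((t:ℕ):K) + ((δ0:ℤ):K) := by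
      have h1 : (a:ℤ) - (i:ℤ) = (q:ℤ)*(t:ℤ) + δ0 := by
        rw [hδ0def]
        have : (a:ℤ) = (a₀:ℤ) + (q:ℤ)*(t:ℤ) := by exact_mod_cast congrArg (Nat.cast : ℕ → ℤ) hat
        linarith
      have h2 := congrArg (fun z : ℤ => (z : K)) h1
      simp only [Int.cast_sub, Int.cast_add, Int.cast_mul, Int.cast_natCast] at h2
      exact h2
    have hxnorm2 : ‖(a:K) - ((i:ℕ):K)‖ ≤ (p:ℝ)⁻¹ := by
      have h1 : ((a:K)) - ((i:ℕ):K) = (((a:ℤ) - (i:ℤ) : ℤ) : K) := by push_cast; ring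
      rw [h1]
      exact hdivnorm _ hdvd
    -- main computation
    have hmain : ∑ k ∈ Finset.Icc n₀ a, f k = κ + evalPS d (((q:ℕ):K) * ((t:ℕ):K)) := by
      rw [hat, telescope_sum f n₀ a₀ q ha₀n t]
      have h2 : ∑ s ∈ Finset.Icc 1 t, (∑ j ∈ Finset.range q, f (a₀ + q*s - j))
          = ∑ s ∈ Finset.Icc 1 t, evalPS Cg (((q:ℕ):K) * ((s:ℕ):K)) := by
        refine Finset.sum_congr rfl fun s hs => ?_
        rw [Finset.mem_Icc] at hs
        exact hblock s hs.1
      rw [h2]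
      have h3 := sum_range_eq_head_Icc (fun s : ℕ => evalPS Cg (((q:ℕ):K) * ((s:ℕ):K))) t
      have h4 : evalPS Cg (((q:ℕ):K) * (((0:ℕ)):K)) = evalPS Cg 0 := by
        norm_num
      rw [h4] at h3
      have h5 := hdEval t
      rw [hκdef]
      have h6 : ∑ s ∈ Finset.Icc 1 t, evalPS Cg (((q:ℕ):K) * ((s:ℕ):K))
          = evalPS d (((q:ℕ):K) * ((t:ℕ):K)) - evalPS Cg 0 := by
        rw [← h5, h3]
        ring
      rw [h6]
      ring
    have hfin : evalPS d (((q:ℕ):K) * ((t:ℕ):K)) = evalPS c₂ ((a:K) - ((i:ℕ):K)) := by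
      have h1 : ((q:ℕ):K) * ((t:ℕ):K) = ((a:K) - ((i:ℕ):K)) + (-(((δ0:ℤ)):K)) := by
        rw [hxZ]
        ring
      rw [h1]
      exact hc₂Eval _ (le_trans hxnorm2 (le_of_lt hπρ''))
    have heffin : evalPS efin ((a:K) - ((i:ℕ):K)) = κ + evalPS c₂ ((a:K) - ((i:ℕ):K)) := by
      rw [hefdef]
      exact evalPS_addConst κ c₂ _
        (hc₂Conv.summable_eval hπ0 hπρ'' hxnorm2)
    show ∑ k ∈ Finset.Icc n₀ a, f k = evalPS efin ((a:K) - ((i:ℕ):K))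
    rw [heffin, hmain, hfin]

end
end

section
/- Fix s ∈ ℤ and an integer i with 0 ≤ i < M. The function f : ℕ_{>0} → K defined by f(k) = ζ^{ik}·k^s if p ∤ k, and f(k) = 0 if p | k, is an M-power series function. -/
open Filter

noncomputable section

variable {K : Type*}

/-- Auxiliary: a uniformly bounded power series converges on any disc of radius `< 1`. -/
lemma psConvOn_of_bounded [NormedField K] {c : ℕ → K} (h : ∀ m, ‖c m‖ ≤ 1)
    {r : ℝ} (hr0 : 0 ≤ r) (hr1 : r < 1) : PSConvOn c r := by
  apply squeeze_zero (fun m => mul_nonneg (norm_nonneg _) (pow_nonneg hr0 m))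
    (fun m => ?_) (tendsto_pow_atTop_nhds_zero_of_lt_one hr0 hr1)
  calc ‖c m‖ * r ^ m ≤ 1 * r ^ m := by
        exact mul_le_mul_of_nonneg_right (h m) (pow_nonneg hr0 m)
    _ = r ^ m := one_mul _

/-- for `s ∈ ℤ` and `0 ≤ i < M`, the function `f : ℕ_{>0} → K` given by
`f k = ζ^(i k) k^s` if `p ∤ k` and `f k = 0` if `p ∣ k`, is an `M`-power series function. -/
theorem zeta_pow_mul_zpow_isMPSF (p M : ℕ) [Fact p.Prime] (hM : 1 ≤ M) (hpM : ¬ p ∣ M)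
    [NormedField K] [CompleteSpace K] [Algebra ℚ_[p] K]
    (hiso : ∀ x : ℚ_[p], ‖algebraMap ℚ_[p] K x‖ = ‖x‖)
    (ζ : K) (hζ : IsPrimitiveRoot ζ M) (hgen : Algebra.adjoin ℚ_[p] {ζ} = ⊤)
    (s : ℤ) (i : ℕ) (hi : i < M) :
    IsMPSF p M 1 (fun k => if p ∣ k then 0 else ζ ^ (i * k) * (k : K) ^ s) := by
  classical
  have hp : p.Prime := Fact.out
  have hp2 : (2 : ℝ) ≤ p := by exact_mod_cast hp.two_le
  have hp0 : (0 : ℝ) < (p : ℝ)⁻¹ := by positivity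
  -- the radius
  set r : ℝ := ((p : ℝ)⁻¹ + 1) / 2 with hrdef
  have hpinv1 : (p : ℝ)⁻¹ < 1 := by
    rw [inv_lt_one_iff₀]; right; linarith
  have hr1 : (p : ℝ)⁻¹ < r := by rw [hrdef]; linarith
  have hr2 : r < 1 := by rw [hrdef]; linarith
  have hr0 : 0 ≤ r := by rw [hrdef]; linarith
  -- norm of integers in K
  have hnormZ : ∀ n : ℤ, ‖((n : ℤ) : K)‖ = ‖((n : ℤ) : ℚ_[p])‖ := by
    intro n; rw [← map_intCast (algebraMap ℚ_[p] K), hiso]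
  have hnormN : ∀ n : ℕ, ‖(n : K)‖ ≤ 1 := by
    intro n
    have := hnormZ (n : ℤ)
    push_cast at this
    rw [this]
    exact_mod_cast Padic.norm_int_le_one (p := p) (n : ℤ)
  have hnormU : ∀ n : ℕ, ¬ p ∣ n → ‖(n : K)‖ = 1 := by
    intro n hn
    have h1 : ‖((n : ℤ) : K)‖ = ‖((n : ℤ) : ℚ_[p])‖ := hnormZ n
    push_cast at h1
    rw [h1]
    refine le_antisymm (Padic.norm_int_le_one _) ?_
    by_contra hlt
    push_neg at hlt
    have := (Padic.norm_intCast_lt_one_iff (k := (n : ℤ))).1 hlt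
    exact hn (by exact_mod_cast this)
  have hζM : ζ ^ M = 1 := hζ.pow_eq_one
  have hζ0 : ζ ≠ 0 := by
    intro h
    rw [h, zero_pow (by omega : M ≠ 0)] at hζM
    exact zero_ne_one hζM
  have hζnorm : ‖ζ‖ = 1 := by
    have h1 : ‖ζ‖ ^ M = 1 := by rw [← norm_pow, hζM, norm_one]
    by_contra hne
    rcases lt_or_gt_of_ne hne with h | h
    · have := pow_lt_one₀ (norm_nonneg ζ) h (by omega : M ≠ 0); linarith
    · have := one_lt_pow₀ h (by omega : M ≠ 0); linarith
  intro j hj0 hjle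
  by_cases hpj : p ∣ j
  · -- the zero series works
    refine ⟨r, 0, hr1, ?_, ?_⟩
    · unfold PSConvOn; simpa using tendsto_const_nhds
    · intro a ha hdvd
      have h1 : (p : ℤ) ∣ (a : ℤ) - (j : ℤ) := (dvd_mul_right (p : ℤ) (M : ℤ)).trans hdvd
      have h2 : (p : ℤ) ∣ (j : ℤ) := Int.natCast_dvd_natCast.2 hpj
      have h3 : (p : ℤ) ∣ (a : ℤ) := by
        have := dvd_add h1 h2; simpa using this
      have hpa : p ∣ a := by exact_mod_cast h3
      simp [hpa, evalPS]
  · -- p ∤ j : on this residue class, f a = ζ^(i j) a^s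
    -- common facts used for every admissible a
    have hjne : (j : K) ≠ 0 := by
      rw [← norm_ne_zero_iff, hnormU j hpj]; exact one_ne_zero
    have hfacts : ∀ a : ℕ, ((p : ℤ) * M) ∣ ((a : ℤ) - (j : ℤ)) →
        (¬ p ∣ a) ∧ ζ ^ (i * a) = ζ ^ (i * j) ∧ ‖(a : K) - (j : K)‖ ≤ (p : ℝ)⁻¹ := by
      intro a hdvd
      have hMdvd : (M : ℤ) ∣ (a : ℤ) - (j : ℤ) := (dvd_mul_left _ _).trans hdvd
      have hPdvd : (p : ℤ) ∣ (a : ℤ) - (j : ℤ) := (dvd_mul_right _ _).trans hdvd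
      have hpa : ¬ p ∣ a := by
        intro hpa
        have h2 : (p : ℤ) ∣ (a : ℤ) := Int.natCast_dvd_natCast.2 hpa
        have h3 : (p : ℤ) ∣ (j : ℤ) := by
          have := dvd_sub h2 hPdvd; simpa using this
        exact hpj (by exact_mod_cast h3)
      refine ⟨hpa, ?_, ?_⟩
      · obtain ⟨t, ht⟩ := hMdvd
        have h2 : ((i * a : ℕ) : ℤ) = ((i * j : ℕ) : ℤ) + (M : ℤ) * ((i : ℤ) * t) := by
          push_cast; linear_combination (i : ℤ) * ht
        calc ζ ^ (i * a) = ζ ^ (((i * a : ℕ) : ℤ)) := (zpow_natCast ζ _).symm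
          _ = ζ ^ (((i * j : ℕ) : ℤ) + (M : ℤ) * ((i : ℤ) * t)) := by rw [h2]
          _ = ζ ^ (((i * j : ℕ) : ℤ)) * (ζ ^ ((M : ℤ))) ^ ((i : ℤ) * t) := by
              rw [zpow_add₀ hζ0, zpow_mul]
          _ = ζ ^ (i * j) := by
              rw [zpow_natCast, zpow_natCast, hζM, one_zpow, mul_one]
      · have hcast : (a : K) - (j : K) = (((a : ℤ) - (j : ℤ) : ℤ) : K) := by push_cast; ring
        rw [hcast, hnormZ]
        have h1 : ((p : ℤ) ^ 1) ∣ (a : ℤ) - (j : ℤ) := by simpa using hPdvd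
        have h2 := (Padic.norm_int_le_pow_iff_dvd (p := p) ((a : ℤ) - (j : ℤ)) 1).2 h1
        simpa using h2
    rcases lt_or_ge s 0 with hs | hs
    · -- negative exponent: use the binomial (choose) series
      obtain ⟨k, hk⟩ : ∃ k : ℕ, s = -((k : ℤ) + 1) := ⟨(-s).toNat - 1, by omega⟩
      refine ⟨r, fun m => ζ ^ (i * j) * (j : K) ^ s * (((m + k).choose k : ℕ) : K) *
        (-(j : K)⁻¹) ^ m, hr1, ?_, ?_⟩
      · refine psConvOn_of_bounded (fun m => ?_) hr0 hr2
        have e1 : ‖ζ ^ (i * j)‖ = 1 := by rw [norm_pow, hζnorm, one_pow]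
        have e2 : ‖(j : K) ^ s‖ = 1 := by rw [norm_zpow, hnormU j hpj, one_zpow]
        have e3 : ‖(-(j : K)⁻¹) ^ m‖ = 1 := by
          rw [norm_pow, norm_neg, norm_inv, hnormU j hpj, inv_one, one_pow]
        rw [norm_mul, norm_mul, norm_mul, e1, e2, e3, one_mul, one_mul, mul_one]
        exact hnormN _
      · intro a ha hdvd
        obtain ⟨hpa, hζeq, hxnorm⟩ := hfacts a hdvd
        set x : K := (a : K) - (j : K) with hx
        have hane : (a : K) ≠ 0 := by
          rw [← norm_ne_zero_iff, hnormU a hpa]; exact one_ne_zero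
        set u : K := -(x * (j : K)⁻¹) with hudef
        have hu : ‖u‖ < 1 := by
          have e : ‖u‖ = ‖x‖ := by
            rw [hudef, norm_neg, norm_mul, norm_inv, hnormU j hpj, inv_one, mul_one]
          rw [e]; exact lt_of_le_of_lt hxnorm hpinv1
        have H := (hasSum_choose_mul_geometric_of_norm_lt_one k hu).mul_left
          (ζ ^ (i * j) * (j : K) ^ s)
        have Hfun : (fun m => ζ ^ (i * j) * (j : K) ^ s * ((((m + k).choose k : ℕ) : K) * u ^ m))
            = fun m => (ζ ^ (i * j) * (j : K) ^ s * (((m + k).choose k : ℕ) : K) *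
              (-(j : K)⁻¹) ^ m) * x ^ m := by
          funext m
          have hpow : u ^ m = (-(j : K)⁻¹) ^ m * x ^ m := by
            rw [show u = (-(j : K)⁻¹) * x by rw [hudef]; ring, mul_pow]
          rw [hpow]; ring
        rw [Hfun] at H
        have h1u : (1 : K) - u = (a : K) * (j : K)⁻¹ := by
          rw [hudef, hx]; field_simp; ring
        have ezp : ∀ y : K, y ^ s = (y ^ (k + 1))⁻¹ := by
          intro y
          rw [hk, show -((k : ℤ) + 1) = -(((k + 1 : ℕ) : ℤ)) by push_cast; ring,
            zpow_neg, zpow_natCast]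
        have hval : ζ ^ (i * j) * (j : K) ^ s * (1 / (1 - u) ^ (k + 1))
            = ζ ^ (i * j) * (a : K) ^ s := by
          rw [h1u, ezp ((j : K)), ezp ((a : K)), mul_pow]
          field_simp
          rw [one_div, inv_pow, mul_inv_cancel₀ (pow_ne_zero _ hjne)]
        rw [hval] at H
        show (if p ∣ a then 0 else ζ ^ (i * a) * (a : K) ^ s) = evalPS _ x
        rw [if_neg hpa, evalPS, H.tsum_eq, hζeq]
    · -- nonnegative exponent: a polynomial
      set n := s.toNat with hn
      refine ⟨r, fun m => ζ ^ (i * j) * (j : K) ^ (n - m) * ((n.choose m : ℕ) : K),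
        hr1, ?_, ?_⟩
      · refine psConvOn_of_bounded (fun m => ?_) hr0 hr2
        have e1 : ‖ζ ^ (i * j)‖ = 1 := by rw [norm_pow, hζnorm, one_pow]
        have e2 : ‖(j : K) ^ (n - m)‖ = 1 := by rw [norm_pow, hnormU j hpj, one_pow]
        rw [norm_mul, norm_mul, e1, e2, one_mul, one_mul]
        exact hnormN _
      · intro a ha hdvd
        obtain ⟨hpa, hζeq, -⟩ := hfacts a hdvd
        set x : K := (a : K) - (j : K) with hx
        show (if p ∣ a then 0 else ζ ^ (i * a) * (a : K) ^ s) = evalPS _ x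
        rw [if_neg hpa, evalPS,
          tsum_eq_sum (s := Finset.range (n + 1)) (f := fun m =>
            (ζ ^ (i * j) * (j : K) ^ (n - m) * ((n.choose m : ℕ) : K)) * x ^ m) ?_]
        · have e : ∑ m ∈ Finset.range (n + 1),
              (ζ ^ (i * j) * (j : K) ^ (n - m) * ((n.choose m : ℕ) : K)) * x ^ m
              = ζ ^ (i * j) * ∑ m ∈ Finset.range (n + 1),
                x ^ m * (j : K) ^ (n - m) * ((n.choose m : ℕ) : K) := by
            rw [Finset.mul_sum]
            exact Finset.sum_congr rfl fun m _ => by ring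
          rw [e, ← add_pow]
          have hxj : x + (j : K) = (a : K) := by rw [hx]; ring
          rw [hxj, hζeq, show s = (n : ℤ) from (Int.toNat_of_nonneg hs).symm, zpow_natCast]
        · intro m hm
          have : n.choose m = 0 :=
            Nat.choose_eq_zero_of_lt (by simpa [Finset.mem_range] using hm)
          simp [this]
end
end

section
/- Let a > 1 be a real number and let f, g ∈ K[[z]] be power series, each convergent on the closed disc D(a) = {z ∈ K : |z| ≤ a} (i.e. with coefficients c_m satisfying |c_m| a^m → 0), and with g not the zero power series. Suppose there exist an integer n ≥ 1 and elements a_{ij} ∈ K for 1 ≤ i ≤ n and 0 ≤ j < M such that the identity f(z+M)/g(z+M) − f(z)/g(z) = Σ_{1 ≤ i ≤ n, 0 ≤ j < M} a_{ij}/(z+j)^i holds for infinitely many z ∈ D(a) at which all terms are defined (i.e. g(z) ≠ 0, g(z+M) ≠ 0, and z ∉ {0, −1, …, −(M−1)}). Then a_{ij} = 0 for all i, j, and f/g is constant: there exists c ∈ K with f(z) = c·g(z) for all z ∈ D(a) with g(z) ≠ 0. -/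
open Filter

noncomputable section

variable {K : Type*}

set_option linter.unusedSectionVars false
namespace QDL

lemma tendsto_zero_of (f : ℕ → ℝ) (h0 : ∀ m, 0 ≤ f m)
    (h : ∀ ε : ℝ, 0 < ε → ∃ N, ∀ m ≥ N, f m ≤ ε) : Tendsto f atTop (nhds 0) := by
  rw [Metric.tendsto_atTop]
  intro ε εpos
  obtain ⟨N, hN⟩ := h (ε/2) (by positivity)
  exact ⟨N, fun m hm => by
    rw [dist_zero_right, Real.norm_eq_abs, abs_of_nonneg (h0 m)]
    linarith [hN m hm]⟩

section Field
variable [NormedField K] [CompleteSpace K] [IsUltrametricDist K]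

open IsUltrametricDist

lemma summable_of_finite_large {ι : Type*} {f : ι → K}
    (h : ∀ ε : ℝ, 0 < ε → {i | ε ≤ ‖f i‖}.Finite) : Summable f := by
  rw [summable_iff_vanishing]
  intro e he
  rcases Metric.mem_nhds_iff.mp he with ⟨ε, εpos, hball⟩
  refine ⟨(h (ε/2) (by positivity)).toFinset, fun t ht => ?_⟩
  apply hball
  rw [Metric.mem_ball, dist_zero_right]
  refine lt_of_le_of_lt
    (norm_sum_le_of_forall_le_of_nonneg (C := ε/2) (by positivity) fun i hi => ?_) (by linarith)
  by_contra hcon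
  push_neg at hcon
  exact (Finset.disjoint_left.mp ht hi)
    ((h (ε/2) (by positivity)).mem_toFinset.mpr (Set.mem_setOf_eq ▸ hcon.le))

lemma psc_small {c : ℕ → K} {a : ℝ} (ha : 0 < a) (hc : PSConvOn c a) :
    ∀ ε : ℝ, 0 < ε → ∃ N, ∀ m ≥ N, ‖c m‖ * a ^ m < ε := by
  intro ε εpos
  obtain ⟨N, hN⟩ := Metric.tendsto_atTop.mp hc ε εpos
  refine ⟨N, fun m hm => ?_⟩
  have := hN m hm
  rwa [dist_zero_right, Real.norm_eq_abs,
    abs_of_nonneg (mul_nonneg (norm_nonneg _) (pow_nonneg ha.le _))] at this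

lemma psc_bound {c : ℕ → K} {a : ℝ} (ha : 0 < a) (hc : PSConvOn c a) :
    ∃ B : ℝ, 0 < B ∧ ∀ m, ‖c m‖ * a ^ m ≤ B := by
  obtain ⟨N, hN⟩ := psc_small ha hc 1 one_pos
  refine ⟨1 + ∑ m ∈ Finset.range N, ‖c m‖ * a ^ m, by positivity, fun m => ?_⟩
  rcases lt_or_ge m N with h | h
  · have : ‖c m‖ * a ^ m ≤ ∑ m ∈ Finset.range N, ‖c m‖ * a ^ m :=
      Finset.single_le_sum (f := fun i => ‖c i‖ * a ^ i)
        (fun i _ => mul_nonneg (norm_nonneg _) (pow_nonneg ha.le _))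
        (Finset.mem_range.mpr h)
    linarith
  · have := (hN m h).le
    have h2 : (0:ℝ) ≤ ∑ m ∈ Finset.range N, ‖c m‖ * a ^ m :=
      Finset.sum_nonneg fun i _ => mul_nonneg (norm_nonneg _) (pow_nonneg ha.le _)
    linarith

lemma summable_eval {c : ℕ → K} {a : ℝ} (ha : 0 < a) (hc : PSConvOn c a) {x : K}
    (hx : ‖x‖ ≤ a) : Summable fun m => c m * x ^ m := by
  refine summable_of_finite_large fun ε εpos => ?_
  obtain ⟨N, hN⟩ := psc_small ha hc ε εpos
  refine Set.Finite.subset (Set.finite_Iio N) fun m hm => ?_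
  simp only [Set.mem_setOf_eq] at hm
  rw [Set.mem_Iio]
  by_contra h
  push_neg at h
  have h1 := hN m h
  have h2 : ‖c m * x ^ m‖ ≤ ‖c m‖ * a ^ m := by
    rw [norm_mul, norm_pow]
    exact mul_le_mul_of_nonneg_left (pow_le_pow_left₀ (norm_nonneg _) hx _) (norm_nonneg _)
  linarith

variable {a : ℝ}

/-- Representability by a power series convergent on the closed disc of radius `a`. -/
def RepOn (a : ℝ) (h : K → K) : Prop :=
  ∃ c : ℕ → K, PSConvOn c a ∧ ∀ z : K, ‖z‖ ≤ a → h z = evalPS c z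

lemma evalPS_zero_fun (x : K) : evalPS (fun _ => (0:K)) x = 0 := by
  simp [evalPS]

lemma psconv_of_eventually_zero {c : ℕ → K} {a : ℝ} (h : ∀ᶠ m in atTop, c m = 0) :
    PSConvOn c a := by
  have heq : (fun m => ‖c m‖ * a ^ m) =ᶠ[atTop] fun _ => (0:ℝ) :=
    h.mono fun m hm => by simp [hm]
  exact Tendsto.congr' heq.symm tendsto_const_nhds

lemma RepOn.const (a : ℝ) (v : K) : RepOn a (fun _ => v) := by
  refine ⟨fun m => if m = 0 then v else 0,
    psconv_of_eventually_zero (eventually_atTop.mpr ⟨1, fun m hm => by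
      have : m ≠ 0 := by omega
      simp [this]⟩), fun z _ => ?_⟩
  rw [evalPS, tsum_eq_single 0 (by intro m hm; simp [hm])]
  simp

lemma RepOn.id (a : ℝ) : RepOn a (fun z : K => z) := by
  refine ⟨fun m => if m = 1 then 1 else 0,
    psconv_of_eventually_zero (eventually_atTop.mpr ⟨2, fun m hm => by
      have : m ≠ 1 := by omega
      simp [this]⟩), fun z _ => ?_⟩
  rw [evalPS, tsum_eq_single 1 (by intro m hm; simp [hm])]
  simp

lemma RepOn.sub {h₁ h₂ : K → K} (ha : 0 < a) (r₁ : RepOn a h₁) (r₂ : RepOn a h₂) :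
    RepOn a (fun z => h₁ z - h₂ z) := by
  obtain ⟨c, hc, hc'⟩ := r₁
  obtain ⟨d, hd, hd'⟩ := r₂
  refine ⟨fun m => c m - d m, ?_, fun z hz => ?_⟩
  · apply tendsto_zero_of _ (fun m => mul_nonneg (norm_nonneg _) (pow_nonneg ha.le _))
    intro ε εpos
    obtain ⟨N₁, h₁'⟩ := psc_small ha hc (ε/2) (by positivity)
    obtain ⟨N₂, h₂'⟩ := psc_small ha hd (ε/2) (by positivity)
    refine ⟨max N₁ N₂, fun m hm => ?_⟩
    have b1 := h₁' m (le_trans (le_max_left _ _) hm)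
    have b2 := h₂' m (le_trans (le_max_right _ _) hm)
    have : ‖c m - d m‖ * a ^ m ≤ ‖c m‖ * a ^ m + ‖d m‖ * a ^ m := by
      rw [← add_mul]
      exact mul_le_mul_of_nonneg_right (norm_sub_le _ _) (pow_nonneg ha.le _)
    linarith
  · show h₁ z - h₂ z = _
    rw [hc' z hz, hd' z hz]
    simp only [evalPS]
    rw [← Summable.tsum_sub (summable_eval ha hc hz) (summable_eval ha hd hz)]
    exact tsum_congr fun m => by ring

lemma psc_large_finite {c : ℕ → K} {a : ℝ} (ha : 0 < a) (hc : PSConvOn c a) {δ : ℝ}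
    (hδ : 0 < δ) : {m : ℕ | δ ≤ ‖c m‖ * a ^ m}.Finite := by
  obtain ⟨N, hN⟩ := psc_small ha hc δ hδ
  refine Set.Finite.subset (Set.finite_Iio N) fun m hm => ?_
  simp only [Set.mem_setOf_eq] at hm
  rw [Set.mem_Iio]
  by_contra h
  push_neg at h
  exact absurd hm (not_le.mpr (hN m h))

lemma RepOn.mul {h₁ h₂ : K → K} (ha : 1 ≤ a) (r₁ : RepOn a h₁) (r₂ : RepOn a h₂) :
    RepOn a (fun z => h₁ z * h₂ z) := by
  have ha0 : (0:ℝ) < a := lt_of_lt_of_le one_pos ha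
  obtain ⟨c, hc, hc'⟩ := r₁
  obtain ⟨d, hd, hd'⟩ := r₂
  obtain ⟨Bc, hBc, hBc'⟩ := psc_bound ha0 hc
  obtain ⟨Bd, hBd, hBd'⟩ := psc_bound ha0 hd
  refine ⟨fun m => ∑ p ∈ Finset.HasAntidiagonal.antidiagonal m, c p.1 * d p.2, ?_, fun z hz => ?_⟩
  · apply tendsto_zero_of _ (fun m => mul_nonneg (norm_nonneg _) (pow_nonneg ha0.le _))
    intro ε εpos
    obtain ⟨N₁, h₁'⟩ := psc_small ha0 hc (ε/Bd) (by positivity)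
    obtain ⟨N₂, h₂'⟩ := psc_small ha0 hd (ε/Bc) (by positivity)
    refine ⟨N₁ + N₂, fun m hm => ?_⟩
    have hpow : (0:ℝ) < a ^ m := pow_pos ha0 m
    rw [← le_div_iff₀ hpow]
    refine norm_sum_le_of_forall_le_of_nonneg (by positivity) fun p hp => ?_
    rw [le_div_iff₀ hpow]
    have hps : p.1 + p.2 = m := Finset.HasAntidiagonal.mem_antidiagonal.mp hp
    have key : ‖c p.1‖ * a ^ p.1 * (‖d p.2‖ * a ^ p.2) ≤ ε := by
      rcases le_or_gt N₁ p.1 with h | h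
      · have b1 := (h₁' p.1 h).le
        have b2 := hBd' p.2
        have n2 : (0:ℝ) ≤ ‖d p.2‖ * a ^ p.2 := mul_nonneg (norm_nonneg _) (pow_nonneg ha0.le _)
        calc ‖c p.1‖ * a ^ p.1 * (‖d p.2‖ * a ^ p.2) ≤ (ε/Bd) * Bd :=
              mul_le_mul b1 b2 n2 (by positivity)
          _ = ε := div_mul_cancel₀ ε hBd.ne'
      · have hN2 : N₂ ≤ p.2 := by omega
        have b1 := hBc' p.1
        have b2 := (h₂' p.2 hN2).le
        have n2 : (0:ℝ) ≤ ‖d p.2‖ * a ^ p.2 := mul_nonneg (norm_nonneg _) (pow_nonneg ha0.le _)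
        calc ‖c p.1‖ * a ^ p.1 * (‖d p.2‖ * a ^ p.2) ≤ Bc * (ε/Bc) :=
              mul_le_mul b1 b2 n2 hBc.le
          _ = ε := mul_div_cancel₀ ε hBc.ne'
    calc ‖c p.1 * d p.2‖ * a ^ m = ‖c p.1‖ * a ^ p.1 * (‖d p.2‖ * a ^ p.2) := by
          rw [norm_mul, ← hps, pow_add]; ring
      _ ≤ ε := key
  · show h₁ z * h₂ z = _
    rw [hc' z hz, hd' z hz]
    simp only [evalPS]
    have sc := summable_eval ha0 hc hz
    have sd := summable_eval ha0 hd hz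
    have hb : ∀ m, ‖c m * z ^ m‖ ≤ ‖c m‖ * a ^ m := fun m => by
      rw [norm_mul, norm_pow]
      exact mul_le_mul_of_nonneg_left (pow_le_pow_left₀ (norm_nonneg _) hz _) (norm_nonneg _)
    have hb' : ∀ m, ‖d m * z ^ m‖ ≤ ‖d m‖ * a ^ m := fun m => by
      rw [norm_mul, norm_pow]
      exact mul_le_mul_of_nonneg_left (pow_le_pow_left₀ (norm_nonneg _) hz _) (norm_nonneg _)
    have spr : Summable (fun p : ℕ × ℕ => (c p.1 * z ^ p.1) * (d p.2 * z ^ p.2)) := by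
      refine summable_of_finite_large fun ε εpos => ?_
      refine Set.Finite.subset
        ((psc_large_finite ha0 hc (div_pos εpos hBd)).prod
          (psc_large_finite ha0 hd (div_pos εpos hBc))) fun p hp => ?_
      simp only [Set.mem_setOf_eq] at hp
      have key : ε ≤ (‖c p.1‖ * a ^ p.1) * (‖d p.2‖ * a ^ p.2) := by
        refine le_trans hp ?_
        rw [norm_mul]
        exact mul_le_mul (hb p.1) (hb' p.2) (norm_nonneg _)
          (mul_nonneg (norm_nonneg _) (pow_nonneg ha0.le _))
      constructor
      · simp only [Set.mem_setOf_eq]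
        rw [div_le_iff₀ hBd]
        calc ε ≤ (‖c p.1‖ * a ^ p.1) * (‖d p.2‖ * a ^ p.2) := key
          _ ≤ (‖c p.1‖ * a ^ p.1) * Bd :=
            mul_le_mul_of_nonneg_left (hBd' p.2)
              (mul_nonneg (norm_nonneg _) (pow_nonneg ha0.le _))
      · simp only [Set.mem_setOf_eq]
        rw [div_le_iff₀ hBc]
        calc ε ≤ (‖c p.1‖ * a ^ p.1) * (‖d p.2‖ * a ^ p.2) := key
          _ ≤ (‖d p.2‖ * a ^ p.2) * Bc := by
            rw [mul_comm]
            exact mul_le_mul_of_nonneg_left (hBc' p.1)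
              (mul_nonneg (norm_nonneg _) (pow_nonneg ha0.le _))
    rw [Summable.tsum_mul_tsum_eq_tsum_sum_antidiagonal sc sd spr]
    refine tsum_congr fun n => ?_
    rw [Finset.sum_mul]
    refine Finset.sum_congr rfl fun p hp => ?_
    have hps := Finset.HasAntidiagonal.mem_antidiagonal.mp hp
    rw [← hps, pow_add]; ring

lemma recenter {c : ℕ → K} {a : ℝ} (ha : 1 ≤ a) (hc : PSConvOn c a) {e : K} (he : ‖e‖ ≤ a) :
    ∃ d : ℕ → K, PSConvOn d a ∧ ∀ w : K, ‖w‖ ≤ a → evalPS c (e + w) = evalPS d w := by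
  have ha0 : (0:ℝ) < a := lt_of_lt_of_le one_pos ha
  refine ⟨fun k => ∑' m, (m.choose k : K) * c m * e ^ (m - k), ?_, ?_⟩
  · apply tendsto_zero_of _ (fun k => mul_nonneg (norm_nonneg _) (pow_nonneg ha0.le _))
    intro ε εpos
    obtain ⟨N, hN⟩ := psc_small ha0 hc ε εpos
    refine ⟨N, fun k hk => ?_⟩
    have hak : (0:ℝ) < a ^ k := pow_pos ha0 _
    rw [← le_div_iff₀ hak]
    refine norm_tsum_le_of_forall_le_of_nonneg (by positivity) fun m => ?_
    rcases lt_or_ge m k with h | h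
    · rw [Nat.choose_eq_zero_of_lt h]
      simp only [Nat.cast_zero, zero_mul]
      rw [norm_zero]
      positivity
    · have hb : ‖(m.choose k : K) * c m * e ^ (m - k)‖ ≤ ‖c m‖ * a ^ (m - k) := by
        rw [norm_mul, norm_mul, norm_pow]
        calc ‖(m.choose k : K)‖ * ‖c m‖ * ‖e‖ ^ (m - k) ≤ 1 * ‖c m‖ * a ^ (m - k) := by
              refine mul_le_mul (mul_le_mul (norm_natCast_le_one K _) le_rfl
                (norm_nonneg _) zero_le_one) (pow_le_pow_left₀ (norm_nonneg _) he _)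
                (pow_nonneg (norm_nonneg _) _) (by positivity)
          _ = ‖c m‖ * a ^ (m - k) := by ring
      refine le_trans hb ?_
      rw [le_div_iff₀ hak, mul_assoc, ← pow_add, Nat.sub_add_cancel h]
      exact (hN m (le_trans hk h)).le
  · intro w hw
    set g : ℕ → ℕ → K := fun m k => (m.choose k : K) * c m * e ^ (m - k) * w ^ k with hgdef
    have hgb : ∀ m k, k ≤ m → ‖g m k‖ ≤ ‖c m‖ * a ^ m := by
      intro m k hkm
      simp only [hgdef]
      rw [norm_mul, norm_mul, norm_mul, norm_pow, norm_pow]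
      calc ‖(m.choose k : K)‖ * ‖c m‖ * ‖e‖ ^ (m - k) * ‖w‖ ^ k
          ≤ 1 * ‖c m‖ * a ^ (m - k) * a ^ k := by
            refine mul_le_mul (mul_le_mul (mul_le_mul (norm_natCast_le_one K _) le_rfl
              (norm_nonneg _) zero_le_one) (pow_le_pow_left₀ (norm_nonneg _) he _)
              (pow_nonneg (norm_nonneg _) _) (by positivity))
              (pow_le_pow_left₀ (norm_nonneg _) hw _) (pow_nonneg (norm_nonneg _) _)
              (by positivity)
        _ = ‖c m‖ * a ^ m := by
            rw [one_mul, mul_assoc, ← pow_add, Nat.sub_add_cancel hkm]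
    have hg0 : ∀ m k, m < k → g m k = 0 := by
      intro m k h
      simp [hgdef, Nat.choose_eq_zero_of_lt h]
    have sg_prod : Summable (Function.uncurry g) := by
      refine summable_of_finite_large fun ε εpos => ?_
      obtain ⟨N, hN⟩ := psc_small ha0 hc ε εpos
      refine Set.Finite.subset ((Set.finite_Iio N).prod (Set.finite_Iio N)) fun p hp => ?_
      simp only [Set.mem_setOf_eq, Function.uncurry] at hp
      have hkm : p.2 ≤ p.1 := by
        by_contra h
        push_neg at h
        rw [hg0 p.1 p.2 h, norm_zero] at hp
        linarith
      have h1 : ε ≤ ‖c p.1‖ * a ^ p.1 := le_trans hp (hgb p.1 p.2 hkm)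
      have h2 : p.1 < N := by
        by_contra h
        push_neg at h
        exact absurd h1 (not_le.mpr (hN p.1 h))
      exact ⟨Set.mem_Iio.mpr h2, Set.mem_Iio.mpr (lt_of_le_of_lt hkm h2)⟩
    have sg_k : ∀ m, Summable (g m) := fun m =>
      summable_of_ne_finset_zero (s := Finset.range (m+1)) fun k hk =>
        hg0 m k (by simpa using hk)
    have sg_m : ∀ k, Summable (fun m => g m k) := by
      intro k
      refine summable_of_finite_large fun ε εpos => ?_
      obtain ⟨N, hN⟩ := psc_small ha0 hc ε εpos
      refine Set.Finite.subset (Set.finite_Iio N) fun m hm => ?_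
      simp only [Set.mem_setOf_eq] at hm
      have hkm : k ≤ m := by
        by_contra h
        push_neg at h
        rw [hg0 m k h, norm_zero] at hm
        linarith
      have h1 : ε ≤ ‖c m‖ * a ^ m := le_trans hm (hgb m k hkm)
      rw [Set.mem_Iio]
      by_contra h
      push_neg at h
      exact absurd h1 (not_le.mpr (hN m h))
    have hper : ∀ m, c m * (e + w) ^ m = ∑' k, g m k := by
      intro m
      rw [tsum_eq_sum (s := Finset.range (m+1)) (fun k hk => hg0 m k (by simpa using hk))]
      rw [add_comm e w, add_pow, Finset.mul_sum]
      exact Finset.sum_congr rfl fun k hk => by simp only [hgdef]; ring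
    calc evalPS c (e + w) = ∑' m, ∑' k, g m k := tsum_congr hper
      _ = ∑' k, ∑' m, g m k := (Summable.tsum_comm' sg_prod sg_k sg_m).symm
      _ = evalPS _ w := by
          refine tsum_congr fun k => ?_
          rw [← tsum_mul_right]

lemma order_lemma {c : ℕ → K} {a : ℝ} (ha : 1 ≤ a) (hc : PSConvOn c a) (hc0 : c ≠ 0) :
    ∃ δ : ℝ, 0 < δ ∧ ∀ z : K, ‖z‖ < δ → z ≠ 0 → evalPS c z ≠ 0 := by
  have ha0 : (0:ℝ) < a := lt_of_lt_of_le one_pos ha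
  have hex : ∃ k, c k ≠ 0 := by
    by_contra h
    push_neg at h
    exact hc0 (funext h)
  classical
  let k₀ := Nat.find hex
  have hk₀ : c k₀ ≠ 0 := Nat.find_spec hex
  have hk₀min : ∀ i, i < k₀ → c i = 0 := fun i hi => by
    by_contra h
    exact absurd (Nat.find_le h) (not_le.mpr hi)
  obtain ⟨B, hB, hB'⟩ := psc_bound ha0 hc
  have hcoef : ∀ m, ‖c m‖ ≤ B := fun m =>
    le_trans (le_mul_of_one_le_right (norm_nonneg _) (one_le_pow₀ ha)) (hB' m)
  refine ⟨min 1 (‖c k₀‖ / B), lt_min one_pos (div_pos (norm_pos_iff.mpr hk₀) hB), fun z hz hz0 => ?_⟩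
  have hz1 : ‖z‖ < 1 := lt_of_lt_of_le hz (min_le_left _ _)
  have hzB : ‖z‖ < ‖c k₀‖ / B := lt_of_lt_of_le hz (min_le_right _ _)
  have hza : ‖z‖ ≤ a := le_trans hz1.le ha
  have hsum := summable_eval ha0 hc hza
  have hsplit := (Summable.sum_add_tsum_nat_add (f := fun m => c m * z ^ m) (k₀ + 1) hsum).symm
  have hfront : ∑ i ∈ Finset.range (k₀ + 1), c i * z ^ i = c k₀ * z ^ k₀ := by
    rw [Finset.sum_eq_single k₀]
    · intro i hi hne
      have : i < k₀ := by simp only [Finset.mem_range] at hi; omega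
      rw [hk₀min i this, zero_mul]
    · intro h
      exact absurd (Finset.mem_range.mpr (by omega)) h
  have hzpos : (0:ℝ) < ‖z‖ := norm_pos_iff.mpr hz0
  have htail : ‖∑' m, c (m + (k₀+1)) * z ^ (m + (k₀+1))‖ ≤ B * ‖z‖ ^ (k₀+1) := by
    refine norm_tsum_le_of_forall_le_of_nonneg (by positivity) fun m => ?_
    rw [norm_mul, norm_pow]
    refine mul_le_mul (hcoef _) ?_ (by positivity) hB.le
    exact pow_le_pow_of_le_one (norm_nonneg _) hz1.le (by omega)
  have hBz : ‖z‖ * B < ‖c k₀‖ := (lt_div_iff₀ hB).mp hzB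
  have hmain : B * ‖z‖ ^ (k₀+1) < ‖c k₀ * z ^ k₀‖ := by
    rw [norm_mul, norm_pow, pow_succ]
    have hre : B * (‖z‖ ^ k₀ * ‖z‖) = (‖z‖ * B) * ‖z‖ ^ k₀ := by ring
    rw [hre]
    exact mul_lt_mul_of_pos_right hBz (by positivity)
  intro heq0
  rw [evalPS] at heq0
  rw [hsplit, hfront] at heq0
  have : ‖c k₀ * z ^ k₀‖ ≤ ‖∑' m, c (m + (k₀+1)) * z ^ (m + (k₀+1))‖ := by
    have h2 : c k₀ * z ^ k₀ = -(∑' m, c (m + (k₀+1)) * z ^ (m + (k₀+1))) := by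
      linear_combination heq0
    rw [h2, norm_neg]
  linarith
lemma norm_sub_le_max' (x y : K) : ‖x - y‖ ≤ max ‖x‖ ‖y‖ := by
  rw [sub_eq_add_neg]
  refine le_trans (norm_add_le_max x (-y)) ?_
  rw [norm_neg]

lemma RepOn.comp_add {h : K → K} {a : ℝ} (ha : 1 ≤ a) (r : RepOn a h) {e : K} (he : ‖e‖ ≤ a) :
    RepOn a (fun z => h (z + e)) := by
  obtain ⟨c, hc, hc'⟩ := r
  obtain ⟨d, hd, hd'⟩ := recenter ha hc he
  refine ⟨d, hd, fun z hz => ?_⟩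
  have h1 : ‖z + e‖ ≤ a := le_trans (norm_add_le_max z e) (max_le hz he)
  show h (z + e) = _
  rw [hc' _ h1, ← hd' z hz, add_comm]

lemma RepOn.neg {h : K → K} {a : ℝ} (ha : 1 ≤ a) (r : RepOn a h) :
    RepOn a (fun z => -h z) := by
  have := RepOn.sub (lt_of_lt_of_le one_pos ha) (RepOn.const a (0:K)) r
  simpa using this

lemma RepOn.add {h₁ h₂ : K → K} (ha : 1 ≤ a) (r₁ : RepOn a h₁) (r₂ : RepOn a h₂) :
    RepOn a (fun z => h₁ z + h₂ z) := by
  have := RepOn.sub (lt_of_lt_of_le one_pos ha) r₁ (RepOn.neg ha r₂)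
  simpa [sub_neg_eq_add] using this

lemma RepOn.pow {h : K → K} {a : ℝ} (ha : 1 ≤ a) (r : RepOn a h) (k : ℕ) :
    RepOn a (fun z => h z ^ k) := by
  induction k with
  | zero => simpa using RepOn.const a (1:K)
  | succ k ih => simpa [pow_succ] using RepOn.mul ha ih r

lemma RepOn.prod {ι : Type*} {a : ℝ} (ha : 1 ≤ a) (s : Finset ι) (F : ι → K → K)
    (hF : ∀ i ∈ s, RepOn a (F i)) : RepOn a (fun z => ∏ i ∈ s, F i z) := by
  classical
  induction s using Finset.induction_on with
  | empty => simpa using RepOn.const a (1:K)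
  | @insert x s hx ih =>
      have := RepOn.mul ha (hF x (Finset.mem_insert_self x s))
        (ih fun i hi => hF i (Finset.mem_insert_of_mem hi))
      simpa [Finset.prod_insert hx] using this

lemma RepOn.sum {ι : Type*} {a : ℝ} (ha : 1 ≤ a) (s : Finset ι) (F : ι → K → K)
    (hF : ∀ i ∈ s, RepOn a (F i)) : RepOn a (fun z => ∑ i ∈ s, F i z) := by
  classical
  induction s using Finset.induction_on with
  | empty => simpa using RepOn.const a (0:K)
  | @insert x s hx ih =>
      have := RepOn.add ha (hF x (Finset.mem_insert_self x s))
        (ih fun i hi => hF i (Finset.mem_insert_of_mem hi))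
      simpa [Finset.sum_insert hx] using this

lemma idthm {a : ℝ} (ha : 1 ≤ a) (hcpt : IsCompact {z : K | ‖z‖ ≤ a}) {h : K → K}
    (r : RepOn a h) {S : Set K} (hS : S.Infinite) (hSa : ∀ z ∈ S, ‖z‖ ≤ a)
    (h0 : ∀ z ∈ S, h z = 0) : ∀ z : K, ‖z‖ ≤ a → h z = 0 := by
  obtain ⟨c, hc, hc'⟩ := r
  obtain ⟨x, hxB, hx⟩ := hS.exists_accPt_of_subset_isCompact hcpt (fun z hz => hSa z hz)
  have hxa : ‖x‖ ≤ a := hxB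
  obtain ⟨d, hd, hd'⟩ := recenter ha hc hxa
  have hd0 : d = 0 := by
    by_contra hne
    obtain ⟨δ, δpos, hδ⟩ := order_lemma ha hd hne
    obtain ⟨y, hy, hyx⟩ := accPt_iff_nhds.mp hx (Metric.ball x δ)
      (Metric.ball_mem_nhds x δpos)
    have h1 : ‖y - x‖ < δ := by
      rw [← dist_eq_norm]
      exact Metric.mem_ball.mp hy.1
    have h2 : ‖y - x‖ ≤ a := le_trans (norm_sub_le_max' y x) (max_le (hSa y hy.2) hxa)
    refine hδ (y - x) h1 (sub_ne_zero.mpr hyx) ?_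
    have h3 := hd' (y - x) h2
    rw [show x + (y - x) = y by ring] at h3
    rw [← h3, ← hc' y (hSa y hy.2)]
    exact h0 y hy.2
  intro z hz
  have h2 : ‖z - x‖ ≤ a := le_trans (norm_sub_le_max' z x) (max_le hz hxa)
  have h3 := hd' (z - x) h2
  rw [show x + (z - x) = z by ring] at h3
  rw [hc' z hz, h3, hd0]
  simp [evalPS]

lemma B_infinite [CharZero K] {a : ℝ} (ha : 1 ≤ a) : {z : K | ‖z‖ ≤ a}.Infinite := by
  apply Set.infinite_of_injective_forall_mem (f := fun n : ℕ => (n : K)) Nat.cast_injective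
  intro n
  simp only [Set.mem_setOf_eq]
  exact le_trans (norm_natCast_le_one K n) ha

lemma eq_zero_on_of_mul [CharZero K] {a : ℝ} (ha : 1 ≤ a)
    (hcpt : IsCompact {z : K | ‖z‖ ≤ a})
    {h₁ h₂ : K → K} (r₁ : RepOn a h₁) (r₂ : RepOn a h₂)
    (hne : ∃ z, ‖z‖ ≤ a ∧ h₁ z ≠ 0)
    (hmul : ∀ z, ‖z‖ ≤ a → h₁ z * h₂ z = 0) : ∀ z, ‖z‖ ≤ a → h₂ z = 0 := by
  set S := {z : K | ‖z‖ ≤ a ∧ h₁ z ≠ 0} with hSdef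
  have hSinf : S.Infinite := by
    by_contra hfin
    rw [Set.not_infinite] at hfin
    have hZ : ({z : K | ‖z‖ ≤ a} \ S).Infinite := (B_infinite ha).diff hfin
    have hvan : ∀ z ∈ {z : K | ‖z‖ ≤ a} \ S, h₁ z = 0 := by
      intro z hz
      by_contra hne'
      exact hz.2 ⟨hz.1, hne'⟩
    obtain ⟨z₀, hz₀, hz₀'⟩ := hne
    exact hz₀' (idthm ha hcpt r₁ hZ (fun z hz => hz.1) hvan z₀ hz₀)
  have h2v : ∀ z ∈ S, h₂ z = 0 := by
    intro z hz
    rcases mul_eq_zero.mp (hmul z hz.1) with h | h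
    · exact absurd h hz.2
    · exact h
  exact idthm ha hcpt r₂ hSinf (fun z hz => hz.1) h2v

lemma exists_ne_zero {a : ℝ} (ha : 1 ≤ a) {c : ℕ → K} (hc : PSConvOn c a)
    (hc0 : c ≠ 0) {x₀ : K} (h0 : x₀ ≠ 0) (h1 : ‖x₀‖ < 1) :
    ∃ z, ‖z‖ ≤ a ∧ evalPS c z ≠ 0 := by
  obtain ⟨δ, δpos, hδ⟩ := order_lemma ha hc hc0
  obtain ⟨t, ht⟩ := exists_pow_lt_of_lt_one δpos h1
  refine ⟨x₀ ^ t, ?_, ?_⟩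
  · calc ‖x₀ ^ t‖ = ‖x₀‖ ^ t := norm_pow _ _
      _ ≤ 1 := pow_le_one₀ (norm_nonneg _) h1.le
      _ ≤ a := ha
  · exact hδ _ (by rw [norm_pow]; exact ht) (pow_ne_zero _ h0)

end Field





end QDL

open QDL in
/-- if `f, g` are power series convergent on the closed disc `D(a)` with `a > 1`,
`g ≠ 0`, and `f/g (z+M) - f/g (z) = ∑_{1≤i≤n, 0≤j<M} a_{ij}/(z+j)^i` for infinitely many
`z ∈ D(a)` where all terms are defined, then all `a_{ij} = 0` and `f/g` is constant. -/
theorem quotient_difference_lemma (p M : ℕ) [Fact p.Prime] (hM : 1 ≤ M) (hpM : ¬ p ∣ M)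
    [NormedField K] [CompleteSpace K] [Algebra ℚ_[p] K]
    (hiso : ∀ x : ℚ_[p], ‖algebraMap ℚ_[p] K x‖ = ‖x‖)
    (ζ : K) (hζ : IsPrimitiveRoot ζ M) (hgen : Algebra.adjoin ℚ_[p] {ζ} = ⊤)
    (a : ℝ) (ha : 1 < a) (f g : ℕ → K) (hf : PSConvOn f a) (hg : PSConvOn g a)
    (hg0 : ∃ m, g m ≠ 0) (n : ℕ) (hn : 1 ≤ n) (A : ℕ → ℕ → K) (S : Set K)
    (hSinf : S.Infinite) (hSa : ∀ z ∈ S, ‖z‖ ≤ a)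
    (hdef : ∀ z ∈ S, evalPS g z ≠ 0 ∧ evalPS g (z + (M : K)) ≠ 0 ∧
      ∀ j : ℕ, j < M → z + (j : K) ≠ 0)
    (heq : ∀ z ∈ S,
      evalPS f (z + (M : K)) / evalPS g (z + (M : K)) - evalPS f z / evalPS g z =
        ∑ i ∈ Finset.Icc 1 n, ∑ j ∈ Finset.range M, A i j / (z + (j : K)) ^ i) :
    (∀ i ∈ Finset.Icc 1 n, ∀ j ∈ Finset.range M, A i j = 0) ∧
    ∃ C : K, ∀ z : K, ‖z‖ ≤ a → evalPS g z ≠ 0 → evalPS f z = C * evalPS g z := by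
  classical
  have hinj : Function.Injective (algebraMap ℚ_[p] K) := (algebraMap ℚ_[p] K).injective
  haveI : CharZero K := charZero_of_injective_algebraMap hinj
  have hnat : ∀ m : ℕ, ‖(m : K)‖ ≤ 1 := by
    intro m
    rw [← map_natCast (algebraMap ℚ_[p] K) m, hiso]
    exact_mod_cast Padic.norm_int_le_one (m : ℤ)
  haveI hUD : IsUltrametricDist K :=
    IsUltrametricDist.isUltrametricDist_of_forall_norm_natCast_le_one hnat
  have hζint : IsIntegral ℚ_[p] ζ := by
    refine ⟨Polynomial.X ^ M - Polynomial.C 1, Polynomial.monic_X_pow_sub_C 1 (by omega), ?_⟩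
    have h1 : ζ ^ M = 1 := hζ.pow_eq_one
    simp [Polynomial.eval₂_sub, h1]
  haveI hmodfin : Module.Finite ℚ_[p] K := by
    have hfg := hζint.fg_adjoin_singleton
    rw [hgen] at hfg
    exact Module.finite_def.mpr (by rwa [Algebra.top_toSubmodule] at hfg)
  letI : NormedSpace ℚ_[p] K :=
    { norm_smul_le := fun x k => by rw [Algebra.smul_def, norm_mul, hiso] }
  haveI hfd : FiniteDimensional ℚ_[p] K := hmodfin
  haveI : ProperSpace K := FiniteDimensional.proper ℚ_[p] K
  have hcpt : IsCompact {z : K | ‖z‖ ≤ a} := by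
    have hset : {z : K | ‖z‖ ≤ a} = Metric.closedBall 0 a := by
      ext z
      simp [Metric.mem_closedBall, dist_zero_right]
    rw [hset]
    exact isCompact_closedBall 0 a
  have ha1 : (1:ℝ) ≤ a := ha.le
  have ha0 : (0:ℝ) < a := by linarith
  set F := evalPS f with hFdef
  set G := evalPS g with hGdef
  have rF : RepOn a F := ⟨f, hf, fun z _ => rfl⟩
  have rG : RepOn a G := ⟨g, hg, fun z _ => rfl⟩
  have hmem_add : ∀ (z : K) (t : ℕ), ‖z‖ ≤ a → ‖z + (t:K)‖ ≤ a := fun z t hz =>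
    le_trans (IsUltrametricDist.norm_add_le_max z _) (max_le hz (le_trans (hnat t) ha1))
  have hgne0 : g ≠ 0 := by
    obtain ⟨m, hm⟩ := hg0
    intro h
    exact hm (congrFun h m)
  have hppos : (1:ℝ) < p := by
    exact_mod_cast (Fact.out : p.Prime).one_lt
  have hpnorm : ‖algebraMap ℚ_[p] K (p:ℚ_[p])‖ < 1 := by
    rw [hiso, Padic.norm_p]
    rw [inv_lt_one_iff₀]
    right
    exact hppos
  have hpne : algebraMap ℚ_[p] K (p:ℚ_[p]) ≠ 0 := by
    rw [map_ne_zero]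
    exact_mod_cast (Fact.out : p.Prime).ne_zero
  have hGne : ∃ z, ‖z‖ ≤ a ∧ G z ≠ 0 := exists_ne_zero ha1 hg hgne0 hpne hpnorm
  have rFshift : ∀ t : ℕ, RepOn a (fun z => F (z + (t:K))) := fun t =>
    RepOn.comp_add ha1 rF (le_trans (hnat t) ha1)
  have rGshift : ∀ t : ℕ, RepOn a (fun z => G (z + (t:K))) := fun t =>
    RepOn.comp_add ha1 rG (le_trans (hnat t) ha1)
  have hGshiftne : ∀ t : ℕ, ∃ z, ‖z‖ ≤ a ∧ G (z + (t:K)) ≠ 0 := by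
    intro t
    obtain ⟨z₂, h1, h2⟩ := hGne
    refine ⟨z₂ - (t:K), le_trans (norm_sub_le_max' _ _) (max_le h1 (le_trans (hnat t) ha1)), ?_⟩
    rw [sub_add_cancel]
    exact h2
  have part1 : ∀ i ∈ Finset.Icc 1 n, ∀ j ∈ Finset.range M, A i j = 0 := by
    by_contra hA
    push_neg at hA
    obtain ⟨i₁, hi₁, j₁, hj₁, hAne⟩ := hA
    set T := (Finset.Icc 1 n).filter (fun i => ∃ j ∈ Finset.range M, A i j ≠ 0) with hT
    have hTne : T.Nonempty := ⟨i₁, Finset.mem_filter.mpr ⟨hi₁, j₁, hj₁, hAne⟩⟩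
    set e := T.max' hTne with he
    have heT : e ∈ T := T.max'_mem hTne
    have he1 : e ∈ Finset.Icc 1 n := (Finset.mem_filter.mp heT).1
    obtain ⟨j₀, hj₀M, hj₀⟩ := (Finset.mem_filter.mp heT).2
    have he1' : 1 ≤ e := (Finset.mem_Icc.mp he1).1
    have hen : e ≤ n := (Finset.mem_Icc.mp he1).2
    have hmax : ∀ i ∈ Finset.Icc 1 n, e < i → ∀ j ∈ Finset.range M, A i j = 0 := by
      intro i hi hlt j hj
      by_contra hne
      exact absurd (T.le_max' i (Finset.mem_filter.mpr ⟨hi, j, hj, hne⟩)) (not_le.mpr hlt)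
    set Pf : K → K := fun z => ∏ j ∈ Finset.range M, (z + (j:K)) ^ e with hPf
    set Qf : K → K := fun z => ∑ i ∈ Finset.Icc 1 e, ∑ j ∈ Finset.range M,
      A i j * (z + (j:K)) ^ (e - i) * ∏ j' ∈ (Finset.range M).erase j, (z + (j':K)) ^ e with hQf
    have rlin : ∀ j : ℕ, RepOn a (fun z : K => z + (j:K)) := fun j =>
      RepOn.add ha1 (RepOn.id a) (RepOn.const a ((j:K)))
    have rPf : RepOn a Pf :=
      RepOn.prod ha1 (Finset.range M) (fun j z => (z + (j:K)) ^ e)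
        (fun j _ => RepOn.pow ha1 (rlin j) e)
    have rQf : RepOn a Qf := by
      refine RepOn.sum ha1 (Finset.Icc 1 e)
        (fun i z => ∑ j ∈ Finset.range M, A i j * (z + (j:K)) ^ (e - i) *
          ∏ j' ∈ (Finset.range M).erase j, (z + (j':K)) ^ e) (fun i _ => ?_)
      refine RepOn.sum ha1 (Finset.range M)
        (fun j z => A i j * (z + (j:K)) ^ (e - i) *
          ∏ j' ∈ (Finset.range M).erase j, (z + (j':K)) ^ e) (fun j _ => ?_)
      exact RepOn.mul ha1 (RepOn.mul ha1 (RepOn.const a (A i j))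
        (RepOn.pow ha1 (rlin j) (e - i)))
        (RepOn.prod ha1 ((Finset.range M).erase j) (fun j' z => (z + (j':K)) ^ e)
          (fun j' _ => RepOn.pow ha1 (rlin j') e))
    have rstar : RepOn a (fun z => (F (z + (M:K)) * G z - F z * G (z + (M:K))) * Pf z
        - G z * G (z + (M:K)) * Qf z) := by
      have h1 := RepOn.mul ha1 (RepOn.sub ha0 (RepOn.mul ha1 (rFshift M) rG)
        (RepOn.mul ha1 rF (rGshift M))) rPf
      have h2 := RepOn.mul ha1 (RepOn.mul ha1 rG (rGshift M)) rQf
      exact RepOn.sub ha0 h1 h2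
    have star : ∀ z, ‖z‖ ≤ a → (F (z + (M:K)) * G z - F z * G (z + (M:K))) * Pf z
        = G z * G (z + (M:K)) * Qf z := by
      have hvan : ∀ z ∈ S, (F (z + (M:K)) * G z - F z * G (z + (M:K))) * Pf z
          - G z * G (z + (M:K)) * Qf z = 0 := by
        intro z hz
        obtain ⟨hgz, hgM, hjz⟩ := hdef z hz
        have h := heq z hz
        rw [div_sub_div _ _ hgM hgz, div_eq_iff (mul_ne_zero hgM hgz)] at h
        have h2 : (∑ i ∈ Finset.Icc 1 n, ∑ j ∈ Finset.range M, A i j / (z + (j:K)) ^ i)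
            = ∑ i ∈ Finset.Icc 1 e, ∑ j ∈ Finset.range M, A i j / (z + (j:K)) ^ i := by
          refine (Finset.sum_subset (Finset.Icc_subset_Icc le_rfl hen) ?_).symm
          intro i hi hni
          refine Finset.sum_eq_zero fun j hj => ?_
          have h4 : ¬ (1 ≤ i ∧ i ≤ e) := by simpa [Finset.mem_Icc] using hni
          have h3 := Finset.mem_Icc.mp hi
          have hei : e < i := by omega
          rw [hmax i hi hei j hj, zero_div]
        rw [h2] at h
        have h3 : (∑ i ∈ Finset.Icc 1 e, ∑ j ∈ Finset.range M, A i j / (z + (j:K)) ^ i) * Pf z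
            = Qf z := by
          rw [Finset.sum_mul]
          refine Finset.sum_congr rfl fun i hi => ?_
          rw [Finset.sum_mul]
          refine Finset.sum_congr rfl fun j hj => ?_
          have hzj : z + (j:K) ≠ 0 := hjz j (Finset.mem_range.mp hj)
          have hie : i ≤ e := (Finset.mem_Icc.mp hi).2
          simp only [hPf]
          rw [← Finset.mul_prod_erase _ _ hj]
          rw [show (z + (j:K))^e = (z+(j:K))^i * (z+(j:K))^(e-i) by
            rw [← pow_add]; congr 1; omega]
          field_simp
        linear_combination Pf z * h + G z * G (z + (M:K)) * h3
      intro z hz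
      have hres := idthm ha1 hcpt rstar hSinf hSa hvan z hz
      linear_combination hres
    have rPfshift : ∀ t : ℕ, RepOn a (fun z => Pf (z + (t:K))) := fun t =>
      RepOn.comp_add ha1 rPf (le_trans (hnat t) ha1)
    have rQfshift : ∀ t : ℕ, RepOn a (fun z => Qf (z + (t:K))) := fun t =>
      RepOn.comp_add ha1 rQf (le_trans (hnat t) ha1)
    have rPk : ∀ k : ℕ, RepOn a (fun z => ∏ l ∈ Finset.range k, Pf (z + ((l*M:ℕ):K))) :=
      fun k => RepOn.prod ha1 (Finset.range k) (fun l z => Pf (z + ((l*M:ℕ):K)))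
        (fun l _ => rPfshift (l*M))
    have rQk : ∀ k : ℕ, RepOn a (fun z => ∑ l ∈ Finset.range k, Qf (z + ((l*M:ℕ):K)) *
        ∏ l' ∈ (Finset.range k).erase l, Pf (z + ((l'*M:ℕ):K))) := fun k =>
      RepOn.sum ha1 (Finset.range k) (fun l z => Qf (z + ((l*M:ℕ):K)) *
          ∏ l' ∈ (Finset.range k).erase l, Pf (z + ((l'*M:ℕ):K)))
        (fun l _ => RepOn.mul ha1 (rQfshift (l*M))
          (RepOn.prod ha1 ((Finset.range k).erase l) (fun l' z => Pf (z + ((l'*M:ℕ):K)))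
            (fun l' _ => rPfshift (l'*M))))
    have Ik : ∀ k, ∀ z, ‖z‖ ≤ a →
        (F (z + ((k*M:ℕ):K)) * G z - F z * G (z + ((k*M:ℕ):K)))
          * ∏ l ∈ Finset.range k, Pf (z + ((l*M:ℕ):K))
        = G z * G (z + ((k*M:ℕ):K)) * ∑ l ∈ Finset.range k, Qf (z + ((l*M:ℕ):K)) *
            ∏ l' ∈ (Finset.range k).erase l, Pf (z + ((l'*M:ℕ):K)) := by
      intro k
      induction k with
      | zero => intro z hz; simp
      | succ k ih =>
          have rΔ : RepOn a (fun z =>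
              (F (z + (((k+1)*M:ℕ):K)) * G z - F z * G (z + (((k+1)*M:ℕ):K)))
                * ∏ l ∈ Finset.range (k+1), Pf (z + ((l*M:ℕ):K))
              - G z * G (z + (((k+1)*M:ℕ):K)) * ∑ l ∈ Finset.range (k+1),
                  Qf (z + ((l*M:ℕ):K)) *
                  ∏ l' ∈ (Finset.range (k+1)).erase l, Pf (z + ((l'*M:ℕ):K))) :=
            RepOn.sub ha0 (RepOn.mul ha1 (RepOn.sub ha0
              (RepOn.mul ha1 (rFshift ((k+1)*M)) rG)
              (RepOn.mul ha1 rF (rGshift ((k+1)*M)))) (rPk (k+1)))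
              (RepOn.mul ha1 (RepOn.mul ha1 rG (rGshift ((k+1)*M))) (rQk (k+1)))
          have hmul0 : ∀ z, ‖z‖ ≤ a → G (z + ((k*M:ℕ):K)) *
              ((F (z + (((k+1)*M:ℕ):K)) * G z - F z * G (z + (((k+1)*M:ℕ):K)))
                * ∏ l ∈ Finset.range (k+1), Pf (z + ((l*M:ℕ):K))
              - G z * G (z + (((k+1)*M:ℕ):K)) * ∑ l ∈ Finset.range (k+1),
                  Qf (z + ((l*M:ℕ):K)) *
                  ∏ l' ∈ (Finset.range (k+1)).erase l, Pf (z + ((l'*M:ℕ):K))) = 0 := by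
            intro z hz
            have h1 := ih z hz
            have h2 := star (z + ((k*M:ℕ):K)) (hmem_add z _ hz)
            rw [show z + ((k*M:ℕ):K) + (M:K) = z + (((k+1)*M:ℕ):K) by push_cast; ring] at h2
            have hP : (∏ l ∈ Finset.range (k+1), Pf (z + ((l*M:ℕ):K)))
                = (∏ l ∈ Finset.range k, Pf (z + ((l*M:ℕ):K))) * Pf (z + ((k*M:ℕ):K)) :=
              Finset.prod_range_succ _ _
            have hQ : (∑ l ∈ Finset.range (k+1), Qf (z + ((l*M:ℕ):K)) *
                  ∏ l' ∈ (Finset.range (k+1)).erase l, Pf (z + ((l'*M:ℕ):K)))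
                = (∑ l ∈ Finset.range k, Qf (z + ((l*M:ℕ):K)) *
                    ∏ l' ∈ (Finset.range k).erase l, Pf (z + ((l'*M:ℕ):K)))
                    * Pf (z + ((k*M:ℕ):K))
                  + Qf (z + ((k*M:ℕ):K)) * ∏ l ∈ Finset.range k, Pf (z + ((l*M:ℕ):K)) := by
              rw [Finset.sum_range_succ]
              congr 1
              · rw [Finset.sum_mul]
                refine Finset.sum_congr rfl fun l hl => ?_
                have hlk : l ≠ k := by
                  have := Finset.mem_range.mp hl; omega
                rw [Finset.range_add_one, Finset.erase_insert_of_ne (Ne.symm hlk),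
                  Finset.prod_insert (by simp)]
                ring
              · rw [Finset.range_add_one, Finset.erase_insert (by simp)]
            rw [hP, hQ]
            linear_combination (G (z + (((k+1)*M:ℕ):K)) * Pf (z + ((k*M:ℕ):K))) * h1
              + (G z * ∏ l ∈ Finset.range k, Pf (z + ((l*M:ℕ):K))) * h2
          have hzero := eq_zero_on_of_mul ha1 hcpt (rGshift (k*M)) rΔ (hGshiftne (k*M)) hmul0
          intro z hz
          have hres := hzero z hz
          rw [sub_eq_zero] at hres
          exact hres
    have hZfin : {z : K | ‖z‖ ≤ a ∧ G z = 0}.Finite := by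
      by_contra hinf
      obtain ⟨z₂, hz₂, hz₂'⟩ := hGne
      exact hz₂' (idthm ha1 hcpt rG hinf (fun z hz => hz.1) (fun z hz => hz.2) z₂ hz₂)
    set k₀ := hZfin.toFinset.card + 1 with hk₀def
    set w : ℕ → K := fun l => -(j₀:K) - ((l*M:ℕ):K) with hw
    have hwB : ∀ l, ‖w l‖ ≤ a := by
      intro l
      have hwl : w l = -(((j₀ + l*M : ℕ)):K) := by simp only [hw]; push_cast; ring
      rw [hwl, norm_neg]
      exact le_trans (hnat _) ha1
    have hj₀lt : j₀ < M := Finset.mem_range.mp hj₀M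
    have hPfj0 : Pf (-(j₀:K)) = 0 := by
      simp only [hPf]
      refine Finset.prod_eq_zero hj₀M ?_
      rw [show -(j₀:K) + (j₀:K) = 0 by ring]
      exact zero_pow (by omega)
    have hwshift : ∀ l : ℕ, w l + ((l*M:ℕ):K) = -(j₀:K) := by
      intro l; simp only [hw]; push_cast; ring
    have hQfval : Qf (-(j₀:K))
        = A e j₀ * ∏ j' ∈ (Finset.range M).erase j₀, (-(j₀:K) + (j':K)) ^ e := by
      simp only [hQf]
      have houter : ∀ i ∈ Finset.Icc 1 e, i ≠ e → (∑ j ∈ Finset.range M,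
          A i j * (-(j₀:K) + (j:K)) ^ (e - i) *
          ∏ j' ∈ (Finset.range M).erase j, (-(j₀:K) + (j':K)) ^ e) = 0 := by
        intro i hi hie
        refine Finset.sum_eq_zero fun j hj => ?_
        rcases eq_or_ne j j₀ with rfl | hjj
        · have hilt : i < e := lt_of_le_of_ne (Finset.mem_Icc.mp hi).2 hie
          rw [show -(j:K) + (j:K) = 0 by ring, zero_pow (by omega), mul_zero, zero_mul]
        · refine mul_eq_zero_of_right _ (Finset.prod_eq_zero
            (Finset.mem_erase.mpr ⟨Ne.symm hjj, hj₀M⟩) ?_)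
          rw [show -(j₀:K) + (j₀:K) = 0 by ring]
          exact zero_pow (by omega)
      rw [Finset.sum_eq_single_of_mem e (Finset.mem_Icc.mpr ⟨he1', le_rfl⟩) houter]
      have hinner : ∀ b ∈ Finset.range M, b ≠ j₀ → A e b * (-(j₀:K) + (b:K)) ^ (e - e) *
          ∏ j' ∈ (Finset.range M).erase b, (-(j₀:K) + (j':K)) ^ e = 0 := by
        intro b hb hbj
        refine mul_eq_zero_of_right _ (Finset.prod_eq_zero
          (Finset.mem_erase.mpr ⟨Ne.symm hbj, hj₀M⟩) ?_)
        rw [show -(j₀:K) + (j₀:K) = 0 by ring]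
        exact zero_pow (by omega)
      rw [Finset.sum_eq_single_of_mem j₀ hj₀M hinner]
      rw [show e - e = 0 by omega, pow_zero, mul_one]
    have hQfne : Qf (-(j₀:K)) ≠ 0 := by
      rw [hQfval]
      refine mul_ne_zero hj₀ (Finset.prod_ne_zero_iff.mpr fun j' hj' => pow_ne_zero _ ?_)
      have h1 : j' ≠ j₀ := (Finset.mem_erase.mp hj').1
      intro hcontra
      apply h1
      have h2 : (j' : K) = (j₀ : K) := by linear_combination hcontra
      exact_mod_cast h2
    have key : ∀ l, l < k₀ → G (w l) = 0 ∨ G (w l + ((k₀*M:ℕ):K)) = 0 := by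
      intro l hl
      have hIk := Ik k₀ (w l) (hwB l)
      have hPk0 : (∏ l' ∈ Finset.range k₀, Pf (w l + ((l'*M:ℕ):K))) = 0 := by
        refine Finset.prod_eq_zero (Finset.mem_range.mpr hl) ?_
        rw [hwshift l]
        exact hPfj0
      rw [hPk0, mul_zero] at hIk
      have hside : ∀ b ∈ Finset.range k₀, b ≠ l → Qf (w l + ((b*M:ℕ):K)) *
          ∏ l'' ∈ (Finset.range k₀).erase b, Pf (w l + ((l''*M:ℕ):K)) = 0 := by
        intro b hb hbl
        refine mul_eq_zero_of_right _ (Finset.prod_eq_zero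
          (Finset.mem_erase.mpr ⟨Ne.symm hbl, Finset.mem_range.mpr hl⟩) ?_)
        rw [hwshift l]
        exact hPfj0
      have hQval : (∑ l' ∈ Finset.range k₀, Qf (w l + ((l'*M:ℕ):K)) *
          ∏ l'' ∈ (Finset.range k₀).erase l', Pf (w l + ((l''*M:ℕ):K)))
          = Qf (-(j₀:K)) * ∏ l' ∈ (Finset.range k₀).erase l, Pf (w l + ((l'*M:ℕ):K)) := by
        rw [Finset.sum_eq_single_of_mem l (Finset.mem_range.mpr hl) hside, hwshift l]
      have hProdne : (∏ l' ∈ (Finset.range k₀).erase l, Pf (w l + ((l'*M:ℕ):K))) ≠ 0 := by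
        refine Finset.prod_ne_zero_iff.mpr fun l' hl' => ?_
        have hll : l' ≠ l := (Finset.mem_erase.mp hl').1
        simp only [hPf]
        refine Finset.prod_ne_zero_iff.mpr fun j hj => pow_ne_zero _ ?_
        intro hcontra
        simp only [hw] at hcontra
        push_cast at hcontra
        have hzint : ((j:ℤ) - (j₀:ℤ) + ((l':ℤ) - (l:ℤ)) * (M:ℤ) : ℤ) = 0 := by
          have hcast : (((j:ℤ) - (j₀:ℤ) + ((l':ℤ) - (l:ℤ)) * (M:ℤ) : ℤ) : K) = 0 := by
            push_cast
            linear_combination hcontra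
          exact_mod_cast hcast
        have hjM : (j:ℤ) < M := by exact_mod_cast Finset.mem_range.mp hj
        have hj₀M' : (j₀:ℤ) < M := by exact_mod_cast hj₀lt
        have hj0 : (0:ℤ) ≤ (j:ℤ) := by positivity
        have hj₀0 : (0:ℤ) ≤ (j₀:ℤ) := by positivity
        have htne : (l':ℤ) - (l:ℤ) ≠ 0 := sub_ne_zero.mpr (by exact_mod_cast hll)
        rcases lt_or_gt_of_ne htne with hcase | hcase
        · have hb : ((l':ℤ) - (l:ℤ)) * (M:ℤ) ≤ -1 * (M:ℤ) :=
            mul_le_mul_of_nonneg_right (by omega) (by omega)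
          linarith
        · have hb : 1 * (M:ℤ) ≤ ((l':ℤ) - (l:ℤ)) * (M:ℤ) :=
            mul_le_mul_of_nonneg_right (by omega) (by omega)
          linarith
      rw [hQval] at hIk
      have hQprodne := mul_ne_zero hQfne hProdne
      rcases mul_eq_zero.mp hIk.symm with h | h
      · rcases mul_eq_zero.mp h with h' | h'
        · exact Or.inl h'
        · exact Or.inr h'
      · exact absurd h hQprodne
    have hcard : k₀ ≤ hZfin.toFinset.card := by
      have hMpos : 0 < M := by omega
      have hmapsto : ∀ l ∈ Finset.range k₀,
          (if G (w l) = 0 then w l else w l + ((k₀*M:ℕ):K)) ∈ hZfin.toFinset := by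
        intro l hl
        rw [Set.Finite.mem_toFinset]
        by_cases h0 : G (w l) = 0
        · rw [if_pos h0]; exact ⟨hwB l, h0⟩
        · rw [if_neg h0]
          rcases key l (Finset.mem_range.mp hl) with h | h
          · exact absurd h h0
          · exact ⟨hmem_add _ _ (hwB l), h⟩
      have hinjOn : Set.InjOn (fun l => if G (w l) = 0 then w l else w l + ((k₀*M:ℕ):K))
          (Finset.range k₀ : Finset ℕ) := by
        intro l1 hl1 l2 hl2 heq'
        simp only [Finset.coe_range, Set.mem_Iio] at hl1 hl2
        simp only at heq'
        by_cases h1 : G (w l1) = 0 <;> by_cases h2 : G (w l2) = 0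
        · rw [if_pos h1, if_pos h2] at heq'
          have hc : ((l1*M:ℕ):K) = ((l2*M:ℕ):K) := by
            simp only [hw] at heq'
            linear_combination -heq'
          exact Nat.eq_of_mul_eq_mul_right hMpos (Nat.cast_injective hc)
        · rw [if_pos h1, if_neg h2] at heq'
          exfalso
          have hc : ((l2*M:ℕ):K) = ((l1*M + k₀*M:ℕ):K) := by
            simp only [hw] at heq'
            push_cast
            push_cast at heq'
            linear_combination heq'
          have hceq := Nat.cast_injective hc
          have h3 : k₀*M ≤ l2*M := by omega
          have := Nat.le_of_mul_le_mul_right h3 hMpos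
          omega
        · rw [if_neg h1, if_pos h2] at heq'
          exfalso
          have hc : ((l1*M:ℕ):K) = ((l2*M + k₀*M:ℕ):K) := by
            simp only [hw] at heq'
            push_cast
            push_cast at heq'
            linear_combination -heq'
          have hceq := Nat.cast_injective hc
          have h3 : k₀*M ≤ l1*M := by omega
          have := Nat.le_of_mul_le_mul_right h3 hMpos
          omega
        · rw [if_neg h1, if_neg h2] at heq'
          have hc : ((l1*M:ℕ):K) = ((l2*M:ℕ):K) := by
            simp only [hw] at heq'
            push_cast
            push_cast at heq'
            linear_combination -heq'
          exact Nat.eq_of_mul_eq_mul_right hMpos (Nat.cast_injective hc)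
      have hfin := Finset.card_le_card_of_injOn _ hmapsto hinjOn
      rwa [Finset.card_range] at hfin
    omega
  refine ⟨part1, ?_⟩
  have rD : RepOn a (fun z => F (z + (M:K)) * G z - F z * G (z + (M:K))) := by
    have h1 := RepOn.mul ha1 (rFshift M) rG
    have h2 := RepOn.mul ha1 rF (rGshift M)
    exact RepOn.sub ha0 h1 h2
  have hD0 : ∀ z, ‖z‖ ≤ a → F (z + (M:K)) * G z - F z * G (z + (M:K)) = 0 := by
    refine idthm ha1 hcpt rD hSinf hSa ?_
    intro z hz
    obtain ⟨hgz, hgM, hjz⟩ := hdef z hz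
    have h := heq z hz
    have hz0 : (∑ i ∈ Finset.Icc 1 n, ∑ j ∈ Finset.range M, A i j / (z + (j:K)) ^ i) = 0 := by
      refine Finset.sum_eq_zero fun i hi => Finset.sum_eq_zero fun j hj => ?_
      rw [part1 i hi j hj, zero_div]
    rw [hz0, sub_eq_zero, div_eq_div_iff hgM hgz] at h
    rw [show F (z + (M:K)) * G z = F (z + (M:K)) * G z from rfl]
    linear_combination h
  have Ck : ∀ k z, ‖z‖ ≤ a → F (z + ((k*M:ℕ):K)) * G z = F z * G (z + ((k*M:ℕ):K)) := by
    intro k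
    induction k with
    | zero => intro z hz; norm_num
    | succ k ih =>
        have rΔ : RepOn a (fun z => F (z + (((k+1)*M:ℕ):K)) * G z
            - F z * G (z + (((k+1)*M:ℕ):K))) := by
          have h1 := RepOn.mul ha1 (rFshift ((k+1)*M)) rG
          have h2 := RepOn.mul ha1 rF (rGshift ((k+1)*M))
          exact RepOn.sub ha0 h1 h2
        have hmul0 : ∀ z, ‖z‖ ≤ a → G (z + ((k*M:ℕ):K)) * (F (z + (((k+1)*M:ℕ):K)) * G z
            - F z * G (z + (((k+1)*M:ℕ):K))) = 0 := by
          intro z hz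
          have h1 := ih z hz
          have h2 := hD0 (z + ((k*M:ℕ):K)) (hmem_add z _ hz)
          rw [show z + ((k*M:ℕ):K) + (M:K) = z + (((k+1)*M:ℕ):K) by push_cast; ring] at h2
          linear_combination G z * h2 + G (z + (((k+1)*M:ℕ):K)) * h1
        have hzero := eq_zero_on_of_mul ha1 hcpt (rGshift (k*M)) rΔ (hGshiftne (k*M)) hmul0
        intro z hz
        have := hzero z hz
        rw [sub_eq_zero] at this
        exact this
  obtain ⟨z₁, hz₁a, hz₁⟩ := hGne
  refine ⟨F z₁ / G z₁, ?_⟩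
  have rW : RepOn a (fun z => F z * G z₁ - F z₁ * G z) := by
    have h1 := RepOn.mul ha1 rF (RepOn.const a (G z₁))
    have h2 := RepOn.mul ha1 (RepOn.const a (F z₁)) rG
    exact RepOn.sub ha0 h1 h2
  have hWinj : Function.Injective (fun k : ℕ => z₁ + ((k*M:ℕ):K)) := by
    intro k1 k2 hk
    simp only [add_right_inj, Nat.cast_inj] at hk
    exact Nat.eq_of_mul_eq_mul_right (by omega) hk
  have hW : ∀ z, ‖z‖ ≤ a → F z * G z₁ - F z₁ * G z = 0 := by
    refine idthm ha1 hcpt rW (Set.infinite_range_of_injective hWinj) ?_ ?_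
    · rintro _ ⟨k, rfl⟩
      exact hmem_add z₁ _ hz₁a
    · rintro _ ⟨k, rfl⟩
      have := Ck k z₁ hz₁a
      simp only
      linear_combination this
  intro z hza' hgz
  have hWz := hW z hza'
  rw [div_mul_eq_mul_div, eq_div_iff hz₁]
  linear_combination hWz

end
end

section
/- For any two pairs of tuples (s,i) and (t,j) (with entries as in the definition of σ_p), the pointwise product σ_p(s;i)·σ_p(t;j) : ℕ → K is a finite linear combination, with non-negative integer coefficients, of functions σ_p(u;v). Consequently, the ℤ-span of the functions {σ_p(u;v)} inside the K-algebra of functions ℕ → K is closed under pointwise multiplication. -/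
open Filter

noncomputable section

variable {K : Type*}

open scoped Classical in
/-- The cyclotomic `p`-adic iterated sum series `σ(s;i;m)(n)`: the sum of
`ζ^(i₁n₁+⋯+iₖnₖ)/(n₁^{s₁}⋯nₖ^{sₖ})` over all tuples `0 < n₁ < ⋯ < nₖ < n`
with `p ∣ nⱼ - mⱼ` for every `j`. -/
def cycSum (p : ℕ) [Field K] (ζ : K) {k : ℕ} (s i m : Fin k → ℕ) (n : ℕ) : K :=
  ∑ t ∈ (Fintype.piFinset fun _ : Fin k => Finset.Ioo 0 n).filter
      (fun t : Fin k → ℕ => StrictMono t ∧ ∀ j, (p : ℤ) ∣ ((t j : ℤ) - (m j : ℤ))),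
    ∏ j, ζ ^ (i j * t j) / (t j : K) ^ (s j)

/-- `σ_p(s;i) = σ(s;i;0)`. -/
def sigmaP (p : ℕ) [Field K] (ζ : K) {k : ℕ} (s i : Fin k → ℕ) : ℕ → K :=
  cycSum p ζ s i fun _ => 0

/-- The index set of all pairs of tuples `(s, i)` with `s` a tuple of naturals and
`i` a tuple of residues mod `M`, of a common length `k ≥ 0`. -/
def SIdx (M : ℕ) : Type := Σ k : ℕ, (Fin k → ℕ) × (Fin k → Fin M)

/-- The function `σ_p(s;i)` attached to an index `u = (s, i)`. -/
def sigmaPIdx (p M : ℕ) [Field K] (ζ : K) (u : SIdx M) : ℕ → K :=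
  sigmaP p ζ u.2.1 fun j => ((u.2.2 j : ℕ))

/-- `t ≤ s` for tuples: there is a strictly increasing reindexing `j` with `tₐ ≤ s_{j(a)}`. -/
def TupleLE {l k : ℕ} (t : Fin l → ℕ) (s : Fin k → ℕ) : Prop :=
  ∃ j : Fin l → Fin k, StrictMono j ∧ ∀ a, t a ≤ s (j a)

section AuxShuffle

variable [Field K]

lemma sigmaPIdx_eq (p M : ℕ) (ζ : K) (u : SIdx M) :
    sigmaPIdx p M ζ u = sigmaP p ζ u.2.1 fun j => ((u.2.2 j : ℕ)) := rfl

lemma sigmaP_nil (p : ℕ) (ζ : K) (s i : Fin 0 → ℕ) (n : ℕ) :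
    sigmaP p ζ s i n = 1 := by
  classical
  simp [sigmaP, cycSum, Finset.filter_true_of_mem, fun t : Fin 0 → ℕ => Subsingleton.strictMono t]

lemma sigmaP_snoc (p : ℕ) (ζ : K) {k : ℕ} (s i : Fin k → ℕ) (d e : ℕ) (n : ℕ) :
    sigmaP p ζ (Fin.snoc s d) (Fin.snoc i e) n =
      ∑ a ∈ (Finset.Ioo 0 n).filter (fun a : ℕ => (p:ℤ) ∣ (a:ℤ)),
        ζ ^ (e * a) / (a:K) ^ d * sigmaP p ζ s i a := by
  classical
  simp only [sigmaP, cycSum, Finset.mul_sum]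
  rw [Finset.sum_sigma']
  refine Finset.sum_bij' (fun t _ => ⟨t (Fin.last k), Fin.init t⟩) (fun x _ => Fin.snoc x.2 x.1)
    ?_ ?_ ?_ ?_ ?_
  · rintro t ht
    simp only [Finset.mem_sigma, Finset.mem_filter, Fintype.mem_piFinset, Finset.mem_Ioo] at ht ⊢
    obtain ⟨htmem, htsm, htdiv⟩ := ht
    refine ⟨⟨htmem _, by simpa using htdiv (Fin.last k)⟩, fun j => ⟨(htmem _).1,
      htsm (Fin.castSucc_lt_last j)⟩, fun a b hab => htsm (by exact_mod_cast hab), fun j => by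
      simpa [Fin.init] using htdiv j.castSucc⟩
  · rintro ⟨a, t⟩ hx
    simp only [Finset.mem_sigma, Finset.mem_filter, Fintype.mem_piFinset, Finset.mem_Ioo] at hx ⊢
    obtain ⟨⟨ha, hdiva⟩, ⟨htmem, htsm, htdiv⟩⟩ := hx
    refine ⟨fun j => ?_, ?_, fun j => ?_⟩
    · refine Fin.lastCases ?_ (fun j => ?_) j
      · simpa using ha
      · simp only [Fin.snoc_castSucc]
        exact ⟨(htmem j).1, (htmem j).2.trans ha.2⟩
    · rw [Fin.strictMono_iff_lt_succ]
      intro j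
      rcases Fin.eq_castSucc_or_eq_last j.succ with ⟨j', hj'⟩ | hj'
      · rw [hj', Fin.snoc_castSucc, Fin.snoc_castSucc]
        refine htsm ?_
        rw [← Fin.castSucc_lt_castSucc_iff, ← hj']
        exact Fin.castSucc_lt_succ
      · rw [hj', Fin.snoc_castSucc, Fin.snoc_last]
        exact (htmem j).2
    · refine Fin.lastCases ?_ (fun j' => ?_) j
      · simpa using hdiva
      · simpa using htdiv j'
  · intro t ht
    exact Fin.snoc_init_self t
  · rintro ⟨a, t⟩ hx
    refine Sigma.ext (by simp) (heq_of_eq ?_)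
    simp
  · intro t ht
    rw [Fin.prod_univ_castSucc]
    simp only [Fin.snoc_castSucc, Fin.snoc_last, Fin.init]
    rw [mul_comm]

lemma zeta_pow_mod {M : ℕ} {ζ : K} (hζM : ζ ^ M = 1) (e a : ℕ) :
    ζ ^ (e * a) = ζ ^ (e % M * a) := by
  conv_lhs => rw [← Nat.div_add_mod e M]
  rw [add_mul, pow_add, mul_assoc, pow_mul, hζM, one_pow, one_mul]

lemma sigmaP_mod {M : ℕ} {ζ : K} (hζM : ζ ^ M = 1) (p : ℕ) {k : ℕ} (s i : Fin k → ℕ) :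
    sigmaP p ζ s i = sigmaP p ζ s (fun j => i j % M) := by
  funext n
  simp only [sigmaP, cycSum]
  exact Finset.sum_congr rfl fun t _ => Finset.prod_congr rfl fun j _ => by
    rw [zeta_pow_mod hζM]

/-- `F` is a finite non-negative-integer combination of the `sigmaPIdx` functions. -/
def GoodComb (p M : ℕ) [Field K] (ζ : K) (F : ℕ → K) : Prop :=
  ∃ c : SIdx M →₀ ℕ, ∀ n, F n = c.sum fun u m => (m : K) * sigmaPIdx p M ζ u n

variable {p M : ℕ} {ζ : K}

lemma GoodComb.congr {F G : ℕ → K} (h : GoodComb p M ζ F)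
    (hFG : ∀ n, G n = F n) : GoodComb p M ζ G := by
  obtain ⟨c, hc⟩ := h
  exact ⟨c, fun n => (hFG n).trans (hc n)⟩

lemma GoodComb.add {F G : ℕ → K} (hF : GoodComb p M ζ F) (hG : GoodComb p M ζ G) :
    GoodComb p M ζ (fun n => F n + G n) := by
  obtain ⟨c₁, h₁⟩ := hF
  obtain ⟨c₂, h₂⟩ := hG
  refine ⟨c₁ + c₂, fun n => ?_⟩
  show F n + G n = _
  rw [Finsupp.sum_add_index' (fun u => by simp) (fun u m₁ m₂ => by push_cast; ring),
    h₁, h₂]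

lemma goodComb_sigmaPIdx (u : SIdx M) : GoodComb p M ζ (sigmaPIdx p M ζ u) :=
  ⟨Finsupp.single u 1, fun n => by rw [Finsupp.sum_single_index (by simp)]; simp⟩

lemma goodComb_sigmaP (hM : 0 < M) (hζM : ζ ^ M = 1) {k : ℕ} (s i : Fin k → ℕ) :
    GoodComb p M ζ (sigmaP p ζ s i) := by
  refine (goodComb_sigmaPIdx (p := p)
    ⟨k, (s, fun j => ⟨i j % M, Nat.mod_lt _ hM⟩)⟩).congr fun n => ?_
  rw [sigmaP_mod hζM p s i]
  rfl

lemma GoodComb.append (hM : 0 < M) (hζM : ζ ^ M = 1) {F : ℕ → K}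
    (h : GoodComb p M ζ F) (d e : ℕ) :
    GoodComb p M ζ (fun n => ∑ a ∈ (Finset.Ioo 0 n).filter (fun a : ℕ => (p:ℤ) ∣ (a:ℤ)),
      ζ ^ (e * a) / (a:K) ^ d * F a) := by
  classical
  obtain ⟨c, hc⟩ := h
  set φ : SIdx M → SIdx M :=
    fun u => ⟨u.1 + 1, (Fin.snoc u.2.1 d, Fin.snoc u.2.2 ⟨e % M, Nat.mod_lt _ hM⟩)⟩ with hφdef
  refine ⟨Finsupp.mapDomain φ c, fun n => ?_⟩
  rw [Finsupp.sum_mapDomain_index (fun u => by simp)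
    (fun u m₁ m₂ => by push_cast; ring)]
  have hφ : ∀ u : SIdx M, sigmaPIdx p M ζ (φ u) n
      = ∑ a ∈ (Finset.Ioo 0 n).filter (fun a : ℕ => (p:ℤ) ∣ (a:ℤ)),
          ζ ^ (e * a) / (a:K) ^ d * sigmaPIdx p M ζ u a := by
    intro u
    have hcoe : (fun j => ((Fin.snoc u.2.2 ⟨e % M, Nat.mod_lt _ hM⟩ : Fin (u.1+1) → Fin M) j : ℕ))
        = Fin.snoc (fun j => (u.2.2 j : ℕ)) (e % M) := by
      funext j
      refine Fin.lastCases ?_ (fun j' => ?_) j <;> simp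
    have h1 : sigmaPIdx p M ζ (φ u) n
        = sigmaP p ζ (Fin.snoc u.2.1 d) (Fin.snoc (fun j => ((u.2.2 j : ℕ))) (e % M)) n :=
      congrArg (fun v : Fin (u.1+1) → ℕ => sigmaP p ζ (Fin.snoc u.2.1 d) v n) hcoe
    rw [h1, sigmaP_snoc]
    refine Finset.sum_congr rfl fun a _ => ?_
    rw [← zeta_pow_mod hζM]
    rfl
  rw [Finsupp.sum]
  calc (∑ a ∈ (Finset.Ioo 0 n).filter (fun a : ℕ => (p:ℤ) ∣ (a:ℤ)),
        ζ ^ (e * a) / (a:K) ^ d * F a)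
      = ∑ a ∈ (Finset.Ioo 0 n).filter (fun a : ℕ => (p:ℤ) ∣ (a:ℤ)),
          ∑ u ∈ c.support, (c u : K) * (ζ ^ (e * a) / (a:K) ^ d * sigmaPIdx p M ζ u a) := by
        refine Finset.sum_congr rfl fun a _ => ?_
        rw [hc a, Finsupp.sum, Finset.mul_sum]
        exact Finset.sum_congr rfl fun u _ => by ring
    _ = ∑ u ∈ c.support, ∑ a ∈ (Finset.Ioo 0 n).filter (fun a : ℕ => (p:ℤ) ∣ (a:ℤ)),
          (c u : K) * (ζ ^ (e * a) / (a:K) ^ d * sigmaPIdx p M ζ u a) := Finset.sum_comm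
    _ = ∑ u ∈ c.support, (c u : K) * sigmaPIdx p M ζ (φ u) n := by
        refine Finset.sum_congr rfl fun u _ => ?_
        rw [hφ u, Finset.mul_sum]

lemma sum_split {A : Finset ℕ} (f : ℕ → K) {a : ℕ} (ha : a ∈ A) :
    ∑ b ∈ A, f b = (∑ b ∈ A.filter (· < a), f b)
      + ((∑ b ∈ A.filter (a < ·), f b) + f a) := by
  classical
  rw [← Finset.sum_filter_add_sum_filter_not A (· < a)]
  congr 1
  rw [← Finset.sum_filter_add_sum_filter_not (A.filter (fun b => ¬ b < a)) (a < ·),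
    Finset.filter_filter, Finset.filter_filter]
  congr 1
  · refine Finset.sum_congr (Finset.filter_congr fun b _ => ?_) fun _ _ => rfl
    exact ⟨fun h => h.2, fun h => ⟨not_lt.mpr h.le, h⟩⟩
  · rw [show (A.filter fun b => ¬ b < a ∧ ¬ a < b) = {a} from ?_, Finset.sum_singleton]
    ext b
    simp only [Finset.mem_filter, Finset.mem_singleton, not_lt]
    constructor
    · rintro ⟨_, h1, h2⟩
      exact le_antisymm h2 h1
    · rintro rfl
      exact ⟨ha, le_refl _, le_refl _⟩

lemma mul_split (A : Finset ℕ) (F G : ℕ → K) :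
    (∑ a ∈ A, F a) * (∑ b ∈ A, G b)
      = ((∑ a ∈ A, F a * ∑ b ∈ A.filter (· < a), G b)
        + (∑ a ∈ A, (∑ b ∈ A.filter (· < a), F b) * G a))
        + ∑ a ∈ A, F a * G a := by
  classical
  rw [Finset.sum_mul_sum]
  have key : ∀ a ∈ A, ∑ b ∈ A, F a * G b
      = F a * ∑ b ∈ A.filter (· < a), G b
        + ((∑ b ∈ A.filter (a < ·), F a * G b) + F a * G a) := by
    intro a ha
    rw [sum_split (fun b => F a * G b) ha, Finset.mul_sum]
  rw [Finset.sum_congr rfl key, Finset.sum_add_distrib, Finset.sum_add_distrib, ← add_assoc]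
  congr 1
  congr 1
  rw [Finset.sum_comm' (fun x y => ?_)]
  · exact Finset.sum_congr rfl fun a _ => (Finset.sum_mul _ _ _).symm
  · simp only [Finset.mem_filter]
    exact ⟨fun h => ⟨⟨h.1, h.2.2⟩, h.2.1⟩, fun h => ⟨h.1.1, h.2, h.1.2⟩⟩

lemma goodComb_mul (hM : 0 < M) (hζM : ζ ^ M = 1) :
    ∀ (m k l : ℕ), k + l = m → ∀ (s i : Fin k → ℕ) (t j : Fin l → ℕ),
      GoodComb p M ζ (fun n => sigmaP p ζ s i n * sigmaP p ζ t j n) := by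
  intro m
  induction m using Nat.strong_induction_on with
  | _ m IH =>
    intro k l
    obtain _ | k' := k
    · intro _ s i t j
      exact (goodComb_sigmaP hM hζM t j).congr fun n => by rw [sigmaP_nil, one_mul]
    obtain _ | l' := l
    · intro _ s i t j
      exact (goodComb_sigmaP hM hζM s i).congr fun n => by rw [sigmaP_nil, mul_one]
    intro hm s i t j
    have IH1 : GoodComb p M ζ
        (fun a => sigmaP p ζ (Fin.init s) (Fin.init i) a * sigmaP p ζ t j a) :=
      IH (k' + (l' + 1)) (by omega) k' (l' + 1) rfl _ _ t j
    have IH2 : GoodComb p M ζ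
        (fun b => sigmaP p ζ s i b * sigmaP p ζ (Fin.init t) (Fin.init j) b) :=
      IH ((k' + 1) + l') (by omega) (k' + 1) l' rfl s i _ _
    have IH3 : GoodComb p M ζ
        (fun a => sigmaP p ζ (Fin.init s) (Fin.init i) a
          * sigmaP p ζ (Fin.init t) (Fin.init j) a) :=
      IH (k' + l') (by omega) k' l' rfl _ _ _ _
    have G1 := IH1.append hM hζM (s (Fin.last k')) (i (Fin.last k'))
    have G2 := IH2.append hM hζM (t (Fin.last l')) (j (Fin.last l'))
    have G3 := IH3.append hM hζM (s (Fin.last k') + t (Fin.last l'))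
      (i (Fin.last k') + j (Fin.last l'))
    have expandS : ∀ n : ℕ, sigmaP p ζ s i n
        = ∑ a ∈ (Finset.Ioo 0 n).filter (fun a : ℕ => (p:ℤ) ∣ (a:ℤ)),
            ζ ^ (i (Fin.last k') * a) / (a:K) ^ (s (Fin.last k'))
              * sigmaP p ζ (Fin.init s) (Fin.init i) a := by
      intro n
      rw [show sigmaP p ζ s i n
          = sigmaP p ζ (Fin.snoc (Fin.init s) (s (Fin.last k')))
              (Fin.snoc (Fin.init i) (i (Fin.last k'))) n by
        rw [Fin.snoc_init_self, Fin.snoc_init_self], sigmaP_snoc]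
    have expandT : ∀ n : ℕ, sigmaP p ζ t j n
        = ∑ a ∈ (Finset.Ioo 0 n).filter (fun a : ℕ => (p:ℤ) ∣ (a:ℤ)),
            ζ ^ (j (Fin.last l') * a) / (a:K) ^ (t (Fin.last l'))
              * sigmaP p ζ (Fin.init t) (Fin.init j) a := by
      intro n
      rw [show sigmaP p ζ t j n
          = sigmaP p ζ (Fin.snoc (Fin.init t) (t (Fin.last l')))
              (Fin.snoc (Fin.init j) (j (Fin.last l'))) n by
        rw [Fin.snoc_init_self, Fin.snoc_init_self], sigmaP_snoc]
    have hAfil : ∀ n : ℕ, ∀ a ∈ (Finset.Ioo 0 n).filter (fun a : ℕ => (p:ℤ) ∣ (a:ℤ)),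
        ((Finset.Ioo 0 n).filter (fun a : ℕ => (p:ℤ) ∣ (a:ℤ))).filter (· < a)
          = (Finset.Ioo 0 a).filter (fun b : ℕ => (p:ℤ) ∣ (b:ℤ)) := by
      intro n a ha
      simp only [Finset.mem_filter, Finset.mem_Ioo] at ha
      ext b
      simp only [Finset.mem_filter, Finset.mem_Ioo]
      exact ⟨fun h => ⟨⟨h.1.1.1, h.2⟩, h.1.2⟩,
        fun h => ⟨⟨⟨h.1.1, h.1.2.trans ha.1.2⟩, h.2⟩, h.1.2⟩⟩
    refine ((G1.add G2).add G3).congr fun n => ?_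
    show _ = (_ + _) + _
    rw [expandS n, expandT n, mul_split]
    congr 1
    congr 1
    · refine Finset.sum_congr rfl fun a ha => ?_
      rw [hAfil n a ha, ← expandT a]
      ring
    · refine Finset.sum_congr rfl fun a ha => ?_
      rw [hAfil n a ha, ← expandS a]
      ring
    · refine Finset.sum_congr rfl fun a ha => ?_
      rw [add_mul, pow_add, pow_add]
      ring

end AuxShuffle

/-- the pointwise product of two functions `σ_p(s;i)` and `σ_p(t;j)` is a finite
linear combination with non-negative integer coefficients of functions `σ_p(u;v)`;
consequently the `ℤ`-span of the `σ_p(u;v)` in the algebra of functions `ℕ → K` is closed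
under pointwise multiplication. -/
theorem sigmaP_mul_shuffle (p M : ℕ) [Fact p.Prime] (hM : 1 ≤ M) (hpM : ¬ p ∣ M)
    [NormedField K] [CompleteSpace K] [Algebra ℚ_[p] K]
    (hiso : ∀ x : ℚ_[p], ‖algebraMap ℚ_[p] K x‖ = ‖x‖)
    (ζ : K) (hζ : IsPrimitiveRoot ζ M) (hgen : Algebra.adjoin ℚ_[p] {ζ} = ⊤) :
    (∀ (k l : ℕ) (s i : Fin k → ℕ) (t j : Fin l → ℕ),
      (∀ b, i b < M) → (∀ b, j b < M) →
      ∃ (T : Finset (SIdx M)) (c : SIdx M → ℕ),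
        ∀ n : ℕ, sigmaP p ζ s i n * sigmaP p ζ t j n =
          ∑ u ∈ T, (c u : K) * sigmaPIdx p M ζ u n) ∧
    ∀ x y : ℕ → K,
      x ∈ Submodule.span ℤ (Set.range (sigmaPIdx p M ζ)) →
      y ∈ Submodule.span ℤ (Set.range (sigmaPIdx p M ζ)) →
      x * y ∈ Submodule.span ℤ (Set.range (sigmaPIdx p M ζ)) := by
  have hζM : ζ ^ M = 1 := hζ.pow_eq_one
  constructor
  · intro k l s i t j _ _
    obtain ⟨c, hc⟩ := goodComb_mul hM hζM (k + l) k l rfl s i t j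
    refine ⟨c.support, c, fun n => ?_⟩
    exact hc n
  · have key : ∀ u v : SIdx M,
        sigmaPIdx p M ζ u * sigmaPIdx p M ζ v
          ∈ Submodule.span ℤ (Set.range (sigmaPIdx p M ζ)) := by
      intro u v
      obtain ⟨c, hc⟩ := goodComb_mul (p := p) hM hζM (u.1 + v.1) u.1 v.1 rfl
        u.2.1 (fun b => (u.2.2 b : ℕ)) v.2.1 (fun b => (v.2.2 b : ℕ))
      have : sigmaPIdx p M ζ u * sigmaPIdx p M ζ v
          = ∑ w ∈ c.support, (c w : ℤ) • sigmaPIdx p M ζ w := by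
        funext n
        rw [Finset.sum_apply]
        refine (hc n).trans ?_
        rw [Finsupp.sum]
        refine Finset.sum_congr rfl fun w _ => ?_
        rw [Pi.smul_apply, zsmul_eq_mul]
        push_cast
        ring
      rw [this]
      exact Submodule.sum_mem _ fun w _ =>
        Submodule.smul_mem _ _ (Submodule.subset_span ⟨w, rfl⟩)
    intro x y hx hy
    induction hy using Submodule.span_induction with
    | mem z hz =>
      induction hx using Submodule.span_induction with
      | mem w hw =>
        obtain ⟨u, rfl⟩ := hw
        obtain ⟨v, rfl⟩ := hz
        exact key u v
      | zero => rw [zero_mul]; exact Submodule.zero_mem _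
      | add a b _ _ ha hb => rw [add_mul]; exact Submodule.add_mem _ ha hb
      | smul r a _ hr => rw [smul_mul_assoc]; exact Submodule.smul_mem _ _ hr
    | zero => rw [mul_zero]; exact Submodule.zero_mem _
    | add a b _ _ ha hb => rw [mul_add]; exact Submodule.add_mem _ ha hb
    | smul r a _ hr => rw [mul_smul_comm]; exact Submodule.smul_mem _ _ hr

end
end

section
/- Let q be the cardinality of the residue field of K, and let f : {n ∈ ℕ : n ≥ n₀} → K be an M-power series function. Fix l with 0 < l ≤ pM. Then there exists a power series P ∈ K[[x]], convergent on a closed disc {x ∈ K : |x| ≤ r} for some real r > |p|, such that f(l·q^N) = P(l·q^N) for all sufficiently large N. In particular, the limit lim_{N→∞} f(l·q^N) exists and equals P(0). -/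
open Filter

noncomputable section

variable {K : Type*}

/-- The ring of integers `{x : K // ‖x‖ ≤ 1}` of a nonarchimedean normed field. -/
def ringOfIntegers (K : Type*) [NormedField K] [IsUltrametricDist K] : Subring K where
  carrier := {x : K | ‖x‖ ≤ 1}
  mul_mem' := by
    intro a b ha hb
    simp only [Set.mem_setOf_eq, norm_mul] at *
    calc ‖a‖ * ‖b‖ ≤ 1 * 1 := mul_le_mul ha hb (norm_nonneg b) zero_le_one
    _ = 1 := by ring
  one_mem' := by simp
  add_mem' := by
    intro a b ha hb
    exact (IsUltrametricDist.norm_add_le_max a b).trans (max_le ha hb)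
  zero_mem' := by simp
  neg_mem' := by
    intro a ha
    simpa using ha

/-- The maximal ideal `{x : 𝒪_K // ‖x‖ < 1}` of the ring of integers. -/
def maxIdeal (K : Type*) [NormedField K] [IsUltrametricDist K] :
    Ideal (ringOfIntegers K) where
  carrier := {x | ‖(x : K)‖ < 1}
  zero_mem' := by simp
  add_mem' := by
    intro a b ha hb
    exact lt_of_le_of_lt (IsUltrametricDist.norm_add_le_max (a : K) (b : K)) (max_lt ha hb)
  smul_mem' := by
    intro c x hx
    simp only [Set.mem_setOf_eq, smul_eq_mul, Subring.coe_mul, norm_mul] at *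
    calc ‖(c : K)‖ * ‖(x : K)‖ ≤ 1 * ‖(x : K)‖ :=
          mul_le_mul_of_nonneg_right c.2 (norm_nonneg _)
    _ = ‖(x : K)‖ := one_mul _
    _ < 1 := hx

section Aux
variable [NormedField K] [CompleteSpace K] [IsUltrametricDist K]

lemma summable_of_norm_finite {ι : Type*} {f : ι → K}
    (h : ∀ ε > (0:ℝ), {i | ε ≤ ‖f i‖}.Finite) : Summable f := by
  rw [summable_iff_vanishing_norm]
  intro ε hε
  refine ⟨(h (ε/2) (by linarith)).toFinset, fun t ht => ?_⟩
  have hb : ∀ i ∈ t, ‖f i‖ ≤ ε/2 := by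
    intro i hi
    by_contra hcon
    have : i ∈ (h (ε/2) (by linarith)).toFinset := by
      simp only [Set.Finite.mem_toFinset, Set.mem_setOf_eq]; linarith
    exact (Finset.disjoint_left.mp ht hi) this
  calc ‖∑ i ∈ t, f i‖ ≤ ε/2 :=
        IsUltrametricDist.norm_sum_le_of_forall_le_of_nonneg (by linarith) hb
    _ < ε := by linarith

lemma summable_of_norm_tendsto {f : ℕ → K}
    (h : Tendsto (fun n => ‖f n‖) atTop (nhds 0)) : Summable f := by
  refine summable_of_norm_finite (fun ε hε => ?_)
  have := h.eventually_lt_const hε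
  rw [← Nat.cofinite_eq_atTop, eventually_cofinite] at this
  exact this.subset (fun i hi => by simpa using hi)

end Aux

/-- auxiliary double-indexed family for binomial rearrangement -/
def binTerm [NormedField K] (c : ℕ → K) (i x : K) (pr : ℕ × ℕ) : K :=
  if pr.2 ≤ pr.1 then c pr.1 * (pr.1.choose pr.2 : K) * x ^ pr.2 * (-i) ^ (pr.1 - pr.2) else 0

section Recenter
variable [NormedField K] [CompleteSpace K] [IsUltrametricDist K]

lemma recenterPS {c : ℕ → K} {r ρ : ℝ} (hr : 0 < r) (hρ0 : 0 ≤ ρ) (hρr : ρ ≤ r)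
    (hc : PSConvOn c r) (i : K) (hi : ‖i‖ ≤ ρ) :
    ∃ P : ℕ → K, PSConvOn P r ∧ ∀ x : K, ‖x‖ ≤ ρ → evalPS P x = evalPS c (x - i) := by
  classical
  have hb : Tendsto (fun k => ‖c k‖ * r ^ k) atTop (nhds 0) := hc
  have hb0 : ∀ k, 0 ≤ ‖c k‖ * r ^ k := fun k => mul_nonneg (norm_nonneg _) (pow_pos hr k).le
  have hterm : ∀ n m : ℕ, ‖c (n+m) * ((n+m).choose n : K) * (-i)^m‖ ≤ ‖c (n+m)‖ * ρ ^ m := by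
    intro n m
    rw [norm_mul, norm_mul, norm_pow, norm_neg]
    have h1 : ‖(((n+m).choose n : ℕ) : K)‖ ≤ 1 := IsUltrametricDist.norm_natCast_le_one K _
    have h2 : ‖i‖ ^ m ≤ ρ ^ m := pow_le_pow_left₀ (norm_nonneg i) hi m
    calc ‖c (n+m)‖ * ‖(((n+m).choose n : ℕ) : K)‖ * ‖i‖ ^ m
        ≤ (‖c (n+m)‖ * 1) * ρ ^ m :=
          mul_le_mul (mul_le_mul_of_nonneg_left h1 (norm_nonneg _)) h2
            (pow_nonneg (norm_nonneg i) m) (by positivity)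
      _ = ‖c (n+m)‖ * ρ ^ m := by ring
  have hρrpow : ∀ n m : ℕ, ‖c (n+m)‖ * ρ ^ m * r ^ n ≤ ‖c (n+m)‖ * r ^ (n+m) := by
    intro n m
    rw [pow_add]
    calc ‖c (n+m)‖ * ρ ^ m * r ^ n ≤ ‖c (n+m)‖ * r ^ m * r ^ n := by
          gcongr
      _ = ‖c (n+m)‖ * (r ^ n * r ^ m) := by ring
  have hsumm : ∀ n : ℕ, Summable (fun m => c (n+m) * ((n+m).choose n : K) * (-i)^m) := by
    intro n
    apply summable_of_norm_tendsto
    have hbn : Tendsto (fun m => ‖c (n+m)‖ * r ^ (n+m) / r ^ n) atTop (nhds 0) := by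
      have := (hb.comp (tendsto_add_atTop_nat n)).div_const (r ^ n)
      simpa [Function.comp, add_comm n] using this
    refine squeeze_zero (fun m => norm_nonneg _) (fun m => ?_) hbn
    calc ‖c (n+m) * ((n+m).choose n : K) * (-i)^m‖ ≤ ‖c (n+m)‖ * ρ ^ m := hterm n m
      _ ≤ ‖c (n+m)‖ * r ^ (n+m) / r ^ n := by
          rw [le_div_iff₀ (pow_pos hr n)]
          exact hρrpow n m
  refine ⟨fun n => ∑' m, c (n+m) * ((n+m).choose n : K) * (-i)^m, ?_, ?_⟩
  · rw [PSConvOn, Metric.tendsto_atTop]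
    intro ε hε
    rw [Metric.tendsto_atTop] at hb
    obtain ⟨N, hN⟩ := hb (ε/2) (by linarith)
    refine ⟨N, fun n hn => ?_⟩
    have hPn : ‖∑' m, c (n+m) * ((n+m).choose n : K) * (-i)^m‖ ≤ (ε/2) / r ^ n := by
      apply IsUltrametricDist.norm_tsum_le_of_forall_le_of_nonneg
        (div_nonneg (by linarith) (pow_pos hr n).le)
      intro m
      refine (hterm n m).trans ?_
      rw [le_div_iff₀ (pow_pos hr n)]
      refine (hρrpow n m).trans ?_
      have := hN (n+m) (le_trans hn (Nat.le_add_right n m))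
      rw [Real.dist_eq, sub_zero, abs_of_nonneg (hb0 _)] at this
      linarith
    rw [Real.dist_eq, sub_zero]
    have h1 : (0:ℝ) ≤ ‖∑' m, c (n+m) * ((n+m).choose n : K) * (-i)^m‖ * r ^ n :=
      mul_nonneg (norm_nonneg _) (pow_pos hr n).le
    rw [abs_of_nonneg h1]
    calc ‖∑' m, c (n+m) * ((n+m).choose n : K) * (-i)^m‖ * r ^ n
        ≤ (ε/2) / r ^ n * r ^ n := mul_le_mul_of_nonneg_right hPn (pow_pos hr n).le
      _ = ε/2 := div_mul_cancel₀ _ (pow_pos hr n).ne'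
      _ < ε := by linarith
  · intro x hx
    have hFbound : ∀ pr : ℕ × ℕ, ‖binTerm c i x pr‖ ≤ ‖c pr.1‖ * r ^ pr.1 := by
      rintro ⟨k, n⟩
      rw [binTerm]
      dsimp only
      split_ifs with h
      · rw [norm_mul, norm_mul, norm_mul, norm_pow, norm_pow, norm_neg]
        have h1 : ‖((k.choose n : ℕ) : K)‖ ≤ 1 := IsUltrametricDist.norm_natCast_le_one K _
        have h2 : ‖x‖ ^ n ≤ ρ ^ n := pow_le_pow_left₀ (norm_nonneg x) hx n
        have h3 : ‖i‖ ^ (k-n) ≤ ρ ^ (k-n) := pow_le_pow_left₀ (norm_nonneg i) hi (k-n)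
        calc ‖c k‖ * ‖((k.choose n : ℕ) : K)‖ * ‖x‖ ^ n * ‖i‖ ^ (k - n)
            ≤ ((‖c k‖ * 1) * ρ ^ n) * ρ ^ (k - n) := by
              apply mul_le_mul _ h3 (pow_nonneg (norm_nonneg i) _) (by positivity)
              exact mul_le_mul (mul_le_mul_of_nonneg_left h1 (norm_nonneg _)) h2
                (pow_nonneg (norm_nonneg x) n) (by positivity)
          _ = ‖c k‖ * ρ ^ (n + (k - n)) := by rw [pow_add]; ring
          _ = ‖c k‖ * ρ ^ k := by rw [Nat.add_sub_cancel' h]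
          _ ≤ ‖c k‖ * r ^ k := by gcongr
      · simpa using hb0 k
    have hFsumm : Summable (binTerm c i x) := by
      apply summable_of_norm_finite
      intro ε hε
      have hTfin : {k : ℕ | ε ≤ ‖c k‖ * r ^ k}.Finite := by
        have := hb.eventually_lt_const hε
        rw [← Nat.cofinite_eq_atTop, eventually_cofinite] at this
        exact this.subset (fun k hk => by simpa using hk)
      obtain ⟨KT, hKT⟩ := hTfin.bddAbove
      refine (Set.finite_Iic ((KT, KT) : ℕ × ℕ)).subset ?_
      rintro ⟨k, n⟩ hkn
      simp only [Set.mem_setOf_eq] at hkn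
      have hk : ε ≤ ‖c k‖ * r ^ k := le_trans hkn (hFbound (k, n))
      have hkKT : k ≤ KT := hKT hk
      have hn : n ≤ k := by
        by_contra hcon
        rw [binTerm] at hkn
        simp only [if_neg (by omega : ¬ n ≤ k), norm_zero] at hkn
        linarith
      exact Set.mem_Iic.mpr ⟨hkKT, le_trans hn hkKT⟩
    have step1 : evalPS c (x - i) = ∑' k, ∑' n, binTerm c i x (k, n) := by
      rw [evalPS]
      apply tsum_congr
      intro k
      have hpow : (x - i) ^ k
          = ∑ n ∈ Finset.range (k+1), x ^ n * (-i) ^ (k - n) * (k.choose n : K) := by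
        rw [sub_eq_add_neg, add_pow]
      have hinner : ∑' n, binTerm c i x (k, n) = ∑ n ∈ Finset.range (k+1), binTerm c i x (k, n) := by
        apply tsum_eq_sum
        intro n hn
        rw [Finset.mem_range, Nat.lt_succ_iff, not_le] at hn
        rw [binTerm]
        simp only [if_neg (by omega : ¬ n ≤ k)]
      rw [hinner, hpow, Finset.mul_sum]
      apply Finset.sum_congr rfl
      intro n hn
      rw [Finset.mem_range, Nat.lt_succ_iff] at hn
      rw [binTerm]
      simp only [if_pos hn]
      ring
    have step2 : ∑' k, ∑' n, binTerm c i x (k, n) = ∑' n, ∑' k, binTerm c i x (k, n) :=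
      Summable.tsum_comm hFsumm.prod_symm
    have step3 : ∀ n : ℕ, ∑' k, binTerm c i x (k, n)
        = (∑' m, c (n+m) * ((n+m).choose n : K) * (-i)^m) * x ^ n := by
      intro n
      have hinj : Function.Injective (fun m : ℕ => n + m) := fun a b h => by simpa using h
      have hsupp : Function.support (fun k => binTerm c i x (k, n))
          ⊆ Set.range (fun m : ℕ => n + m) := by
        intro k hk
        rw [Function.mem_support] at hk
        have hnk : n ≤ k := by
          by_contra hcon
          apply hk
          rw [binTerm]
          simp only [if_neg (by omega : ¬ n ≤ k)]
        exact ⟨k - n, by simpa using Nat.add_sub_cancel' hnk⟩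
      rw [← hinj.tsum_eq hsupp]
      have hval : ∀ m : ℕ, binTerm c i x (n + m, n)
          = (c (n+m) * ((n+m).choose n : K) * (-i)^m) * x ^ n := by
        intro m
        rw [binTerm]
        simp only [if_pos (Nat.le_add_right n m), Nat.add_sub_cancel_left]
        ring
      simp_rw [hval]
      rw [tsum_mul_right]
    rw [step1, step2]
    rw [evalPS]
    exact (tsum_congr (fun n => step3 n)).symm

end Recenter

section Cont
variable [NormedField K] [CompleteSpace K] [IsUltrametricDist K]

lemma evalPS_zero {P : ℕ → K} : evalPS P 0 = P 0 := by
  rw [evalPS]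
  rw [tsum_eq_single 0 (fun m hm => by simp [zero_pow hm])]
  simp

lemma evalPS_tendsto {P : ℕ → K} {r : ℝ} (hr : 0 < r) (hP : PSConvOn P r)
    {u : ℕ → K} (hu : Tendsto (fun N => ‖u N‖) atTop (nhds 0)) (hur : ∀ᶠ N in atTop, ‖u N‖ ≤ r) :
    Tendsto (fun N => evalPS P (u N)) atTop (nhds (evalPS P 0)) := by
  have hPb : Tendsto (fun m => ‖P m‖ * r ^ m) atTop (nhds 0) := hP
  obtain ⟨B, hB⟩ := hPb.bddAbove_range
  have hB' : ∀ m, ‖P m‖ * r ^ m ≤ B := fun m => hB (Set.mem_range_self m)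
  have hB0 : 0 ≤ B := le_trans (mul_nonneg (norm_nonneg _) (pow_pos hr 0).le) (hB' 0)
  have key : ∀ x : K, ‖x‖ ≤ r → dist (evalPS P x) (evalPS P 0) ≤ B * ‖x‖ / r := by
    intro x hx
    have hg : Summable (fun m => P m * x ^ m) := by
      apply summable_of_norm_tendsto
      refine squeeze_zero (fun m => norm_nonneg _) (fun m => ?_) hPb
      rw [norm_mul, norm_pow]
      exact mul_le_mul_of_nonneg_left (pow_le_pow_left₀ (norm_nonneg x) hx m) (norm_nonneg _)
    have hsplit : evalPS P x = P 0 + ∑' m, P (m+1) * x ^ (m+1) := by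
      rw [evalPS, Summable.tsum_eq_zero_add hg]
      simp
    have hxr : ‖x‖ / r ≤ 1 := by
      rw [div_le_one hr]; exact hx
    have hxr0 : 0 ≤ ‖x‖ / r := div_nonneg (norm_nonneg _) hr.le
    rw [evalPS_zero, dist_eq_norm, hsplit, add_sub_cancel_left]
    have : B * ‖x‖ / r = B * (‖x‖ / r) := by ring
    rw [this]
    apply IsUltrametricDist.norm_tsum_le_of_forall_le_of_nonneg
      (mul_nonneg hB0 hxr0)
    intro m
    rw [norm_mul, norm_pow]
    calc ‖P (m+1)‖ * ‖x‖ ^ (m+1)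
        = (‖P (m+1)‖ * r ^ (m+1)) * (‖x‖ / r) ^ (m+1) := by
          rw [div_pow, mul_assoc, mul_div_assoc', mul_div_cancel_left₀ _ (pow_pos hr _).ne']
      _ ≤ B * (‖x‖ / r) ^ (m+1) :=
          mul_le_mul_of_nonneg_right (hB' (m+1)) (pow_nonneg hxr0 _)
      _ ≤ B * (‖x‖ / r) := by
          exact mul_le_mul_of_nonneg_left (pow_le_of_le_one hxr0 hxr (Nat.succ_ne_zero m)) hB0
  rw [tendsto_iff_dist_tendsto_zero]
  apply squeeze_zero' (Eventually.of_forall (fun N => dist_nonneg))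
    (hur.mono (fun N hN => key (u N) hN))
  have : Tendsto (fun N => B * ‖u N‖ / r) atTop (nhds (B * 0 / r)) := by
    exact ((hu.const_mul B).div_const r)
  simpa using this

end Cont


section Residue
variable [NormedField K] [CompleteSpace K] [IsUltrametricDist K]

lemma mem_ringOfIntegers {x : K} (h : ‖x‖ ≤ 1) : x ∈ ringOfIntegers K := h

lemma mem_maxIdeal {x : ringOfIntegers K} (h : ‖(x : K)‖ < 1) : x ∈ maxIdeal K := h

set_option maxHeartbeats 1000000 in
lemma residue_facts (p M : ℕ) [Fact p.Prime] (hM : 1 ≤ M) (hpM : ¬ p ∣ M)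
    [Algebra ℚ_[p] K]
    (hiso : ∀ x : ℚ_[p], ‖algebraMap ℚ_[p] K x‖ = ‖x‖)
    (ζ : K) (hζ : IsPrimitiveRoot ζ M) (hgen : Algebra.adjoin ℚ_[p] {ζ} = ⊤)
    (q : ℕ) (hq : q = Nat.card ((ringOfIntegers K) ⧸ (maxIdeal K))) :
    2 ≤ q ∧ p ∣ q ∧ M ∣ q - 1 := by
  have hp := (Fact.out : p.Prime)
  -- norm of p in K
  have hnormp : ‖(p : K)‖ = (p : ℝ)⁻¹ := by
    rw [show ((p : ℕ) : K) = algebraMap ℚ_[p] K ((p : ℕ) : ℚ_[p]) by push_cast [map_natCast]; ring]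
    rw [hiso]
    exact Padic.norm_p
  have hplt1 : ‖(p : K)‖ < 1 := by
    rw [hnormp]
    rw [inv_lt_one_iff₀]
    right
    exact_mod_cast hp.one_lt
  -- K is finite dimensional over ℚ_p
  letI : NormedSpace ℚ_[p] K :=
    { norm_smul_le := fun c x => by rw [Algebra.smul_def, norm_mul, hiso] }
  have hζint : IsIntegral ℚ_[p] ζ := by
    refine ⟨Polynomial.X ^ M - Polynomial.C 1, ?_, ?_⟩
    · exact Polynomial.monic_X_pow_sub_C 1 (by omega)
    · simp [hζ.pow_eq_one]
  haveI : FiniteDimensional ℚ_[p] K := by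
    rw [FiniteDimensional, Module.finite_def]
    have h1 := hζint.fg_adjoin_singleton
    rw [hgen] at h1
    simpa using h1
  haveI : ProperSpace K := FiniteDimensional.proper ℚ_[p] K
  -- finiteness of the residue ring
  haveI : Finite ((ringOfIntegers K) ⧸ (maxIdeal K)) := by
    have hcomp : IsCompact (Metric.closedBall (0:K) 1) := isCompact_closedBall _ _
    have hcover : Metric.closedBall (0:K) 1 ⊆
        ⋃ x ∈ Metric.closedBall (0:K) 1, Metric.ball x 1 := by
      intro x hx
      exact Set.mem_biUnion hx (Metric.mem_ball_self one_pos)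
    obtain ⟨t, hts, htfin, htcover⟩ :=
      hcomp.elim_finite_subcover_image (fun x _ => Metric.isOpen_ball) hcover
    have hmem : ∀ x : t, (x : K) ∈ ringOfIntegers K := by
      intro x
      apply mem_ringOfIntegers
      have := hts x.2
      rwa [Metric.mem_closedBall, dist_zero_right] at this
    haveI : Finite t := htfin.to_subtype
    apply Finite.of_surjective
      (fun x : t => Ideal.Quotient.mk (maxIdeal K) ⟨x.1, hmem x⟩)
    intro y
    obtain ⟨a, rfl⟩ := Ideal.Quotient.mk_surjective y
    have ha : (a : K) ∈ Metric.closedBall (0:K) 1 := by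
      rw [Metric.mem_closedBall, dist_zero_right]
      exact a.2
    obtain ⟨x, hxt, hax⟩ := Set.mem_iUnion₂.mp (htcover ha)
    refine ⟨⟨x, hxt⟩, ?_⟩
    rw [Ideal.Quotient.eq]
    apply mem_maxIdeal
    rw [Metric.mem_ball, dist_eq_norm] at hax
    simpa [norm_sub_rev] using hax
  set Q := (ringOfIntegers K) ⧸ (maxIdeal K) with hQ
  have hmax_ne_top : maxIdeal K ≠ ⊤ := by
    intro h
    have h1 : (1 : ringOfIntegers K) ∈ maxIdeal K := h ▸ Submodule.mem_top
    have : ‖((1 : ringOfIntegers K) : K)‖ < 1 := h1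
    simp at this
  haveI : Nontrivial Q := Ideal.Quotient.nontrivial_iff.mpr hmax_ne_top
  -- p ∣ q
  have hpR : ((p : ℕ) : ringOfIntegers K) ∈ maxIdeal K := by
    apply mem_maxIdeal
    have : (((p : ℕ) : ringOfIntegers K) : K) = (p : K) := by push_cast; ring
    rw [this]
    exact hplt1
  have hpQ : ((p : ℕ) : Q) = 0 := by
    rw [← map_natCast (Ideal.Quotient.mk (maxIdeal K)) p, Ideal.Quotient.eq_zero_iff_mem]
    exact hpR
  have hdvd_pq : p ∣ q := by
    rw [hq]
    have hord : addOrderOf (1 : Q) = p := by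
      have h1 : addOrderOf (1 : Q) ∣ p := by
        apply addOrderOf_dvd_of_nsmul_eq_zero
        rw [nsmul_eq_mul, mul_one, hpQ]
      rcases (Nat.Prime.eq_one_or_self_of_dvd hp _ h1) with h | h
      · exfalso
        have h10 := AddMonoid.addOrderOf_eq_one_iff.mp h
        have hz : ∀ x : Q, x = 0 := fun x => by rw [← mul_one x, h10, mul_zero]
        obtain ⟨a, b, hab⟩ := exists_pair_ne Q
        exact hab ((hz a).trans (hz b).symm)
      · exact h
    rw [← hord]
    exact addOrderOf_dvd_natCard _
  -- Q is a field
  have hfield : IsField Q := by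
    constructor
    · exact exists_pair_ne Q
    · exact mul_comm
    · intro a ha
      obtain ⟨x, rfl⟩ := Ideal.Quotient.mk_surjective a
      have hx_notmem : x ∉ maxIdeal K := by
        intro h
        exact ha (Ideal.Quotient.eq_zero_iff_mem.mpr h)
      have hx1 : ‖(x : K)‖ = 1 := le_antisymm x.2 (not_lt.mp hx_notmem)
      have hxne : (x : K) ≠ 0 := by
        intro h
        rw [h, norm_zero] at hx1
        linarith
      have hinv_mem : (x : K)⁻¹ ∈ ringOfIntegers K := by
        apply mem_ringOfIntegers
        rw [norm_inv, hx1]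
        norm_num
      refine ⟨Ideal.Quotient.mk (maxIdeal K) ⟨(x : K)⁻¹, hinv_mem⟩, ?_⟩
      rw [← map_mul, ← map_one (Ideal.Quotient.mk (maxIdeal K))]
      congr 1
      ext
      simp [mul_inv_cancel₀ hxne]
  -- 2 ≤ q
  have hq2 : 2 ≤ q := by
    rw [hq]
    letI : Fintype Q := Fintype.ofFinite Q
    rw [Nat.card_eq_fintype_card]
    exact Fintype.one_lt_card
  -- norm of ζ is 1
  have hM0 : M ≠ 0 := by omega
  have hζnorm : ‖ζ‖ = 1 := by
    have h1 : ‖ζ‖ ^ M = 1 := by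
      rw [← norm_pow, hζ.pow_eq_one, norm_one]
    rcases pow_eq_one_iff_cases.mp h1 with h | h | h
    · omega
    · exact h
    · exfalso
      have := norm_nonneg ζ
      rw [h.1] at this
      linarith
  -- norm of M is 1
  have hMnorm : ‖(M : K)‖ = 1 := by
    have hcast : ((M : ℕ) : K) = algebraMap ℚ_[p] K ((M : ℕ) : ℚ_[p]) := by
      rw [map_natCast]
    have hle : ‖(M : K)‖ ≤ 1 := by
      rw [hcast, hiso]
      exact_mod_cast Padic.norm_int_le_one (M : ℤ)
    have hnlt : ¬ ‖(M : K)‖ < 1 := by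
      rw [hcast, hiso]
      intro hlt
      have : ((M : ℤ) : ℚ_[p]) = ((M : ℕ) : ℚ_[p]) := by push_cast; ring
      rw [← this] at hlt
      have := (Padic.norm_intCast_lt_one_iff (k := (M : ℤ))).mp hlt
      exact hpM (by exact_mod_cast this)
    exact le_antisymm hle (not_lt.mp hnlt)
  -- each 1 - ζ^k has norm 1 for 0 < k < M
  have hfactor : ∀ k, 0 < k → k < M → ‖1 - ζ ^ k‖ = 1 := by
    intro k hk0 hkM
    have hζ' : IsPrimitiveRoot ζ ((M - 1) + 1) := by
      have hMM : M - 1 + 1 = M := by omega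
      rwa [hMM]
    have hprod := hζ'.prod_one_sub_pow_eq_order
    have hprodM : ∏ j ∈ Finset.range (M - 1), (1 - ζ ^ (j + 1)) = (M : K) := by
      rw [hprod]
      push_cast
      have : (M:K) - 1 + 1 = (M:K) := by ring
      rw [← this]
      congr 1
      have : ((M : ℕ) : K) - 1 = (((M - 1 : ℕ) : ℤ) : K) := by
        push_cast [Nat.cast_sub (by omega : 1 ≤ M)]
        ring
      exact_mod_cast this.symm
    have hnormprod : ∏ j ∈ Finset.range (M - 1), ‖1 - ζ ^ (j + 1)‖ = 1 := by
      rw [← norm_prod, hprodM, hMnorm]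
    have hle1 : ∀ j ∈ Finset.range (M - 1), ‖1 - ζ ^ (j + 1)‖ ≤ 1 := by
      intro j _
      rw [sub_eq_add_neg]
      refine le_trans (IsUltrametricDist.norm_add_le_max _ _) ?_
      apply max_le
      · simp
      · rw [norm_neg, norm_pow, hζnorm, one_pow]
    have hkmem : k - 1 ∈ Finset.range (M - 1) := by
      rw [Finset.mem_range]; omega
    have hsplit : ∏ j ∈ Finset.range (M-1), ‖1 - ζ ^ (j+1)‖
        = ‖1 - ζ ^ (k-1+1)‖ * ∏ j ∈ (Finset.range (M-1)).erase (k-1), ‖1 - ζ ^ (j+1)‖ :=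
      (Finset.mul_prod_erase _ (fun j => ‖1 - ζ ^ (j+1)‖) hkmem).symm
    have hrest : ∏ j ∈ (Finset.range (M-1)).erase (k-1), ‖1 - ζ ^ (j + 1)‖ ≤ 1 :=
      Finset.prod_le_one (fun j _ => norm_nonneg _) (fun j hj => hle1 j (Finset.mem_of_mem_erase hj))
    have hk1 : k - 1 + 1 = k := by omega
    have hge : 1 ≤ ‖1 - ζ ^ k‖ := by
      rw [← hk1]
      nlinarith [norm_nonneg (1 - ζ ^ (k - 1 + 1)), hnormprod, hsplit, hrest,
        Finset.prod_nonneg (fun j (_ : j ∈ (Finset.range (M-1)).erase (k-1)) => norm_nonneg (1 - ζ ^ (j+1)))]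
    exact le_antisymm (by rw [← hk1]; exact hle1 (k-1) hkmem) hge
  -- the residue class of ζ has order M
  have hζR : ζ ∈ ringOfIntegers K := mem_ringOfIntegers (le_of_eq hζnorm)
  set z : Q := Ideal.Quotient.mk (maxIdeal K) ⟨ζ, hζR⟩ with hz_def
  have hzM : z ^ M = 1 := by
    rw [hz_def, ← map_pow, ← map_one (Ideal.Quotient.mk (maxIdeal K))]
    congr 1
    ext
    push_cast
    exact hζ.pow_eq_one
  have hzk : ∀ k, 0 < k → k < M → z ^ k ≠ 1 := by
    intro k hk0 hkM hcon
    rw [hz_def, ← map_pow, ← map_one (Ideal.Quotient.mk (maxIdeal K)), Ideal.Quotient.eq] at hcon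
    have hlt : ‖(((⟨ζ, hζR⟩ : ringOfIntegers K) ^ k - 1 : ringOfIntegers K) : K)‖ < 1 := hcon
    have hcoe : (((⟨ζ, hζR⟩ : ringOfIntegers K) ^ k - 1 : ringOfIntegers K) : K) = ζ ^ k - 1 := by
      push_cast; ring
    rw [hcoe, norm_sub_rev, hfactor k hk0 hkM] at hlt
    linarith
  have hfin : IsOfFinOrder z := isOfFinOrder_iff_pow_eq_one.mpr ⟨M, by omega, hzM⟩
  have hord : orderOf z = M := by
    have hdvd : orderOf z ∣ M := orderOf_dvd_of_pow_eq_one hzM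
    have hpos : 0 < orderOf z := hfin.orderOf_pos
    rcases lt_or_eq_of_le (Nat.le_of_dvd (by omega) hdvd) with h | h
    · exact absurd (pow_orderOf_eq_one z) (hzk _ hpos h)
    · exact h
  -- conclude M ∣ q - 1
  letI : Field Q := hfield.toField
  letI : Fintype Q := Fintype.ofFinite Q
  classical
  obtain ⟨u, hu⟩ := hfin.isUnit
  have hordu : orderOf u = M := by
    rw [← hord, ← hu, orderOf_units]
  have hMdvd : M ∣ Nat.card Qˣ := by
    rw [← hordu]
    exact orderOf_dvd_natCard u
  refine ⟨hq2, hdvd_pq, ?_⟩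
  rw [Nat.card_units] at hMdvd
  rw [hq]
  exact hMdvd

end Residue

/-- if `q` is the cardinality of the residue field of `K`, `f` is an `M`-power
series function and `0 < l ≤ pM`, then there is a power series `P`, convergent on a closed
disc of radius `r > |p|`, with `f (l q^N) = P (l q^N)` for all sufficiently large `N`; in
particular, `lim_{N → ∞} f (l q^N)` exists and equals `P 0`. -/
theorem tendsto_along_q_powers (p M : ℕ) [Fact p.Prime] (hM : 1 ≤ M) (hpM : ¬ p ∣ M)
    [NormedField K] [CompleteSpace K] [IsUltrametricDist K] [Algebra ℚ_[p] K]
    (hiso : ∀ x : ℚ_[p], ‖algebraMap ℚ_[p] K x‖ = ‖x‖)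
    (ζ : K) (hζ : IsPrimitiveRoot ζ M) (hgen : Algebra.adjoin ℚ_[p] {ζ} = ⊤)
    (q : ℕ) (hq : q = Nat.card ((ringOfIntegers K) ⧸ (maxIdeal K)))
    (n₀ : ℕ) (f : ℕ → K) (hf : IsMPSF p M n₀ f)
    (l : ℕ) (hl0 : 0 < l) (hl : l ≤ p * M) :
    ∃ (r : ℝ) (P : ℕ → K), (p : ℝ)⁻¹ < r ∧ PSConvOn P r ∧
      (∃ N₀ : ℕ, ∀ N : ℕ, N₀ ≤ N → f (l * q ^ N) = evalPS P ((l : K) * (q : K) ^ N)) ∧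
      Filter.Tendsto (fun N : ℕ => f (l * q ^ N)) Filter.atTop (nhds (evalPS P 0)) := by
  obtain ⟨hq2, hpq, hMq⟩ := residue_facts p M hM hpM hiso ζ hζ hgen q hq
  have hp := (Fact.out : p.Prime)
  have hpM0 : 0 < p * M := by
    have := hp.two_le
    positivity
  have hnormp : ‖(p : K)‖ = (p : ℝ)⁻¹ := by
    rw [show ((p : ℕ) : K) = algebraMap ℚ_[p] K ((p : ℕ) : ℚ_[p]) by rw [map_natCast]]
    rw [hiso]
    exact Padic.norm_p
  have hppos : (0:ℝ) < (p:ℝ)⁻¹ := by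
    have := hp.two_le
    positivity
  have hpinvle1 : (p:ℝ)⁻¹ ≤ 1 := by
    rw [inv_le_one_iff₀]
    right
    exact_mod_cast hp.one_le
  -- choose the congruence class i
  set i : ℕ := (l * q - 1) % (p * M) + 1 with hi_def
  have hlq1 : 1 ≤ l * q := by
    have : 1 * 1 ≤ l * q := Nat.mul_le_mul hl0 (by omega)
    omega
  have hi1 : 0 < i := Nat.succ_pos _
  have hi2 : i ≤ p * M := Nat.succ_le_of_lt (Nat.mod_lt _ hpM0)
  obtain ⟨d, hd⟩ : ∃ d, l * q = p * M * d + i := by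
    refine ⟨(l * q - 1) / (p * M), ?_⟩
    have hmod := Nat.div_add_mod (l * q - 1) (p * M)
    omega
  have hpi : p ∣ i := by
    have h1 : p ∣ l * q := Dvd.dvd.mul_left hpq l
    have h2 : p ∣ p * M * d := ⟨M * d, by ring⟩
    have h3 : i = l * q - p * M * d := by omega
    rw [h3]
    exact Nat.dvd_sub h1 h2
  obtain ⟨r, c, hrp, hconv, heval⟩ := hf i hi1 hi2
  have hr0 : 0 < r := lt_trans hppos hrp
  -- norm bounds
  have hnat_norm_le : ∀ (n : ℕ), p ∣ n → ‖(n : K)‖ ≤ (p:ℝ)⁻¹ := by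
    intro n hn
    obtain ⟨t, rfl⟩ := hn
    push_cast
    rw [norm_mul, hnormp]
    calc (p:ℝ)⁻¹ * ‖(t : K)‖ ≤ (p:ℝ)⁻¹ * 1 :=
          mul_le_mul_of_nonneg_left (IsUltrametricDist.norm_natCast_le_one K t) hppos.le
      _ = (p:ℝ)⁻¹ := mul_one _
  have hi_norm : ‖((i : ℕ) : K)‖ ≤ (p:ℝ)⁻¹ := hnat_norm_le i hpi
  have hq_norm : ‖((q : ℕ) : K)‖ ≤ (p:ℝ)⁻¹ := hnat_norm_le q hpq
  obtain ⟨P, hPconv, hPval⟩ := recenterPS hr0 hppos.le hrp.le hconv ((i : ℕ) : K) hi_norm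
  -- the evaluation points
  have hxnorm : ∀ N : ℕ, 1 ≤ N → ‖(l : K) * (q : K) ^ N‖ ≤ (p:ℝ)⁻¹ := by
    intro N hN
    rw [norm_mul, norm_pow]
    calc ‖(l : K)‖ * ‖(q : K)‖ ^ N ≤ 1 * ((p:ℝ)⁻¹) ^ N := by
          apply mul_le_mul (IsUltrametricDist.norm_natCast_le_one K l)
            (pow_le_pow_left₀ (norm_nonneg _) hq_norm N)
            (pow_nonneg (norm_nonneg _) N) zero_le_one
      _ = ((p:ℝ)⁻¹) ^ N := one_mul _
      _ ≤ (p:ℝ)⁻¹ := by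
          apply pow_le_of_le_one hppos.le hpinvle1 (by omega)
  have hkey : ∀ N : ℕ, max n₀ 1 ≤ N → f (l * q ^ N) = evalPS P ((l : K) * (q : K) ^ N) := by
    intro N hN
    have hN1 : 1 ≤ N := le_trans (le_max_right n₀ 1) hN
    have hNn₀ : n₀ ≤ N := le_trans (le_max_left n₀ 1) hN
    have ha_n₀ : n₀ ≤ l * q ^ N := by
      have h1 : N < 2 ^ N := Nat.lt_two_pow_self
      have h2 : 2 ^ N ≤ q ^ N := Nat.pow_le_pow_left hq2 N
      have h3 : q ^ N ≤ l * q ^ N := Nat.le_mul_of_pos_left _ hl0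
      omega
    have hdvdZ : ((p : ℤ) * M) ∣ ((l * q ^ N : ℕ) : ℤ) - (i : ℤ) := by
      obtain ⟨N', rfl⟩ : ∃ N', N = N' + 1 := ⟨N - 1, by omega⟩
      have hM1 : (M : ℤ) ∣ (q : ℤ) ^ N' - 1 := by
        have h4 : (q : ℤ) - 1 ∣ (q : ℤ) ^ N' - 1 := by
          have := sub_dvd_pow_sub_pow (q : ℤ) 1 N'
          simpa using this
        have h5 : (M : ℤ) ∣ (q : ℤ) - 1 := by
          have : ((q - 1 : ℕ) : ℤ) = (q : ℤ) - 1 := by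
            push_cast [Nat.cast_sub (by omega : 1 ≤ q)]
            ring
          rw [← this]
          exact_mod_cast hMq
        exact h5.trans h4
      have hp1 : (p : ℤ) ∣ (q : ℤ) := by exact_mod_cast hpq
      have h6 : ((p : ℤ) * M) ∣ ((q : ℤ) * ((q : ℤ) ^ N' - 1)) := mul_dvd_mul hp1 hM1
      obtain ⟨e, he⟩ := h6
      refine ⟨(l : ℤ) * e + d, ?_⟩
      have hdZ : (l : ℤ) * q = (p : ℤ) * M * d + i := by exact_mod_cast hd
      push_cast
      calc (l : ℤ) * (q : ℤ) ^ (N' + 1) - i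
          = (l : ℤ) * ((q : ℤ) * ((q : ℤ) ^ N' - 1)) + ((l : ℤ) * q - i) := by ring
        _ = (l : ℤ) * ((p : ℤ) * M * e) + ((p : ℤ) * M * d + i - i) := by rw [← he, hdZ]
        _ = (p : ℤ) * M * ((l : ℤ) * e + d) := by ring
    have hfa := heval (l * q ^ N) ha_n₀ hdvdZ
    have hcast : ((l * q ^ N : ℕ) : K) = (l : K) * (q : K) ^ N := by push_cast; ring
    rw [hfa, hcast, hPval ((l : K) * (q : K) ^ N) (hxnorm N hN1)]
  refine ⟨r, P, hrp, hPconv, ⟨max n₀ 1, hkey⟩, ?_⟩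
  have heq : (fun N : ℕ => evalPS P ((l : K) * (q : K) ^ N)) =ᶠ[atTop]
      (fun N : ℕ => f (l * q ^ N)) := by
    rw [EventuallyEq, eventually_atTop]
    exact ⟨max n₀ 1, fun N hN => (hkey N hN).symm⟩
  apply Tendsto.congr' heq
  apply evalPS_tendsto hr0 hPconv
  · -- norms tend to zero
    have hbound : ∀ N : ℕ, ‖(l : K) * (q : K) ^ N‖ ≤ ((p:ℝ)⁻¹) ^ N := by
      intro N
      rw [norm_mul, norm_pow]
      calc ‖(l : K)‖ * ‖(q : K)‖ ^ N ≤ 1 * ((p:ℝ)⁻¹) ^ N := by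
            apply mul_le_mul (IsUltrametricDist.norm_natCast_le_one K l)
              (pow_le_pow_left₀ (norm_nonneg _) hq_norm N)
              (pow_nonneg (norm_nonneg _) N) zero_le_one
        _ = ((p:ℝ)⁻¹) ^ N := one_mul _
    apply squeeze_zero (fun N => norm_nonneg _) hbound
    apply tendsto_pow_atTop_nhds_zero_of_lt_one hppos.le
    rw [inv_lt_one_iff₀]
    right
    exact_mod_cast hp.one_lt
  · rw [eventually_atTop]
    exact ⟨1, fun N hN => le_trans (hxnorm N hN) hrp.le⟩

end
end
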